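/- arXiv:1612.09385 — 5 statements merged into one kernel-verified Lean document; each statement's English description precedes it below -/
import Mathlib

section
/- For real numbers α > 0 and 0 ≤ β < 1, setting p = 1/(1-β), the series S(3,α,β) = ∑_{k=0}^∞ (α + βk)^{k+2}/k! · e^{-(α+βk)} equals α²p³ + 3αβ²p⁴ + β³(1+2β)p⁵. -/
open Real Finset

namespace Jain
set_option maxHeartbeats 1000000

/-- alternating binomial sums kill polynomials of low degree: monomial case -/
lemma stepD : ∀ (t n : ℕ), t < n →
    ∑ i ∈ range (n+1), (-1:ℝ)^i * (n.choose i : ℝ) * (i:ℝ)^t = 0 := by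
  intro t
  induction t using Nat.strong_induction_on with
  | _ t ih =>
    intro n hn
    match t with
    | 0 =>
      have h0 : n ≠ 0 := by omega
      have := Int.alternating_sum_range_choose_of_ne h0
      have : ((∑ i ∈ range (n+1), (-1:ℤ)^i * n.choose i : ℤ) : ℝ) = 0 := by
        rw [this]; norm_num
      push_cast at this
      simpa using this
    | (t+1) =>
      match n, hn with
      | (s+1), hn =>
        rw [Finset.sum_range_succ']
        have hterm : ∀ j ∈ range (s+1),
            (-1:ℝ)^(j+1) * ((s+1).choose (j+1) : ℝ) * ((j:ℝ)+1)^(t+1)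
            = -((s:ℝ)+1) * ((-1:ℝ)^j * ((s).choose j : ℝ) * ((j:ℝ)+1)^t) := by
          intro j _
          have hc : ((s+1).choose (j+1) * (j+1) : ℕ) = (s+1) * s.choose j := by
            rw [← Nat.add_one_mul_choose_eq]
          have hc' : ((s+1).choose (j+1) : ℝ) * ((j:ℝ)+1) = ((s:ℝ)+1) * (s.choose j : ℝ) := by
            exact_mod_cast congrArg (Nat.cast : ℕ → ℝ) hc
          linear_combination ((-1:ℝ)^(j+1) * ((j:ℝ)+1)^t) * hc'
        push_cast
        rw [Finset.sum_congr rfl hterm]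
        rw [← Finset.mul_sum]
        have hexp : ∀ j ∈ range (s+1),
            (-1:ℝ)^j * ((s).choose j : ℝ) * ((j:ℝ)+1)^t
            = ∑ u ∈ range (t+1), (t.choose u : ℝ) * (j:ℝ)^u *
                ((-1:ℝ)^j * ((s).choose j : ℝ)) := by
          intro j _
          rw [add_pow]
          rw [Finset.mul_sum]
          refine Finset.sum_congr rfl fun u _ => by ring
        rw [Finset.sum_congr rfl hexp, Finset.sum_comm]
        have hz : ∀ u ∈ range (t+1),
            ∑ j ∈ range (s+1), (t.choose u : ℝ) * (j:ℝ)^u *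
              ((-1:ℝ)^j * ((s).choose j : ℝ)) = 0 := by
          intro u hu
          simp only [Finset.mem_range] at hu
          have hs : u < s := by omega
          have := ih u (by omega) s hs
          have : ∑ j ∈ range (s+1), (t.choose u : ℝ) *
              ((-1:ℝ)^j * ((s).choose j : ℝ) * (j:ℝ)^u) = 0 := by
            rw [← Finset.mul_sum, this, mul_zero]
          rw [← this]
          refine Finset.sum_congr rfl fun j _ => by ring
        rw [Finset.sum_congr rfl hz]
        simp

/-- alternating binomial sums kill polynomials of low degree -/
lemma stepC (x c : ℝ) (m n : ℕ) (h : m < n) :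
    ∑ i ∈ range (n+1), (-1:ℝ)^i * (n.choose i : ℝ) * (x + c*i)^m = 0 := by
  have hexp : ∀ i ∈ range (n+1),
      (-1:ℝ)^i * (n.choose i : ℝ) * (x + c*i)^m
      = ∑ u ∈ range (m+1), (m.choose u : ℝ) * c^(m-u) * x^u *
          ((-1:ℝ)^i * (n.choose i : ℝ) * (i:ℝ)^(m-u)) := by
    intro i _
    rw [add_pow, Finset.mul_sum]
    refine Finset.sum_congr rfl fun u _ => by rw [mul_pow]; ring
  rw [Finset.sum_congr rfl hexp, Finset.sum_comm]
  have hz : ∀ u ∈ range (m+1),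
      ∑ i ∈ range (n+1), (m.choose u : ℝ) * c^(m-u) * x^u *
        ((-1:ℝ)^i * (n.choose i : ℝ) * (i:ℝ)^(m-u)) = 0 := by
    intro u hu
    simp only [Finset.mem_range] at hu
    rw [← Finset.mul_sum, stepD (m-u) n (by omega), mul_zero]
  rw [Finset.sum_congr rfl hz]
  simp


/-- Abel-type terms -/
noncomputable def Afun (c x : ℝ) (i : ℕ) : ℝ := if i = 0 then 1 else x * (x + c*i)^(i-1)

lemma eq_of_hasDerivAt_eq {f g d : ℝ → ℝ}
    (hf : ∀ y, HasDerivAt f (d y) y) (hg : ∀ y, HasDerivAt g (d y) y)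
    (y₀ : ℝ) (h0 : f y₀ = g y₀) (y : ℝ) : f y = g y := by
  have h : ∀ y, HasDerivAt (fun y => f y - g y) 0 y := by
    intro y; have := (hf y).sub (hg y); rw [sub_self] at this; exact this
  have hd : Differentiable ℝ (fun y => f y - g y) := fun y => (h y).differentiableAt
  have hc := is_const_of_deriv_eq_zero hd (fun y => (h y).deriv) y y₀
  have : f y - g y = f y₀ - g y₀ := hc
  linarith

/-- choose identity, real cast -/
lemma choose_shift (n i : ℕ) (hi : i ≤ n) :
    ((n+1-i : ℕ) : ℝ) * ((n+1).choose i : ℝ) = ((n:ℝ)+1) * (n.choose i : ℝ) := by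
  have h := Nat.choose_mul_succ_eq n i
  -- n.choose i * (n + 1) = (n+1).choose i * (n + 1 - i)
  have h' : ((n.choose i * (n+1) : ℕ) : ℝ) = (((n+1).choose i * (n + 1 - i) : ℕ) : ℝ) := by
    exact_mod_cast congrArg (Nat.cast : ℕ → ℝ) h
  push_cast at h'
  rw [Nat.cast_sub (by omega)] at h'
  push_cast at h'
  have : ((n+1-i : ℕ) : ℝ) = (n:ℝ) + 1 - i := by
    rw [Nat.cast_sub (by omega)]; push_cast; ring
  rw [this]; linarith [h']

/-- the common shifted sum -/
lemma sum_shift (c x : ℝ) (m : ℕ)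
    (H1m : ∀ y : ℝ, ∑ i ∈ range (m+1), (m.choose i : ℝ) * Afun c x i *
        (y + c*((m-i : ℕ) : ℝ))^(m-i) = (x + y + c*m)^m) (y : ℝ) :
    ∑ i ∈ range (m+2), ((m+1).choose i : ℝ) * Afun c x i *
      (((m+1-i : ℕ) : ℝ) * (y + c*((m+1-i : ℕ) : ℝ))^(m-i))
      = ((m:ℝ)+1) * (x + (y+c) + c*m)^m := by
  rw [Finset.sum_range_succ]
  have hlast : ((m+1).choose (m+1) : ℝ) * Afun c x (m+1) *
      (((m+1-(m+1) : ℕ) : ℝ) * (y + c*((m+1-(m+1) : ℕ) : ℝ))^(m-(m+1))) = 0 := by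
    simp
  rw [hlast, add_zero]
  have hterm : ∀ i ∈ range (m+1),
      ((m+1).choose i : ℝ) * Afun c x i *
        (((m+1-i : ℕ) : ℝ) * (y + c*((m+1-i : ℕ) : ℝ))^(m-i))
      = ((m:ℝ)+1) * ((m.choose i : ℝ) * Afun c x i * ((y+c) + c*((m-i : ℕ) : ℝ))^(m-i)) := by
    intro i hi
    simp only [Finset.mem_range] at hi
    have hi' : i ≤ m := by omega
    have hcast : ((m+1-i : ℕ) : ℝ) = ((m-i : ℕ) : ℝ) + 1 := by
      rw [Nat.cast_sub (by omega), Nat.cast_sub (by omega)]; push_cast; ring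
    have hcs := choose_shift m i hi'
    rw [hcast]
    have harg : y + c * (((m-i : ℕ) : ℝ) + 1) = (y+c) + c*((m-i : ℕ) : ℝ) := by ring
    rw [harg]
    rw [hcast] at hcs
    linear_combination (Afun c x i * ((y+c) + c*((m-i : ℕ) : ℝ))^(m-i)) * hcs
  rw [Finset.sum_congr rfl hterm, ← Finset.mul_sum, H1m (y+c)]

/-- Hurwitz H1 identity -/
lemma H1 (c x : ℝ) : ∀ (n : ℕ) (y : ℝ),
    ∑ i ∈ range (n+1), (n.choose i : ℝ) * Afun c x i *
      (y + c*((n-i : ℕ) : ℝ))^(n-i) = (x + y + c*n)^n := by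
  intro n
  induction n with
  | zero => intro y; simp [Afun]
  | succ m IH =>
    intro y
    set F : ℝ → ℝ := fun y => ∑ i ∈ range (m+2), ((m+1).choose i : ℝ) * Afun c x i *
      (y + c*((m+1-i : ℕ) : ℝ))^(m+1-i) with hF
    set G : ℝ → ℝ := fun y => (x + y + c*((m:ℝ)+1))^(m+1) with hG
    have castm : (((m+1 : ℕ)) : ℝ) = (m:ℝ)+1 := by push_cast; ring
    have hd : ∀ y : ℝ, HasDerivAt F
        (∑ i ∈ range (m+2), ((m+1).choose i : ℝ) * Afun c x i *
          (((m+1-i : ℕ) : ℝ) * (y + c*((m+1-i : ℕ) : ℝ))^(m-i))) y := by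
      intro y
      apply HasDerivAt.fun_sum
      intro i hi
      have hpow : HasDerivAt (fun y : ℝ => (y + c*((m+1-i : ℕ) : ℝ))^(m+1-i))
          (((m+1-i : ℕ) : ℝ) * (y + c*((m+1-i : ℕ) : ℝ))^((m+1-i)-1)) y := by
        have h1 : HasDerivAt (fun y : ℝ => y + c*((m+1-i : ℕ) : ℝ)) 1 y :=
          (hasDerivAt_id y).add_const _
        have := h1.fun_pow (m+1-i)
        simpa using this
      have hexp : (m+1-i) - 1 = m - i := by omega
      rw [hexp] at hpow
      exact hpow.const_mul _
    have hdG : ∀ y : ℝ, HasDerivAt G (((m:ℝ)+1) * (x + y + c*((m:ℝ)+1))^m) y := by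
      intro y
      have h1 : HasDerivAt (fun y : ℝ => x + y + c*((m:ℝ)+1)) 1 y := by
        simpa using ((hasDerivAt_id y).const_add x).add_const (c*((m:ℝ)+1))
      have := h1.fun_pow (m+1)
      simpa using this
    have hsame : ∀ y : ℝ, HasDerivAt F (((m:ℝ)+1) * (x + y + c*((m:ℝ)+1))^m) y := by
      intro y
      have := hd y
      rw [sum_shift c x m IH y] at this
      have harg : x + (y+c) + c*(m:ℝ) = x + y + c*((m:ℝ)+1) := by ring
      rwa [harg] at this
    -- equality at y₀
    set y₀ : ℝ := -x - c*((m:ℝ)+1) with hy₀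
    have hzero : F y₀ = G y₀ := by
      have hGz : G y₀ = 0 := by
        simp only [hG, hy₀]
        have : x + (-x - c*((m:ℝ)+1)) + c*((m:ℝ)+1) = 0 := by ring
        rw [this]; simp
      rw [hGz]
      -- F y₀ = ∑ C(m+1,i) Afun i (-(x+c i))^(m+1-i)
      have hFval : F y₀ = ∑ i ∈ range (m+2), ((m+1).choose i : ℝ) * Afun c x i *
          (-(x + c*i))^(m+1-i) := by
        apply Finset.sum_congr rfl
        intro i hi
        simp only [Finset.mem_range] at hi
        have : y₀ + c*((m+1-i : ℕ) : ℝ) = -(x + c*i) := by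
          rw [Nat.cast_sub (by omega : i ≤ m+1)]
          simp only [hy₀]; push_cast; ring
        rw [this]
      rw [hFval]
      -- split off i = 0 and use stepC
      have hsplit := Finset.sum_range_succ' (fun i => ((m+1).choose i : ℝ) * Afun c x i *
          (-(x + c*i))^(m+1-i)) (m+1)
      rw [hsplit]
      have h0term : ((m+1).choose 0 : ℝ) * Afun c x 0 * (-(x + c*(0:ℕ)))^(m+1-0)
          = (-1)^(m+1) * x^(m+1) := by
        simp only [Nat.choose_zero_right, Nat.cast_one, Nat.cast_zero, mul_zero, add_zero,
          Nat.sub_zero, Afun, if_pos, one_mul]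
        rw [neg_pow]
      have hjterm : ∀ j ∈ range (m+1),
          ((m+1).choose (j+1) : ℝ) * Afun c x (j+1) * (-(x + c*((j+1 : ℕ)  : ℝ)))^(m+1-(j+1))
          = ((-1)^(m+1) * x) * ((-1:ℝ)^(j+1) * ((m+1).choose (j+1) : ℝ) * (x + c*((j+1:ℕ):ℝ))^m) := by
        intro j hj
        simp only [Finset.mem_range] at hj
        have hA : Afun c x (j+1) = x * (x + c*((j+1:ℕ):ℝ))^j := by
          simp [Afun]
        rw [hA, neg_pow]
        have hexp2 : m+1-(j+1) = m - j := by omega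
        rw [hexp2]
        have hpows : (x + c*((j+1:ℕ):ℝ))^j * (x + c*((j+1:ℕ):ℝ))^(m-j)
            = (x + c*((j+1:ℕ):ℝ))^m := by
          rw [← pow_add]; congr 1; omega
        have hsign : (-1:ℝ)^(m-j) = (-1)^(m+1) * (-1:ℝ)^(j+1) := by
          have h3 : ((-1:ℝ))^(m+j) = (-1)^(m-j) := by
            have hmj : m + j = (m-j) + 2*j := by omega
            rw [hmj, pow_add, pow_mul]; simp
          rw [← h3, pow_add, pow_add]; ring
        calc ((m+1).choose (j+1) : ℝ) * (x * (x + c*((j+1:ℕ):ℝ))^j) *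
              ((-1)^(m-j) * (x + c*((j+1:ℕ):ℝ))^(m-j))
            = (-1)^(m-j) * ((m+1).choose (j+1) : ℝ) * x *
              ((x + c*((j+1:ℕ):ℝ))^j * (x + c*((j+1:ℕ):ℝ))^(m-j)) := by ring
          _ = (-1)^(m-j) * ((m+1).choose (j+1) : ℝ) * x * (x + c*((j+1:ℕ):ℝ))^m := by
              rw [hpows]
          _ = _ := by rw [hsign]; ring
      rw [h0term, Finset.sum_congr rfl hjterm, ← Finset.mul_sum]
      -- use stepC with n := m+1, m := m
      have hc := stepC x c m (m+1) (by omega)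
      -- ∑_{i∈range(m+2)} (-1)^i C(m+1,i) (x+ci)^m = 0
      have hsplit2 := Finset.sum_range_succ' (fun i => (-1:ℝ)^i * ((m+1).choose i : ℝ) *
          (x + c*i)^m) (m+1)
      rw [hsplit2] at hc
      have h00 : (-1:ℝ)^0 * ((m+1).choose 0 : ℝ) * (x + c*((0:ℕ):ℝ))^m = x^m := by
        simp
      rw [h00] at hc
      -- hc : ∑_j (-1)^(j+1) C(m+1,j+1) (x+c(j+1))^m + x^m = 0
      have : ∑ j ∈ range (m+1), (-1:ℝ)^(j+1) * ((m+1).choose (j+1) : ℝ) *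
          (x + c*((j+1:ℕ):ℝ))^m = -x^m := by
        push_cast at hc ⊢
        linarith
      rw [this]
      ring
    -- conclude
    have := eq_of_hasDerivAt_eq hsame hdG y₀ hzero y
    simpa only [hF, hG, castm] using this

/-- Abel / Hurwitz binomial convolution identity -/
lemma abel_identity (c x y : ℝ) (n : ℕ) :
    ∑ i ∈ range (n+1), (n.choose i : ℝ) * Afun c x i * Afun c y (n-i)
      = Afun c (x+y) n := by
  match n with
  | 0 => simp [Afun]
  | (m+1) =>
    have hH := H1 c x (m+1) y
    -- decompose (y + c*(m+1-i))^(m+1-i) = Afun c y (m+1-i) + c*(m+1-i)*(y+c(m+1-i))^(m-i)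
    have hdec : ∀ i ∈ range (m+2),
        ((m+1).choose i : ℝ) * Afun c x i * (y + c*((m+1-i : ℕ) : ℝ))^(m+1-i)
        = ((m+1).choose i : ℝ) * Afun c x i * Afun c y (m+1-i)
          + c * (((m+1).choose i : ℝ) * Afun c x i *
              (((m+1-i : ℕ) : ℝ) * (y + c*((m+1-i : ℕ) : ℝ))^(m-i))) := by
      intro i hi
      simp only [Finset.mem_range] at hi
      by_cases him : i = m+1
      · subst him
        simp [Afun]
      · have hj : 1 ≤ m+1-i := by omega
        have hA : Afun c y (m+1-i) = y * (y + c*((m+1-i : ℕ):ℝ))^((m+1-i)-1) := by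
          simp only [Afun]
          rw [if_neg (by omega)]
        have hexp : (m+1-i) - 1 = m - i := by omega
        rw [hA, hexp]
        have hpow : (y + c*((m+1-i : ℕ) : ℝ))^(m+1-i)
            = (y + c*((m+1-i : ℕ) : ℝ))^(m-i) * (y + c*((m+1-i : ℕ) : ℝ)) := by
          rw [← pow_succ]; congr 1; omega
        rw [hpow]; ring
    rw [Finset.sum_congr rfl hdec, Finset.sum_add_distrib, ← Finset.mul_sum] at hH
    rw [sum_shift c x m (H1 c x m) y] at hH
    -- hH : abelLHS + c * ((m+1) * (x + (y+c) + c m)^m) = (x+y+c(m+1))^(m+1)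
    have hAx : Afun c (x+y) (m+1) = (x+y) * (x+y+c*(((m+1:ℕ)):ℝ))^m := by
      simp only [Afun]
      rw [if_neg (by omega)]
      simp
    rw [hAx]
    have harg : x + (y+c) + c*(m:ℝ) = x + y + c*(((m+1:ℕ)):ℝ) := by push_cast; ring
    rw [harg] at hH
    have hpow : (x + y + c*(((m+1:ℕ)):ℝ))^(m+1)
        = (x + y + c*(((m+1:ℕ)):ℝ))^m * (x + y + c*(((m+1:ℕ)):ℝ)) := by
      rw [← pow_succ]
    rw [hpow] at hH
    have hcast : ((m+1 : ℕ) : ℝ) = (m:ℝ)+1 := by push_cast; ring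
    rw [hcast] at hH ⊢
    linear_combination hH


lemma exp_tsum (x : ℝ) : Real.exp x = ∑' n : ℕ, x^n / n.factorial := by
  rw [Real.exp_eq_exp_ℝ, NormedSpace.exp_eq_tsum_div]

lemma pow_div_factorial_le_exp {x : ℝ} (hx : 0 ≤ x) (k : ℕ) :
    x^k / k.factorial ≤ Real.exp x := by
  rw [exp_tsum]
  refine Summable.le_tsum (Real.summable_pow_div_factorial x) k (fun i _ => ?_)
  positivity

lemma pow_le_fact_exp (k : ℕ) : (k:ℝ)^k ≤ k.factorial * Real.exp k := by
  have h := pow_div_factorial_le_exp (x := (k:ℝ)) (by positivity) k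
  have hf : (0:ℝ) < k.factorial := by exact_mod_cast k.factorial_pos
  rw [div_le_iff₀ hf] at h
  linarith [h]

lemma nat_fact_le_pow (j : ℕ) : ∀ d : ℕ, (j+d).factorial ≤ j.factorial * (j+d)^d := by
  intro d
  induction d with
  | zero => simp
  | succ d ih =>
    have : (j + (d+1)).factorial = (j+d+1) * (j+d).factorial := by
      rw [show j + (d+1) = (j+d)+1 by omega, Nat.factorial_succ]
    rw [this]
    calc (j+d+1) * (j+d).factorial ≤ (j+d+1) * (j.factorial * (j+d)^d) :=
          Nat.mul_le_mul_left _ ih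
      _ ≤ j.factorial * (j+(d+1))^(d+1) := by
          rw [show j + (d+1) = (j+d)+1 by omega, pow_succ]
          have h1 : (j+d)^d ≤ (j+d+1)^d := Nat.pow_le_pow_left (by omega) d
          calc (j+d+1) * (j.factorial * (j+d)^d)
              ≤ (j+d+1) * (j.factorial * (j+d+1)^d) := by
                exact Nat.mul_le_mul_left _ (Nat.mul_le_mul_left _ h1)
            _ = j.factorial * ((j+d+1)^d * (j+d+1)) := by ring

lemma exp_fact_le (k : ℕ) (hk : 1 ≤ k) :
    (k.factorial : ℝ) * Real.exp k ≤ (2*(k:ℝ)+1) * (k:ℝ)^k := by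
  have hf : (0:ℝ) < k.factorial := by exact_mod_cast k.factorial_pos
  have hk0 : (0:ℝ) < k := by exact_mod_cast hk
  -- main: exp k ≤ (2k+1) * k^k / k!
  have hmain : Real.exp k ≤ (2*(k:ℝ)+1) * ((k:ℝ)^k / k.factorial) := by
    have hsum : Summable (fun j : ℕ => (k:ℝ)^j / j.factorial) :=
      Real.summable_pow_div_factorial _
    have hsplit := Summable.sum_add_tsum_nat_add k hsum
    rw [exp_tsum, ← hsplit]
    -- head part
    have hhead : ∑ j ∈ range k, (k:ℝ)^j / j.factorial ≤ k * ((k:ℝ)^k / k.factorial) := by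
      have hterm : ∀ j ∈ range k, (k:ℝ)^j / j.factorial ≤ (k:ℝ)^k / k.factorial := by
        intro j hj
        simp only [Finset.mem_range] at hj
        have hjf : (0:ℝ) < j.factorial := by exact_mod_cast j.factorial_pos
        rw [div_le_div_iff₀ hjf hf]
        have hnat : k.factorial ≤ j.factorial * k^(k-j) := by
          have := nat_fact_le_pow j (k-j)
          rwa [show j + (k-j) = k by omega] at this
        have hnat' : ((k.factorial : ℕ) : ℝ) ≤ (j.factorial : ℝ) * (k:ℝ)^(k-j) := by
          exact_mod_cast hnat
        calc (k:ℝ)^j * k.factorial ≤ (k:ℝ)^j * (j.factorial * (k:ℝ)^(k-j)) := by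
              apply mul_le_mul_of_nonneg_left hnat' (by positivity)
          _ = (k:ℝ)^k * j.factorial := by
              rw [show (k:ℝ)^j * ((j.factorial:ℝ) * (k:ℝ)^(k-j))
                  = ((k:ℝ)^j * (k:ℝ)^(k-j)) * j.factorial by ring, ← pow_add,
                show j + (k-j) = k by omega]
      calc ∑ j ∈ range k, (k:ℝ)^j / j.factorial
          ≤ ∑ _j ∈ range k, (k:ℝ)^k / k.factorial := Finset.sum_le_sum hterm
        _ = k * ((k:ℝ)^k / k.factorial) := by
            rw [Finset.sum_const, Finset.card_range]; simp
    -- tail part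
    have htail : ∑' d : ℕ, (k:ℝ)^(d+k) / (d+k).factorial
        ≤ ((k:ℝ)+1) * ((k:ℝ)^k / k.factorial) := by
      have hterm : ∀ d : ℕ, (k:ℝ)^(d+k) / (d+k).factorial
          ≤ ((k:ℝ)^k / k.factorial) * ((k:ℝ)/((k:ℝ)+1))^d := by
        intro d
        have hdf : (0:ℝ) < (d+k).factorial := by exact_mod_cast (d+k).factorial_pos
        have hnat : k.factorial * (k+1)^d ≤ (d+k).factorial := by
          have := @Nat.factorial_mul_pow_le_factorial k d
          rwa [show k + d = d + k by omega] at this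
        have hnat' : (k.factorial : ℝ) * ((k:ℝ)+1)^d ≤ ((d+k).factorial : ℝ) := by
          exact_mod_cast hnat
        have heq : ((k:ℝ)^k / k.factorial) * ((k:ℝ)/((k:ℝ)+1))^d
            = ((k:ℝ)^k * (k:ℝ)^d) / ((k.factorial:ℝ) * ((k:ℝ)+1)^d) := by
          rw [div_pow]; field_simp
        rw [heq, div_le_div_iff₀ hdf (by positivity)]
        calc (k:ℝ)^(d+k) * ((k.factorial:ℝ) * ((k:ℝ)+1)^d)
            ≤ (k:ℝ)^(d+k) * (d+k).factorial := by
              apply mul_le_mul_of_nonneg_left hnat' (by positivity)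
          _ = (k:ℝ)^k * (k:ℝ)^d * (d+k).factorial := by
              rw [← pow_add, show d + k = k + d by omega]
      have hgeom : Summable (fun d : ℕ => ((k:ℝ)^k / k.factorial) * ((k:ℝ)/((k:ℝ)+1))^d) := by
        apply Summable.mul_left
        apply summable_geometric_of_lt_one (by positivity)
        rw [div_lt_one (by positivity)]; linarith
      have hsum2 : Summable (fun d : ℕ => (k:ℝ)^(d+k) / (d+k).factorial) :=
        (summable_nat_add_iff k).mpr hsum
      calc ∑' d : ℕ, (k:ℝ)^(d+k) / (d+k).factorial
          ≤ ∑' d : ℕ, ((k:ℝ)^k / k.factorial) * ((k:ℝ)/((k:ℝ)+1))^d :=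
            Summable.tsum_le_tsum hterm hsum2 hgeom
        _ = ((k:ℝ)^k / k.factorial) * ∑' d : ℕ, ((k:ℝ)/((k:ℝ)+1))^d := tsum_mul_left
        _ = ((k:ℝ)+1) * ((k:ℝ)^k / k.factorial) := by
            rw [tsum_geometric_of_lt_one (by positivity) (by rw [div_lt_one (by positivity)]; linarith)]
            rw [show 1 - (k:ℝ)/((k:ℝ)+1) = 1/((k:ℝ)+1) by field_simp; ring]
            rw [one_div, inv_inv]; ring
    linarith
  calc (k.factorial : ℝ) * Real.exp k ≤ (k.factorial:ℝ) * ((2*(k:ℝ)+1) * ((k:ℝ)^k / k.factorial)) :=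
        mul_le_mul_of_nonneg_left hmain (le_of_lt hf)
    _ = (2*(k:ℝ)+1) * (k:ℝ)^k := by field_simp

lemma phi_nonpos {u : ℝ} (hu : 0 < u) : Real.log u + 1 - u ≤ 0 := by
  have := Real.log_le_sub_one_of_pos hu
  linarith

lemma phi_mono {u v : ℝ} (hu : 0 < u) (huv : u ≤ v) (hv : v ≤ 1) :
    Real.log u + 1 - u ≤ Real.log v + 1 - v := by
  have hv0 : 0 < v := lt_of_lt_of_le hu huv
  have h1 := Real.log_le_sub_one_of_pos (div_pos hu hv0)
  rw [Real.log_div (ne_of_gt hu) (ne_of_gt hv0)] at h1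
  have h2 : u/v - 1 ≤ u - v := by
    rw [div_sub_one (ne_of_gt hv0), div_le_iff₀ hv0]
    nlinarith
  linarith

lemma phi_lower {u : ℝ} (hu : 0 < u) (hu1 : u ≤ 1) :
    -(1-u)^2/u ≤ Real.log u + 1 - u := by
  have h1 := Real.log_le_sub_one_of_pos (show (0:ℝ) < u⁻¹ by positivity)
  rw [Real.log_inv] at h1
  have h2 : -(1-u)^2/u = 2 - u - u⁻¹ := by field_simp; ring
  rw [h2]
  have : u⁻¹ - 1 ≥ -Real.log u := by linarith
  linarith

lemma pow_exp_eq {x : ℝ} (hx : 0 < x) {k : ℕ} (hk : 1 ≤ k) :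
    x^k * Real.exp (-x)
      = (k:ℝ)^k * Real.exp (-(k:ℝ)) * Real.exp (k * (Real.log (x/(k:ℝ)) + 1 - x/(k:ℝ))) := by
  have hk0 : (0:ℝ) < k := by exact_mod_cast hk
  have hxk : 0 < x/(k:ℝ) := div_pos hx hk0
  have h2 : (k:ℝ) * (x/(k:ℝ)) = x := by field_simp
  have h1 : (k:ℝ) * (Real.log (x/(k:ℝ)) + 1 - x/(k:ℝ))
      = (k:ℝ) * Real.log (x/(k:ℝ)) + (k:ℝ) - x := by
    rw [mul_sub, mul_add, mul_one, h2]
  have hlog : Real.exp ((k:ℝ) * Real.log (x/(k:ℝ))) = (x/(k:ℝ))^k := by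
    rw [Real.exp_nat_mul, Real.exp_log hxk]
  symm
  calc (k:ℝ)^k * Real.exp (-(k:ℝ)) *
        Real.exp ((k:ℝ) * (Real.log (x/(k:ℝ)) + 1 - x/(k:ℝ)))
      = (k:ℝ)^k * Real.exp ((k:ℝ) * Real.log (x/(k:ℝ))) * Real.exp (-x) := by
        rw [h1, mul_assoc, ← Real.exp_add,
          show -(k:ℝ) + ((k:ℝ) * Real.log (x/(k:ℝ)) + (k:ℝ) - x)
            = (k:ℝ) * Real.log (x/(k:ℝ)) + (-x) by ring,
          Real.exp_add, ← mul_assoc]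
    _ = (k:ℝ)^k * (x/(k:ℝ))^k * Real.exp (-x) := by rw [hlog]
    _ = x^k * Real.exp (-x) := by
        rw [div_pow]
        field_simp



/-! ### definitions -/

noncomputable def jt (β : ℝ) (m : ℕ) (α : ℝ) (k : ℕ) : ℝ :=
  (α + β*k)^(k+m) * Real.exp (-(α+β*k)) / (Nat.factorial k)

noncomputable def at' (β α : ℝ) (k : ℕ) : ℝ :=
  Afun β α k * Real.exp (-(α+β*k)) / (Nat.factorial k)

noncomputable def T (β : ℝ) (m : ℕ) (α : ℝ) : ℝ := ∑' k, jt β m α k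
noncomputable def g (β α : ℝ) : ℝ := ∑' k, at' β α k

noncomputable def q (β : ℝ) : ℝ := Real.exp (Real.log ((1+β)/2) + 1 - (1+β)/2)

lemma q_pos (β : ℝ) : 0 < q β := Real.exp_pos _

lemma q_lt_one {β : ℝ} (hβ0 : 0 ≤ β) (hβ1 : β < 1) : q β < 1 := by
  have h : (0:ℝ) < (1+β)/2 := by linarith
  have hne : (1+β)/2 ≠ 1 := by intro h'; rw [div_eq_one_iff_eq (by norm_num : (2:ℝ) ≠ 0)] at h'; linarith
  have := Real.log_lt_sub_one_of_pos h hne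
  have hlt : Real.log ((1+β)/2) + 1 - (1+β)/2 < 0 := by linarith
  calc q β < Real.exp 0 := Real.exp_lt_exp.mpr hlt
    _ = 1 := Real.exp_zero

lemma x_pos {β α : ℝ} (hβ0 : 0 ≤ β) (hα : 0 < α) (k : ℕ) : 0 < α + β*k :=
  add_pos_of_pos_of_nonneg hα (mul_nonneg hβ0 (Nat.cast_nonneg k))

lemma jt_nonneg {β α : ℝ} (hβ0 : 0 ≤ β) (hα : 0 < α) (m : ℕ) (k : ℕ) : 0 ≤ jt β m α k := by
  have := x_pos hβ0 hα k
  unfold jt; positivity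

lemma at'_nonneg {β α : ℝ} (hβ0 : 0 ≤ β) (hα : 0 < α) (k : ℕ) : 0 ≤ at' β α k := by
  have hx := x_pos hβ0 hα k
  unfold at' Afun
  by_cases hk : k = 0 <;> simp [hk] <;> positivity

lemma jt_le_crude {β α : ℝ} (hβ0 : 0 ≤ β) (hα : 0 < α) (m : ℕ) (k : ℕ) :
    jt β m α k ≤ (α+β*k)^m := by
  have hx := x_pos hβ0 hα k
  have h1 : (α+β*k)^k * Real.exp (-(α+β*k)) / k.factorial ≤ 1 := by
    have h2 := pow_div_factorial_le_exp hx.le k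
    have h3 : (α+β*k)^k * Real.exp (-(α+β*k)) / k.factorial
        = ((α+β*k)^k / k.factorial) * Real.exp (-(α+β*k)) := by ring
    rw [h3, Real.exp_neg]
    rw [mul_inv_le_iff₀ (Real.exp_pos _)]
    simpa using h2
  have heq : jt β m α k = ((α+β*k)^k * Real.exp (-(α+β*k)) / k.factorial) * (α+β*k)^m := by
    unfold jt; rw [pow_add]; ring
  rw [heq]
  calc ((α+β*k)^k * Real.exp (-(α+β*k)) / k.factorial) * (α+β*k)^m
      ≤ 1 * (α+β*k)^m := mul_le_mul_of_nonneg_right h1 (pow_nonneg hx.le m)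
    _ = (α+β*k)^m := one_mul _

lemma jt_le_geom {β α : ℝ} (hβ0 : 0 ≤ β) (hβ1 : β < 1) (hα : 0 < α) (m : ℕ) {k : ℕ}
    (hk1 : 1 ≤ k) (hk : 2*α ≤ (1-β)*k) :
    jt β m α k ≤ (α+β*k)^m * (q β)^k := by
  have hx := x_pos hβ0 hα k
  have hk0 : (0:ℝ) < k := by exact_mod_cast hk1
  have hu : 0 < (α+β*k)/k := div_pos hx hk0
  have hu2 : (α+β*k)/k ≤ (1+β)/2 := by
    rw [div_le_div_iff₀ hk0 (by norm_num : (0:ℝ) < 2)]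
    linarith
  have hu3 : (1+β)/2 ≤ 1 := by linarith
  have hphi := phi_mono hu hu2 hu3
  have hkey := pow_exp_eq hx hk1
  have hfac : (k:ℝ)^k * Real.exp (-(k:ℝ)) ≤ k.factorial := by
    rw [Real.exp_neg, mul_inv_le_iff₀ (Real.exp_pos _)]
    exact pow_le_fact_exp k
  have hexpphi : Real.exp ((k:ℝ) * (Real.log ((α+β*k)/(k:ℝ)) + 1 - (α+β*k)/(k:ℝ)))
      ≤ (q β)^k := by
    rw [show (q β)^k = Real.exp ((k:ℝ) * (Real.log ((1+β)/2) + 1 - (1+β)/2)) by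
      rw [Real.exp_nat_mul]; rfl]
    apply Real.exp_le_exp.mpr
    apply mul_le_mul_of_nonneg_left hphi hk0.le
  have hf : (0:ℝ) < k.factorial := by exact_mod_cast k.factorial_pos
  have heq : jt β m α k = ((α+β*k)^k * Real.exp (-(α+β*k)) / k.factorial) * (α+β*k)^m := by
    unfold jt; rw [pow_add]; ring
  rw [heq, hkey]
  rw [mul_comm ((α+β*k)^m) ((q β)^k)]
  apply mul_le_mul_of_nonneg_right _ (pow_nonneg hx.le m)
  rw [div_le_iff₀ hf]
  calc (k:ℝ)^k * Real.exp (-(k:ℝ)) *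
        Real.exp ((k:ℝ) * (Real.log ((α+β*k)/(k:ℝ)) + 1 - (α+β*k)/(k:ℝ)))
      ≤ (k.factorial : ℝ) * (q β)^k := by
        apply mul_le_mul hfac hexpphi (Real.exp_pos _).le hf.le
    _ = (q β)^k * k.factorial := by ring

lemma summable_poly_geom (c qq : ℝ) (hq0 : 0 ≤ qq) (hq1 : qq < 1) (m : ℕ) :
    Summable (fun k : ℕ => ((k:ℝ)+c)^m * qq^k) := by
  have hs : Summable (fun k : ℕ => ∑ j ∈ range (m+1),
      ((m.choose j : ℝ) * c^(m-j)) * ((k:ℝ)^j * qq^k)) := by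
    apply summable_sum
    intro j _
    apply Summable.mul_left
    apply summable_pow_mul_geometric_of_norm_lt_one j
    rwa [Real.norm_eq_abs, abs_of_nonneg hq0]
  apply hs.congr
  intro k
  rw [add_pow, Finset.sum_mul]
  refine Finset.sum_congr rfl fun j _ => by ring

lemma summable_jt {β α : ℝ} (hβ0 : 0 ≤ β) (hβ1 : β < 1) (hα : 0 < α) (m : ℕ) :
    Summable (jt β m α) := by
  set K := max 1 (⌈2*α/(1-β)⌉₊) with hK
  have hK1 : 1 ≤ K := le_max_left _ _
  have h1β : (0:ℝ) < 1 - β := by linarith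
  have hKα : 2*α ≤ (1-β)*K := by
    have h2 : 2*α/(1-β) ≤ (⌈2*α/(1-β)⌉₊ : ℝ) := Nat.le_ceil _
    have h3 : (⌈2*α/(1-β)⌉₊ : ℝ) ≤ (K:ℝ) := by exact_mod_cast Nat.le_max_right 1 _
    rw [div_le_iff₀ h1β] at h2
    nlinarith
  rw [← summable_nat_add_iff K]
  have hcmp : Summable (fun k : ℕ => ((α+1)^m * (q β)^K) * (((k:ℝ)+((K:ℝ)+1))^m * (q β)^k)) :=
    (summable_poly_geom ((K:ℝ)+1) (q β) (q_pos β).le (q_lt_one hβ0 hβ1) m).mul_left _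
  apply Summable.of_nonneg_of_le (fun k => jt_nonneg hβ0 hα m (k+K)) _ hcmp
  intro k
  have hgood : 2*α ≤ (1-β)*((k+K : ℕ):ℝ) := by
    push_cast
    have : (K:ℝ) ≤ (k:ℝ) + K := le_add_of_nonneg_left (Nat.cast_nonneg k)
    nlinarith
  have h1 := jt_le_geom hβ0 hβ1 hα m (k := k+K) (by omega) hgood
  refine h1.trans ?_
  have hcast : ((k+K : ℕ):ℝ) = (k:ℝ) + K := by push_cast; ring
  have hb : (α+β*((k+K:ℕ):ℝ))^m ≤ (α+1)^m * ((k:ℝ)+((K:ℝ)+1))^m := by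
    rw [← mul_pow]
    apply pow_le_pow_left₀ (x_pos hβ0 hα (k+K)).le
    rw [hcast]
    have hβk : β*((k:ℝ)+K) ≤ (k:ℝ)+K := by
      apply mul_le_of_le_one_left (by positivity) hβ1.le
    nlinarith [hα.le, (by positivity : (0:ℝ) ≤ (k:ℝ)+K)]
  have hq : (q β)^(k+K) = (q β)^K * (q β)^k := by rw [pow_add]; ring
  calc (α+β*((k+K:ℕ):ℝ))^m * (q β)^(k+K)
      ≤ ((α+1)^m * ((k:ℝ)+((K:ℝ)+1))^m) * (q β)^(k+K) := by
        apply mul_le_mul_of_nonneg_right hb (pow_nonneg (q_pos β).le _)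
    _ = ((α+1)^m * (q β)^K) * (((k:ℝ)+((K:ℝ)+1))^m * (q β)^k) := by
        rw [hq]; ring

lemma at'_le_jt0 {β α : ℝ} (hβ0 : 0 ≤ β) (hα : 0 < α) (k : ℕ) :
    at' β α k ≤ jt β 0 α k := by
  unfold at' jt Afun
  rcases Nat.eq_zero_or_pos k with hk | hk
  · subst hk; simp
  · rw [if_neg (by omega)]
    have hx := x_pos hβ0 hα k
    have hfac : (0:ℝ) < (k.factorial:ℝ) := by exact_mod_cast k.factorial_pos
    gcongr ?_ * _ / _
    calc α * (α+β*k)^(k-1) ≤ (α+β*k) * (α+β*k)^(k-1) := by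
          apply mul_le_mul_of_nonneg_right _ (pow_nonneg hx.le _)
          nlinarith [mul_nonneg hβ0 (Nat.cast_nonneg k)]
      _ = (α+β*k)^(k-1+1) := by rw [pow_succ]; ring
      _ = (α+β*k)^(k+0) := by congr 1; omega

lemma summable_at' {β α : ℝ} (hβ0 : 0 ≤ β) (hβ1 : β < 1) (hα : 0 < α) :
    Summable (at' β α) :=
  Summable.of_nonneg_of_le (at'_nonneg hβ0 hα) (at'_le_jt0 hβ0 hα) (summable_jt hβ0 hβ1 hα 0)

noncomputable def Cq (β : ℝ) (m : ℕ) : ℝ := ∑' k : ℕ, ((k:ℝ)+1)^m * (q β)^k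

lemma Cq_nonneg {β : ℝ} (m : ℕ) : 0 ≤ Cq β m :=
  tsum_nonneg (fun k => mul_nonneg (by positivity) (pow_nonneg (q_pos β).le k))

lemma summable_Cq {β : ℝ} (hβ0 : 0 ≤ β) (hβ1 : β < 1) (m : ℕ) :
    Summable (fun k : ℕ => ((k:ℝ)+1)^m * (q β)^k) :=
  summable_poly_geom 1 (q β) (q_pos β).le (q_lt_one hβ0 hβ1) m

lemma T_poly {β : ℝ} (hβ0 : 0 ≤ β) (hβ1 : β < 1) (m : ℕ) :
    ∃ D : ℝ, 0 < D ∧ ∀ α : ℝ, 0 < α → T β m α ≤ D * (α+1)^(m+1) := by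
  have h1β : (0:ℝ) < 1 - β := by linarith
  set P : ℝ := 2/(1-β) with hP
  have hP0 : 0 < P := by positivity
  have hDpos : 0 < (P+2)*(P+3)^m := by positivity
  refine ⟨(P+2)*(P+3)^m + Cq β m + 1, by nlinarith [Cq_nonneg (β := β) m], ?_⟩
  intro α hα
  obtain ⟨K, hK1, hKα, hKub⟩ : ∃ K : ℕ, 1 ≤ K ∧ 2*α ≤ (1-β)*K ∧ (K:ℝ) ≤ P*α + 2 := by
    refine ⟨⌈2*α/(1-β)⌉₊ + 1, by omega, ?_, ?_⟩
    · have h2 : 2*α/(1-β) ≤ (⌈2*α/(1-β)⌉₊ : ℝ) := Nat.le_ceil _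
      rw [div_le_iff₀ h1β] at h2
      push_cast
      nlinarith
    · have := Nat.ceil_lt_add_one (show (0:ℝ) ≤ 2*α/(1-β) by positivity)
      have h4 : 2*α/(1-β) = P*α := by rw [hP]; field_simp
      push_cast
      linarith
  have hsum := summable_jt hβ0 hβ1 hα m
  have hsplit := Summable.sum_add_tsum_nat_add K hsum
  have hhead : ∑ k ∈ range K, jt β m α k ≤ K * (α+(K:ℝ))^m := by
    have hterm : ∀ k ∈ range K, jt β m α k ≤ (α+(K:ℝ))^m := by
      intro k hk
      simp only [Finset.mem_range] at hk
      refine (jt_le_crude hβ0 hα m k).trans ?_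
      have h5 : β*(k:ℝ) ≤ (k:ℝ) := mul_le_of_le_one_left (Nat.cast_nonneg k) hβ1.le
      have h6 : (k:ℝ) ≤ (K:ℝ) := by exact_mod_cast hk.le
      exact pow_le_pow_left₀ (x_pos hβ0 hα k).le (by linarith) m
    calc ∑ k ∈ range K, jt β m α k ≤ ∑ _k ∈ range K, (α+(K:ℝ))^m :=
          Finset.sum_le_sum hterm
      _ = K * (α+(K:ℝ))^m := by rw [Finset.sum_const, Finset.card_range]; simp
  have htail : ∑' k : ℕ, jt β m α (k+K) ≤ (α+1)^m * Cq β m := by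
    have hCs := summable_Cq hβ0 hβ1 (β := β) m
    have hterm : ∀ k : ℕ, jt β m α (k+K)
        ≤ (α+1)^m * (((((k+K:ℕ)):ℝ)+1)^m * (q β)^(k+K)) := by
      intro k
      have hKk : (K:ℝ) ≤ ((k+K:ℕ):ℝ) := by
        push_cast; linarith [Nat.cast_nonneg (α := ℝ) k]
      have hgood : 2*α ≤ (1-β)*((k+K : ℕ):ℝ) := by nlinarith
      refine (jt_le_geom hβ0 hβ1 hα m (k := k+K) (by omega) hgood).trans ?_
      rw [← mul_assoc, ← mul_pow]
      apply mul_le_mul_of_nonneg_right _ (pow_nonneg (q_pos β).le _)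
      apply pow_le_pow_left₀ (x_pos hβ0 hα (k+K)).le
      have h5 : β*((k+K:ℕ):ℝ) ≤ ((k+K:ℕ):ℝ) :=
        mul_le_of_le_one_left (Nat.cast_nonneg _) hβ1.le
      nlinarith [hα.le, Nat.cast_nonneg (α := ℝ) (k+K)]
    have hsum2 : Summable (fun k : ℕ => jt β m α (k+K)) :=
      (summable_nat_add_iff K).mpr hsum
    have hsum3 : Summable (fun k : ℕ =>
        (α+1)^m * (((((k+K:ℕ)):ℝ)+1)^m * (q β)^(k+K))) := by
      apply Summable.mul_left
      exact (summable_nat_add_iff K).mpr hCs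
    calc ∑' k : ℕ, jt β m α (k+K)
        ≤ ∑' k : ℕ, (α+1)^m * (((((k+K:ℕ)):ℝ)+1)^m * (q β)^(k+K)) :=
          Summable.tsum_le_tsum hterm hsum2 hsum3
      _ = (α+1)^m * ∑' k : ℕ, ((((k+K:ℕ):ℝ))+1)^m * (q β)^(k+K) := tsum_mul_left
      _ ≤ (α+1)^m * Cq β m := by
          apply mul_le_mul_of_nonneg_left _ (by positivity)
          have h7 := Summable.sum_add_tsum_nat_add K hCs
          have hhead0 : 0 ≤ ∑ k ∈ range K, ((k:ℝ)+1)^m * (q β)^k :=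
            Finset.sum_nonneg (fun k _ => mul_nonneg (by positivity) (pow_nonneg (q_pos β).le k))
          have h8 : (∑' k : ℕ, ((((k+K:ℕ):ℝ))+1)^m * (q β)^(k+K)) =
              ∑' k : ℕ, ((((k:ℕ):ℝ)+K)+1)^m * (q β)^(k+K) := by
            apply tsum_congr; intro k; push_cast; ring_nf
          rw [Cq, ← h7]
          rw [h8]
          have h9 : (∑' k : ℕ, ((((k:ℕ):ℝ)+K)+1)^m * (q β)^(k+K)) =
              ∑' k : ℕ, (((((k+K:ℕ)):ℝ))+1)^m * (q β)^(k+K) := by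
            apply tsum_congr; intro k; push_cast; ring_nf
          linarith [hhead0]
  have hT : T β m α = ∑ k ∈ range K, jt β m α k + ∑' k : ℕ, jt β m α (k+K) := by
    rw [T, ← hsplit]
  have hα1 : (1:ℝ) ≤ α + 1 := by linarith
  have hKb : (K:ℝ) * (α+(K:ℝ))^m ≤ (P+2)*(P+3)^m * (α+1)^(m+1) := by
    have hK0 : (0:ℝ) ≤ K := Nat.cast_nonneg K
    have e1 : (K:ℝ) ≤ (P+2)*(α+1) := by nlinarith
    have e2 : α+(K:ℝ) ≤ (P+3)*(α+1) := by nlinarith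
    calc (K:ℝ) * (α+(K:ℝ))^m ≤ ((P+2)*(α+1)) * ((P+3)*(α+1))^m := by
          apply mul_le_mul e1 (pow_le_pow_left₀ (by positivity) e2 m)
            (by positivity) (by positivity)
      _ = (P+2)*(P+3)^m * ((α+1)*(α+1)^m) := by rw [mul_pow]; ring
      _ = (P+2)*(P+3)^m * (α+1)^(m+1) := by rw [pow_succ]; ring
  have hCb : (α+1)^m * Cq β m ≤ Cq β m * (α+1)^(m+1) := by
    have h10 : (α+1)^m ≤ (α+1)^(m+1) := pow_le_pow_right₀ hα1 (by omega)
    nlinarith [Cq_nonneg (β := β) m, pow_nonneg (by linarith : (0:ℝ) ≤ α+1) m,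
      pow_nonneg (by linarith : (0:ℝ) ≤ α+1) (m+1)]
  have hone : (0:ℝ) < (α+1)^(m+1) := by positivity
  rw [hT]
  nlinarith [hhead, htail]

lemma g_le_T0 {β α : ℝ} (hβ0 : 0 ≤ β) (hβ1 : β < 1) (hα : 0 < α) :
    g β α ≤ T β 0 α :=
  Summable.tsum_le_tsum (at'_le_jt0 hβ0 hα) (summable_at' hβ0 hβ1 hα) (summable_jt hβ0 hβ1 hα 0)

lemma g_pos {β α : ℝ} (hβ0 : 0 ≤ β) (hβ1 : β < 1) (hα : 0 < α) : 0 < g β α := by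
  have hle := Summable.le_tsum (summable_at' hβ0 hβ1 hα) 0 (fun i _ => at'_nonneg hβ0 hα i)
  have h0 : 0 < at' β α 0 := by
    unfold at' Afun
    simp only [if_pos rfl, Nat.factorial_zero, Nat.cast_one, Nat.cast_zero, one_mul, mul_zero,
      add_zero, div_one]
    positivity
  exact lt_of_lt_of_le h0 hle

lemma g_lower {β : ℝ} (hβ0 : 0 ≤ β) (hβ1 : β < 1) :
    ∃ c : ℝ, 0 < c ∧ ∀ α : ℝ, 2 ≤ α → c / α ≤ g β α := by
  have h1β : (0:ℝ) < 1 - β := by linarith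
  set P : ℝ := 1/(1-β) with hP
  have hP1 : 1 ≤ P := by rw [hP, le_div_iff₀ h1β]; nlinarith
  have hP0 : 0 < P := by linarith
  have hPβ : P*(1-β) = 1 := by rw [hP]; field_simp
  refine ⟨Real.exp (-1) / ((2+2*P)*(3*P+1)), by positivity, ?_⟩
  intro α hα
  have hα0 : (0:ℝ) < α := by linarith
  obtain ⟨k₀, hk2, hlo, hup⟩ : ∃ k₀ : ℕ, 2 ≤ k₀ ∧ α ≤ (1-β)*k₀ ∧ (1-β)*(k₀:ℝ) ≤ α+1 := by
    refine ⟨⌈α/(1-β)⌉₊, ?_, ?_, ?_⟩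
    · have h1 : (1:ℝ) < α/(1-β) := by
        rw [lt_div_iff₀ h1β]; nlinarith
      have h2 : (1:ℕ) < ⌈α/(1-β)⌉₊ := by
        rw [Nat.lt_ceil]; exact_mod_cast h1
      omega
    · have h3 := Nat.le_ceil (α/(1-β))
      rw [div_le_iff₀ h1β] at h3
      linarith
    · have h4 := Nat.ceil_lt_add_one (show (0:ℝ) ≤ α/(1-β) by positivity)
      have h2 : (1-β)*(α/(1-β)) = α := by field_simp
      nlinarith
  have hk1 : 1 ≤ k₀ := by omega
  have hk0R : (2:ℝ) ≤ (k₀:ℝ) := by exact_mod_cast hk2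
  have hk0pos : (0:ℝ) < k₀ := by linarith
  set x := α + β*(k₀:ℕ) with hxdef
  have hx : 0 < x := x_pos hβ0 hα0 k₀
  have hxk : x ≤ (k₀:ℝ) := by rw [hxdef]; nlinarith
  have hxk1 : (k₀:ℝ) - 1 ≤ x := by rw [hxdef]; nlinarith
  set u := x/(k₀:ℝ) with hu
  have hu_pos : 0 < u := div_pos hx hk0pos
  have hu1 : u ≤ 1 := by rw [hu, div_le_one hk0pos]; exact hxk
  have hu_half : 1/2 ≤ u := by
    rw [hu, le_div_iff₀ hk0pos]; nlinarith
  have h1mu : 1 - u ≤ 1/(k₀:ℝ) := by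
    have heq : 1 - u = ((k₀:ℝ) - x)/(k₀:ℝ) := by
      rw [hu]; field_simp
    rw [heq, div_le_div_iff₀ hk0pos hk0pos]
    nlinarith
  have hphil := phi_lower hu_pos hu1
  have hquad : (k₀:ℝ) * ((1-u)^2/u) ≤ 1 := by
    have h0u : 0 ≤ 1 - u := by linarith
    have h1' : (1-u)^2 ≤ (1/(k₀:ℝ))^2 := pow_le_pow_left₀ h0u h1mu 2
    have h2' : (1-u)^2/u ≤ 2*(1/(k₀:ℝ))^2 := by
      rw [div_le_iff₀ hu_pos]
      nlinarith
    calc (k₀:ℝ) * ((1-u)^2/u) ≤ (k₀:ℝ) * (2*(1/(k₀:ℝ))^2) :=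
          mul_le_mul_of_nonneg_left h2' hk0pos.le
      _ = 2/(k₀:ℝ) := by field_simp
      _ ≤ 1 := by rw [div_le_one hk0pos]; linarith
  have hphi1 : -1 ≤ (k₀:ℝ) * (Real.log u + 1 - u) := by
    have h5 := mul_le_mul_of_nonneg_left hphil hk0pos.le
    have heq : (k₀:ℝ) * (-(1-u)^2/u) = -((k₀:ℝ) * ((1-u)^2/u)) := by ring
    rw [heq] at h5
    linarith
  have hexp1 : Real.exp (-1) ≤ Real.exp ((k₀:ℝ)*(Real.log u + 1 - u)) :=
    Real.exp_le_exp.mpr hphi1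
  have hfact_pos : (0:ℝ) < k₀.factorial := by exact_mod_cast k₀.factorial_pos
  have hxpow : x * x^(k₀-1) = x^(k₀) := by
    rw [← pow_succ']; congr 1; omega
  have hform : at' β α k₀ = (α/x) * ((x^(k₀) * Real.exp (-x))/(k₀.factorial)) := by
    unfold at' Afun
    rw [if_neg (by omega : ¬ k₀ = 0), ← hxdef, ← hxpow]
    field_simp
  have hfle : (k₀.factorial:ℝ) ≤ (2*(k₀:ℝ)+1) * ((k₀:ℝ)^(k₀) * Real.exp (-(k₀:ℝ))) := by
    have h6 := exp_fact_le k₀ hk1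
    rw [Real.exp_neg]
    rw [show (2*(k₀:ℝ)+1) * ((k₀:ℝ)^(k₀) * (Real.exp (k₀:ℝ))⁻¹)
        = ((2*(k₀:ℝ)+1) * (k₀:ℝ)^(k₀)) * (Real.exp (k₀:ℝ))⁻¹ by ring]
    rw [le_mul_inv_iff₀ (Real.exp_pos _)]
    linarith
  have hB : Real.exp (-1) / (2*(k₀:ℝ)+1) ≤ (x^(k₀) * Real.exp (-x))/(k₀.factorial) := by
    rw [pow_exp_eq hx hk1, ← hu]
    rw [div_le_div_iff₀ (by positivity) hfact_pos]
    calc Real.exp (-1) * (k₀.factorial:ℝ)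
        ≤ Real.exp ((k₀:ℝ)*(Real.log u + 1 - u)) *
            ((2*(k₀:ℝ)+1) * ((k₀:ℝ)^(k₀) * Real.exp (-(k₀:ℝ)))) :=
          mul_le_mul hexp1 hfle hfact_pos.le (Real.exp_pos _).le
      _ = (k₀:ℝ)^(k₀) * Real.exp (-(k₀:ℝ)) *
            Real.exp ((k₀:ℝ)*(Real.log u + 1 - u)) * (2*(k₀:ℝ)+1) := by ring
  have hk0ub : (k₀:ℝ) ≤ P*(α+1) := by
    have : (k₀:ℝ) = P*((1-β)*(k₀:ℝ)) := by
      rw [show P*((1-β)*(k₀:ℝ)) = (P*(1-β))*(k₀:ℝ) by ring, hPβ]; ring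
    rw [this]
    nlinarith
  have hxub : x ≤ α*(2+2*P) := by
    rw [hxdef]
    have hβk : β*(k₀:ℝ) ≤ (k₀:ℝ) := mul_le_of_le_one_left hk0pos.le hβ1.le
    nlinarith
  have hax : 1/(2+2*P) ≤ α/x := by
    rw [div_le_div_iff₀ (by positivity) hx]
    nlinarith
  have hden : 2*(k₀:ℝ)+1 ≤ α*(3*P+1) := by nlinarith
  have hBα : Real.exp (-1) / (α*(3*P+1)) ≤ Real.exp (-1) / (2*(k₀:ℝ)+1) := by
    apply div_le_div_of_nonneg_left (Real.exp_pos _).le (by positivity) hden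
  have hB2 : Real.exp (-1) / (α*(3*P+1)) ≤ (x^(k₀) * Real.exp (-x))/(k₀.factorial) :=
    le_trans hBα hB
  have hfinal : Real.exp (-1) / ((2+2*P)*(3*P+1)) / α ≤ at' β α k₀ := by
    rw [hform]
    have heq2 : Real.exp (-1) / ((2+2*P)*(3*P+1)) / α
        = (1/(2+2*P)) * (Real.exp (-1) / (α*(3*P+1))) := by
      field_simp
    rw [heq2]
    apply mul_le_mul hax hB2 (by positivity) _
    positivity
  refine hfinal.trans ?_
  exact Summable.le_tsum (summable_at' hβ0 hβ1 hα0) k₀ (fun i _ => at'_nonneg hβ0 hα0 i)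

lemma g_mul {β : ℝ} (hβ0 : 0 ≤ β) (hβ1 : β < 1) {x y : ℝ} (hx : 0 < x) (hy : 0 < y) :
    g β x * g β y = g β (x+y) := by
  have hsx := summable_at' hβ0 hβ1 hx
  have hsy := summable_at' hβ0 hβ1 hy
  have hnx : Summable (fun k => ‖at' β x k‖) := by
    refine hsx.congr fun k => ?_
    rw [Real.norm_of_nonneg (at'_nonneg hβ0 hx k)]
  have hny : Summable (fun k => ‖at' β y k‖) := by
    refine hsy.congr fun k => ?_
    rw [Real.norm_of_nonneg (at'_nonneg hβ0 hy k)]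
  rw [g, g, g, tsum_mul_tsum_eq_tsum_sum_antidiagonal_of_summable_norm hnx hny]
  apply tsum_congr
  intro n
  rw [Finset.Nat.sum_antidiagonal_eq_sum_range_succ (fun i j => at' β x i * at' β y j) n]
  have key : ∀ i ∈ range (n+1), at' β x i * at' β y (n-i)
      = (Real.exp (-(x+y+β*n)) / n.factorial) *
        ((n.choose i : ℝ) * Afun β x i * Afun β y (n-i)) := by
    intro i hi
    simp only [Finset.mem_range] at hi
    have hin : i ≤ n := by omega
    unfold at'
    have hfact : ((n.choose i * i.factorial * (n-i).factorial : ℕ) : ℝ)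
        = (n.factorial : ℝ) := by
      exact_mod_cast congrArg (Nat.cast : ℕ → ℝ)
        (Nat.choose_mul_factorial_mul_factorial hin)
    push_cast at hfact
    have hexp : Real.exp (-(x+β*i)) * Real.exp (-(y+β*((n-i:ℕ):ℝ)))
        = Real.exp (-(x+y+β*n)) := by
      rw [← Real.exp_add]
      congr 1
      rw [Nat.cast_sub hin]
      ring
    have hfi : (0:ℝ) < i.factorial := by exact_mod_cast i.factorial_pos
    have hfni : (0:ℝ) < (n-i).factorial := by exact_mod_cast (n-i).factorial_pos
    have hfn : (0:ℝ) < n.factorial := by exact_mod_cast n.factorial_pos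
    rw [div_mul_div_comm]
    rw [show Afun β x i * Real.exp (-(x+β*i)) * (Afun β y (n-i) * Real.exp (-(y+β*((n-i:ℕ):ℝ))))
        = (Afun β x i * Afun β y (n-i)) * (Real.exp (-(x+β*i)) * Real.exp (-(y+β*((n-i:ℕ):ℝ)))) by ring,
      hexp]
    rw [div_mul_eq_mul_div, div_eq_div_iff (by positivity) (by positivity)]
    linear_combination (-(Afun β x i * Afun β y (n-i) * Real.exp (-(x+y+β*(n:ℝ))))) * hfact
  rw [Finset.sum_congr rfl key, ← Finset.mul_sum, abel_identity β x y n]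
  unfold at'
  ring

lemma g_pow {β : ℝ} (hβ0 : 0 ≤ β) (hβ1 : β < 1) {x : ℝ} (hx : 0 < x) :
    ∀ n : ℕ, 1 ≤ n → g β ((n:ℝ)*x) = (g β x)^n := by
  intro n hn
  induction n with
  | zero => omega
  | succ m IH =>
    rcases Nat.eq_zero_or_pos m with hm | hm
    · subst hm; simp
    · have hmx : 0 < (m:ℝ)*x := by
        have : (0:ℝ) < m := by exact_mod_cast hm
        positivity
      have h1 : ((m+1:ℕ):ℝ)*x = (m:ℝ)*x + x := by push_cast; ring
      rw [h1, ← g_mul hβ0 hβ1 hmx hx, IH hm, pow_succ]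

lemma g_eq_one {β : ℝ} (hβ0 : 0 ≤ β) (hβ1 : β < 1) {x : ℝ} (hx : 0 < x) :
    g β x = 1 := by
  obtain ⟨D, hD, hTb⟩ := T_poly hβ0 hβ1 0
  have hgub : ∀ α : ℝ, 0 < α → g β α ≤ D*(α+1) := by
    intro α hα
    have := (g_le_T0 hβ0 hβ1 hα).trans (hTb α hα)
    simpa using this
  obtain ⟨c, hc, hglb⟩ := g_lower hβ0 hβ1
  set r := g β x with hr
  have hr0 : 0 < r := g_pos hβ0 hβ1 hx
  rcases lt_trichotomy r 1 with hlt | heq | hgt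
  · exfalso
    have hlim : Filter.Tendsto (fun n : ℕ => ((n:ℝ)*x+1) * r^n) Filter.atTop (nhds 0) := by
      have h1 := tendsto_pow_const_mul_const_pow_of_lt_one 1 hr0.le hlt
      have h0 := tendsto_pow_const_mul_const_pow_of_lt_one 0 hr0.le hlt
      have := (h1.const_mul x).add h0
      simp only [mul_zero, add_zero, zero_add] at this
      refine this.congr fun n => ?_
      simp only [pow_one, pow_zero, one_mul]
      ring
    have hev1 : ∀ᶠ n : ℕ in Filter.atTop, ((n:ℝ)*x+1) * r^n < c :=
      hlim.eventually_lt_const hc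
    have hev2 : ∀ᶠ n : ℕ in Filter.atTop, (2:ℝ)/x ≤ (n:ℝ) := by
      have := Filter.eventually_ge_atTop (⌈(2:ℝ)/x⌉₊)
      filter_upwards [this] with n hn
      calc (2:ℝ)/x ≤ (⌈(2:ℝ)/x⌉₊:ℝ) := Nat.le_ceil _
        _ ≤ (n:ℝ) := by exact_mod_cast hn
    have hev3 : ∀ᶠ n : ℕ in Filter.atTop, 1 ≤ n := Filter.eventually_ge_atTop 1
    obtain ⟨n, h1', h2', h3'⟩ := (hev1.and (hev2.and hev3)).exists
    have hnx2 : 2 ≤ (n:ℝ)*x := by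
      rw [div_le_iff₀ hx] at h2'
      linarith
    have hnx0 : (0:ℝ) < (n:ℝ)*x := by linarith
    have hg := hglb ((n:ℝ)*x) hnx2
    rw [g_pow hβ0 hβ1 hx n h3'] at hg
    rw [div_le_iff₀ hnx0] at hg
    have hfin : c ≤ ((n:ℝ)*x+1) * r^n := by nlinarith [pow_nonneg hr0.le n]
    linarith
  · exact heq
  · exfalso
    set s := r⁻¹ with hs
    have hs0 : 0 < s := by positivity
    have hs1 : s < 1 := by
      rw [hs, inv_lt_one_iff₀]
      right; exact hgt
    have hlim : Filter.Tendsto (fun n : ℕ => D*(((n:ℝ)*x+1) * s^n)) Filter.atTop (nhds 0) := by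
      have h1 := tendsto_pow_const_mul_const_pow_of_lt_one 1 hs0.le hs1
      have h0 := tendsto_pow_const_mul_const_pow_of_lt_one 0 hs0.le hs1
      have h2 := (h1.const_mul x).add h0
      simp only [mul_zero, add_zero, zero_add] at h2
      have h3 := h2.const_mul D
      simp only [mul_zero] at h3
      refine h3.congr fun n => ?_
      simp only [pow_one, pow_zero, one_mul]
      ring
    have hev1 : ∀ᶠ n : ℕ in Filter.atTop, D*(((n:ℝ)*x+1) * s^n) < 1 :=
      hlim.eventually_lt_const one_pos
    have hev3 : ∀ᶠ n : ℕ in Filter.atTop, 1 ≤ n := Filter.eventually_ge_atTop 1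
    obtain ⟨n, h1', h3'⟩ := (hev1.and hev3).exists
    have hn0 : (0:ℝ) < n := by exact_mod_cast h3'
    have hnx0 : (0:ℝ) < (n:ℝ)*x := by positivity
    have hg := hgub ((n:ℝ)*x) hnx0
    rw [g_pow hβ0 hβ1 hx n h3'] at hg
    have hrs : r^n * s^n = 1 := by
      rw [← mul_pow, hs, mul_inv_cancel₀ (ne_of_gt hr0), one_pow]
    have h4 : r^n * s^n ≤ D*((n:ℝ)*x+1) * s^n := by
      apply mul_le_mul_of_nonneg_right _ (pow_nonneg hs0.le n)
      linarith
    rw [hrs] at h4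
    nlinarith

lemma T0_rec {β : ℝ} (hβ0 : 0 ≤ β) (hβ1 : β < 1) {α : ℝ} (hα : 0 < α) :
    T β 0 α = g β α + β * T β 0 (α+β) := by
  have hαβ : 0 < α + β := by linarith
  have hs := summable_jt hβ0 hβ1 hα 0
  have hsg := summable_at' hβ0 hβ1 hα
  have hsβ := summable_jt hβ0 hβ1 hαβ 0
  have key : ∀ k : ℕ, jt β 0 α (k+1) = at' β α (k+1) + β * jt β 0 (α+β) k := by
    intro k
    unfold jt at' Afun
    rw [if_neg (Nat.succ_ne_zero k)]
    simp only [Nat.add_zero, Nat.succ_sub_one]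
    push_cast
    have hE : α+β+β*(k:ℝ) = α+β*((k:ℝ)+1) := by ring
    rw [hE]
    have hf0 : (k.factorial : ℝ) ≠ 0 := by
      have : (0:ℝ) < k.factorial := by exact_mod_cast k.factorial_pos
      linarith
    rw [Nat.factorial_succ]
    push_cast
    field_simp
    ring
  have h0 : jt β 0 α 0 = at' β α 0 := by
    unfold jt at' Afun
    simp
  have hshift : Summable (fun k => at' β α (k+1)) := (summable_nat_add_iff 1).mpr hsg
  have hsβ' : Summable (fun k => β * jt β 0 (α+β) k) := hsβ.mul_left β
  calc T β 0 α = jt β 0 α 0 + ∑' k, jt β 0 α (k+1) := Summable.tsum_eq_zero_add hs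
    _ = at' β α 0 + ∑' k, (at' β α (k+1) + β * jt β 0 (α+β) k) := by
        rw [h0]; congr 1; exact tsum_congr key
    _ = at' β α 0 + ((∑' k, at' β α (k+1)) + ∑' k, β * jt β 0 (α+β) k) := by
        rw [Summable.tsum_add hshift hsβ']
    _ = (at' β α 0 + ∑' k, at' β α (k+1)) + β * ∑' k, jt β 0 (α+β) k := by
        rw [tsum_mul_left]; ring
    _ = g β α + β * T β 0 (α+β) := by
        rw [g, T, Summable.tsum_eq_zero_add hsg]

lemma T_rec {β : ℝ} (hβ0 : 0 ≤ β) (hβ1 : β < 1) {α : ℝ} (hα : 0 < α) (m : ℕ) :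
    T β (m+1) α = α * T β m α + β * T β (m+1) (α+β) := by
  have hαβ : 0 < α + β := by linarith
  have hs := summable_jt hβ0 hβ1 hα (m+1)
  have hs0 := summable_jt hβ0 hβ1 hα m
  have hsβ := summable_jt hβ0 hβ1 hαβ (m+1)
  have key : ∀ k : ℕ, jt β (m+1) α (k+1)
      = α * jt β m α (k+1) + β * jt β (m+1) (α+β) k := by
    intro k
    unfold jt
    have he1 : (k+1)+(m+1) = ((k+1)+m)+1 := by omega
    have he2 : k+(m+1) = (k+1)+m := by omega
    rw [he1, he2]
    push_cast
    have hE : α+β+β*(k:ℝ) = α+β*((k:ℝ)+1) := by ring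
    rw [hE]
    have hf0 : (k.factorial : ℝ) ≠ 0 := by
      have : (0:ℝ) < k.factorial := by exact_mod_cast k.factorial_pos
      linarith
    rw [Nat.factorial_succ]
    push_cast
    field_simp
    ring
  have h0 : jt β (m+1) α 0 = α * jt β m α 0 := by
    unfold jt
    simp only [Nat.zero_add, Nat.cast_zero, mul_zero, add_zero]
    rw [pow_succ]
    ring
  have hshift : Summable (fun k => α * jt β m α (k+1)) :=
    ((summable_nat_add_iff 1).mpr hs0).mul_left α
  have hsβ' : Summable (fun k => β * jt β (m+1) (α+β) k) := hsβ.mul_left β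
  calc T β (m+1) α = jt β (m+1) α 0 + ∑' k, jt β (m+1) α (k+1) := Summable.tsum_eq_zero_add hs
    _ = α * jt β m α 0 + ∑' k, (α * jt β m α (k+1) + β * jt β (m+1) (α+β) k) := by
        rw [h0]; congr 1; exact tsum_congr key
    _ = α * jt β m α 0 + ((∑' k, α * jt β m α (k+1)) + ∑' k, β * jt β (m+1) (α+β) k) := by
        rw [Summable.tsum_add hshift hsβ']
    _ = α * (jt β m α 0 + ∑' k, jt β m α (k+1)) + β * ∑' k, jt β (m+1) (α+β) k := by
        rw [tsum_mul_left, tsum_mul_left]; ring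
    _ = α * T β m α + β * T β (m+1) (α+β) := by
        rw [T, T, Summable.tsum_eq_zero_add hs0]

lemma vanish {β : ℝ} (hβ0 : 0 ≤ β) (hβ1 : β < 1) (h : ℝ → ℝ) (C : ℝ) (M : ℕ)
    (hrec : ∀ α : ℝ, 0 < α → h α = β * h (α+β))
    (hbd : ∀ α : ℝ, 0 < α → |h α| ≤ C*(α+1)^M) :
    ∀ α : ℝ, 0 < α → h α = 0 := by
  intro α hα
  rcases eq_or_lt_of_le hβ0 with hb0 | hb0
  · have := hrec α hα
    rw [← hb0] at this
    simpa using this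
  · have hiter : ∀ n : ℕ, h α = β^n * h (α + n*β) := by
      intro n
      induction n with
      | zero => simp
      | succ m IH =>
        have hpos : 0 < α + m*β := by positivity
        rw [IH, hrec _ hpos]
        push_cast
        ring_nf
    have hC0 : 0 ≤ C := by
      have h1 := hbd α hα
      have h2 : (0:ℝ) ≤ |h α| := abs_nonneg _
      nlinarith [pow_pos (show (0:ℝ) < α+1 by linarith) M]
    have hbound : ∀ n : ℕ, |h α| ≤ (C*(α+2)^M) * (((n:ℝ)+1)^M * β^n) := by
      intro n
      have hpos : 0 < α + n*β := by positivity
      have h1 := hbd _ hpos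
      have h2 : |h α| = β^n * |h (α + n*β)| := by
        rw [hiter n, abs_mul, abs_of_nonneg (pow_nonneg hβ0 n)]
      rw [h2]
      have h3 : α + (n:ℝ)*β + 1 ≤ (α+2)*((n:ℝ)+1) := by
        have : (n:ℝ)*β ≤ n := mul_le_of_le_one_right (Nat.cast_nonneg n) hβ1.le
        nlinarith [Nat.cast_nonneg (α := ℝ) n, hα.le]
      have h4 : (α + (n:ℝ)*β + 1)^M ≤ ((α+2)*((n:ℝ)+1))^M :=
        pow_le_pow_left₀ (by positivity) h3 M
      calc β^n * |h (α + n*β)| ≤ β^n * (C*(α + (n:ℝ)*β+1)^M) := by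
            apply mul_le_mul_of_nonneg_left _ (pow_nonneg hβ0 n)
            exact h1
        _ ≤ β^n * (C*((α+2)*((n:ℝ)+1))^M) := by
            apply mul_le_mul_of_nonneg_left _ (pow_nonneg hβ0 n)
            exact mul_le_mul_of_nonneg_left h4 hC0
        _ = (C*(α+2)^M) * (((n:ℝ)+1)^M * β^n) := by rw [mul_pow]; ring
    have hlim : Filter.Tendsto (fun n : ℕ => (C*(α+2)^M) * (((n:ℝ)+1)^M * β^n))
        Filter.atTop (nhds 0) := by
      have h1 := tendsto_pow_const_mul_const_pow_of_lt_one M hβ0 hβ1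
      have h2 : Filter.Tendsto (fun n : ℕ => ((n:ℝ)+1)^M * β^(n+1))
          Filter.atTop (nhds 0) := by
        have := h1.comp (Filter.tendsto_add_atTop_nat 1)
        refine this.congr fun n => ?_
        simp only [Function.comp_apply]
        push_cast
        ring
      have h3 : Filter.Tendsto (fun n : ℕ => β⁻¹ * (((n:ℝ)+1)^M * β^(n+1)))
          Filter.atTop (nhds 0) := by
        have := h2.const_mul β⁻¹
        simpa using this
      have h4 : Filter.Tendsto (fun n : ℕ => ((n:ℝ)+1)^M * β^n)
          Filter.atTop (nhds 0) := by
        refine h3.congr fun n => ?_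
        rw [pow_succ]
        field_simp
      have := h4.const_mul (C*(α+2)^M)
      simpa using this
    have habs : |h α| ≤ 0 := ge_of_tendsto' hlim hbound
    have := abs_nonneg (h α)
    have : |h α| = 0 := le_antisymm habs (abs_nonneg _)
    exact abs_eq_zero.mp this

lemma T_nonneg {β α : ℝ} (hβ0 : 0 ≤ β) (hα : 0 < α) (m : ℕ) : 0 ≤ T β m α :=
  tsum_nonneg (jt_nonneg hβ0 hα m)

lemma T0_val {β : ℝ} (hβ0 : 0 ≤ β) (hβ1 : β < 1) :
    ∀ α : ℝ, 0 < α → T β 0 α = 1/(1-β) := by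
  have h1β : (0:ℝ) < 1 - β := by linarith
  set P : ℝ := 1/(1-β) with hP
  have hP0 : 0 < P := by positivity
  have hPid : 1 + β*P = P := by rw [hP]; field_simp; ring
  obtain ⟨D, hD, hTb⟩ := T_poly hβ0 hβ1 0
  have hz := vanish hβ0 hβ1 (fun a => T β 0 a - P) (D + P) 1 ?_ ?_
  · intro α hα
    have := hz α hα
    simpa using sub_eq_zero.mp this
  · intro α hα
    have hrec := T0_rec hβ0 hβ1 hα
    rw [g_eq_one hβ0 hβ1 hα] at hrec
    rw [hrec]
    linear_combination hPid
  · intro α hα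
    have h1 : T β 0 α ≤ D * (α+1) := by
      have := hTb α hα; norm_num at this ⊢; linarith
    have h2 := T_nonneg hβ0 hα 0 (α := α)
    rw [abs_le, pow_one]
    constructor
    · nlinarith
    · nlinarith

lemma T1_val {β : ℝ} (hβ0 : 0 ≤ β) (hβ1 : β < 1) :
    ∀ α : ℝ, 0 < α → T β 1 α = α*(1/(1-β))^2 + β^2*(1/(1-β))^3 := by
  have h1β : (0:ℝ) < 1 - β := by linarith
  set P : ℝ := 1/(1-β) with hP
  have hP0 : 0 < P := by positivity
  obtain ⟨D, hD, hTb⟩ := T_poly hβ0 hβ1 1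
  have hid : ∀ a : ℝ, a*P + β*((a+β)*P^2+β^2*P^3) = a*P^2+β^2*P^3 := by
    intro a; rw [hP]; field_simp; ring
  have hz := vanish hβ0 hβ1 (fun a => T β 1 a - (a*P^2+β^2*P^3)) (D + (P^2+P^3)) 2 ?_ ?_
  · intro α hα
    have := hz α hα
    simpa using sub_eq_zero.mp this
  · intro α hα
    have hαβ : 0 < α + β := by linarith
    have hrec := T_rec hβ0 hβ1 hα 0
    rw [T0_val hβ0 hβ1 α hα, ← hP] at hrec
    rw [hrec]
    linear_combination hid α
  · intro α hα
    have h1 : T β 1 α ≤ D * (α+1)^2 := by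
      have := hTb α hα; norm_num at this ⊢; linarith
    have h2 := T_nonneg hβ0 hα 1 (α := α)
    have h3 : (0:ℝ) < (α+1)^2 := by positivity
    have h4 : α ≤ (α+1)^2 := by nlinarith
    have h5 : (1:ℝ) ≤ (α+1)^2 := by nlinarith
    have hβ2 : β^2 ≤ 1 := by nlinarith
    have hc1 : α*P^2+β^2*P^3 ≤ (P^2+P^3)*(α+1)^2 := by nlinarith [pow_pos hP0 2, pow_pos hP0 3]
    have hc0 : 0 ≤ α*P^2+β^2*P^3 := by positivity
    rw [abs_le]
    constructor
    · nlinarith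
    · nlinarith

lemma T2_val {β : ℝ} (hβ0 : 0 ≤ β) (hβ1 : β < 1) :
    ∀ α : ℝ, 0 < α → T β 2 α
      = α^2*(1/(1-β))^3 + 3*α*β^2*(1/(1-β))^4 + β^3*(1+2*β)*(1/(1-β))^5 := by
  have h1β : (0:ℝ) < 1 - β := by linarith
  set P : ℝ := 1/(1-β) with hP
  have hP0 : 0 < P := by positivity
  obtain ⟨D, hD, hTb⟩ := T_poly hβ0 hβ1 2
  have hid : ∀ a : ℝ, a*(a*P^2+β^2*P^3)
      + β*((a+β)^2*P^3+3*(a+β)*β^2*P^4+β^3*(1+2*β)*P^5)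
      = a^2*P^3+3*a*β^2*P^4+β^3*(1+2*β)*P^5 := by
    intro a; rw [hP]; field_simp; ring
  have hz := vanish hβ0 hβ1
    (fun a => T β 2 a - (a^2*P^3+3*a*β^2*P^4+β^3*(1+2*β)*P^5))
    (D + (P^3+3*P^4+3*P^5)) 3 ?_ ?_
  · intro α hα
    have := hz α hα
    simpa using sub_eq_zero.mp this
  · intro α hα
    have hαβ : 0 < α + β := by linarith
    have hrec := T_rec hβ0 hβ1 hα 1
    rw [T1_val hβ0 hβ1 α hα, ← hP] at hrec
    rw [hrec]
    linear_combination hid α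
  · intro α hα
    have h1 : T β 2 α ≤ D * (α+1)^3 := by
      have := hTb α hα; norm_num at this ⊢; linarith
    have h2 := T_nonneg hβ0 hα 2 (α := α)
    have h3 : (0:ℝ) < (α+1)^3 := by positivity
    have h4 : α^2 ≤ (α+1)^3 := by nlinarith
    have h5 : (1:ℝ) ≤ (α+1)^3 := by nlinarith
    have h6 : α ≤ (α+1)^3 := by nlinarith
    have hβ2 : β^2 ≤ 1 := by nlinarith
    have hβ3 : β^3*(1+2*β) ≤ 3 := by nlinarith
    have hβ3' : 0 ≤ β^3*(1+2*β) := by positivity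
    have e1 : α^2*P^3 ≤ (α+1)^3*P^3 :=
      mul_le_mul_of_nonneg_right h4 (pow_pos hP0 3).le
    have e2' : α*β^2 ≤ (α+1)^3 := (mul_le_of_le_one_right hα.le hβ2).trans h6
    have e2 : 3*(α*β^2)*P^4 ≤ 3*(α+1)^3*P^4 := by
      have := mul_le_mul_of_nonneg_right e2' (pow_pos hP0 4).le
      linarith
    have e3 : β^3*(1+2*β)*P^5 ≤ 3*(α+1)^3*P^5 := by
      have h7 : β^3*(1+2*β)*P^5 ≤ 3*P^5 :=
        mul_le_mul_of_nonneg_right hβ3 (pow_pos hP0 5).le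
      have h8 : 3*P^5 ≤ 3*(α+1)^3*P^5 := by
        nlinarith [pow_pos hP0 5]
      linarith
    have hc1 : α^2*P^3+3*α*β^2*P^4+β^3*(1+2*β)*P^5 ≤ (P^3+3*P^4+3*P^5)*(α+1)^3 := by
      nlinarith [e1, e2, e3]
    have hc0 : 0 ≤ α^2*P^3+3*α*β^2*P^4+β^3*(1+2*β)*P^5 := by positivity
    rw [abs_le]
    constructor
    · nlinarith
    · nlinarith

end Jain

theorem jain_S3 (α β : ℝ) (hα : 0 < α) (hβ0 : 0 ≤ β) (hβ1 : β < 1)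
    (p : ℝ) (hp : p = 1 / (1 - β)) :
    HasSum (fun k : ℕ =>
      (α + β * k) ^ (k + 2) / (Nat.factorial k) * Real.exp (-(α + β * k)))
      (α ^ 2 * p ^ 3 + 3 * α * β ^ 2 * p ^ 4 + β ^ 3 * (1 + 2 * β) * p ^ 5) := by
  have h : HasSum (Jain.jt β 2 α) (Jain.T β 2 α) :=
    (Jain.summable_jt hβ0 hβ1 hα 2).hasSum
  have hval := Jain.T2_val hβ0 hβ1 α hα
  rw [hval] at h
  have hfun : (fun k : ℕ =>
      (α + β * k) ^ (k + 2) / (Nat.factorial k) * Real.exp (-(α + β * k)))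
      = Jain.jt β 2 α := by
    funext k
    unfold Jain.jt
    ring
  rw [hp, hfun]
  exact h
end

section
/- For α > 0, 0 ≤ β < 1, and r ≥ 1, the series S(r,α,β) satisfies the recursion S(r,α,β) = ∑_{k=0}^∞ β^k · (α + βk) · S(r-1, α+βk, β). -/
lemma jain_summable (r : ℕ) (α β : ℝ) (hα : 0 < α) (hβ0 : 0 ≤ β) (hβ1 : β < 1) :
    Summable (fun k : ℕ => (α + β * k) ^ (k + r) / (α + β * k) / (Nat.factorial k) *
      Real.exp (-(α + β * k))) := by
  obtain ⟨b, hb1, hbq⟩ : ∃ b : ℝ, 1 < b ∧ Real.exp ((b - 1) * β) < b := by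
    rcases eq_or_lt_of_le hβ0 with h | h
    · refine ⟨2, one_lt_two, ?_⟩
      rw [← h]
      simp
    · refine ⟨β⁻¹, one_lt_inv₀ h |>.mpr hβ1, ?_⟩
      have h1 : (β⁻¹ - 1) * β = 1 - β := by field_simp
      rw [h1]
      have h2 : β < Real.exp (β - 1) := by
        have := Real.add_one_lt_exp (x := β - 1) (by intro hc; rw [sub_eq_zero] at hc; linarith)
        linarith
      have h3 : Real.exp (1 - β) * β < 1 := by
        have := mul_lt_mul_of_pos_left h2 (Real.exp_pos (1 - β))
        rwa [← Real.exp_add, show 1 - β + (β - 1) = 0 by ring, Real.exp_zero] at this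
      calc Real.exp (1 - β) = Real.exp (1 - β) * β * β⁻¹ := by field_simp
      _ < 1 * β⁻¹ := mul_lt_mul_of_pos_right h3 (inv_pos.mpr h)
      _ = β⁻¹ := one_mul _
  have hb0 : (0 : ℝ) < b := lt_trans one_pos hb1
  set q : ℝ := Real.exp ((b - 1) * β) / b with hq
  have hq0 : 0 < q := div_pos (Real.exp_pos _) hb0
  have hq1 : q < 1 := (div_lt_one hb0).mpr hbq
  set C : ℝ := (α + β) ^ r / α * Real.exp ((b - 1) * α) with hC
  have hbound : ∀ k : ℕ, (α + β * k) ^ (k + r) / (α + β * k) / (Nat.factorial k) *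
      Real.exp (-(α + β * k)) ≤ C * (((k : ℝ) + 1) ^ r * q ^ k) := by
    intro k
    have hx : (0 : ℝ) < α + β * k := by positivity
    have h1 : (α + β * k) ^ k / (Nat.factorial k : ℝ) ≤ Real.exp (b * (α + β * k)) / b ^ k := by
      rw [div_le_div_iff₀ (by positivity) (by positivity)]
      have h2 := Real.pow_div_factorial_le_exp (x := b * (α + β * k)) (by positivity) k
      rw [div_le_iff₀ (by positivity)] at h2
      calc (α + β * k) ^ k * b ^ k = (b * (α + β * k)) ^ k := by rw [mul_pow]; ring
      _ ≤ Real.exp (b * (α + β * k)) * (Nat.factorial k : ℝ) := h2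
    have he : Real.exp (b * (α + β * k)) * Real.exp (-(α + β * k)) =
        Real.exp ((b - 1) * α) * Real.exp ((k : ℝ) * ((b - 1) * β)) := by
      rw [← Real.exp_add, ← Real.exp_add]; congr 1; ring
    calc (α + β * k) ^ (k + r) / (α + β * k) / (Nat.factorial k) * Real.exp (-(α + β * k))
        = (α + β * k) ^ r * (1 / (α + β * k)) * ((α + β * k) ^ k / (Nat.factorial k)) *
            Real.exp (-(α + β * k)) := by rw [pow_add]; ring
      _ ≤ ((α + β) * ((k : ℝ) + 1)) ^ r * (1 / α) * (Real.exp (b * (α + β * k)) / b ^ k) *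
            Real.exp (-(α + β * k)) := by
          have hk0 : (0 : ℝ) ≤ β * k := mul_nonneg hβ0 (Nat.cast_nonneg k)
          have hk1 : (0 : ℝ) ≤ α * k := mul_nonneg hα.le (Nat.cast_nonneg k)
          have e1 : (α + β * k) ^ r ≤ ((α + β) * ((k : ℝ) + 1)) ^ r :=
            pow_le_pow_left₀ hx.le (by nlinarith) r
          have e2 : 1 / (α + β * k) ≤ 1 / α := one_div_le_one_div_of_le hα (by linarith)
          have s1 : (α + β * k) ^ r * (1 / (α + β * k)) ≤
              ((α + β) * ((k : ℝ) + 1)) ^ r * (1 / α) :=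
            mul_le_mul e1 e2 (by positivity) (by positivity)
          have s2 := mul_le_mul s1 h1 (by positivity) (by positivity)
          exact mul_le_mul s2 le_rfl (Real.exp_nonneg _) (by positivity)
      _ = C * (((k : ℝ) + 1) ^ r * q ^ k) := by
          rw [hC, hq, mul_pow, div_pow, ← Real.exp_nat_mul]
          linear_combination ((α + β) ^ r * ((k : ℝ) + 1) ^ r * (1 / α) / b ^ k) * he
  have hmaj : Summable (fun k : ℕ => C * (((k : ℝ) + 1) ^ r * q ^ k)) := by
    have hg : Summable (fun n : ℕ => (n : ℝ) ^ r * q ^ n) :=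
      summable_pow_mul_geometric_of_norm_lt_one r
        (by rw [Real.norm_eq_abs, abs_of_pos hq0]; exact hq1)
    have hgs : Summable (fun k : ℕ => ((k + 1 : ℕ) : ℝ) ^ r * q ^ (k + 1)) :=
      hg.comp_injective Nat.succ_injective
    apply Summable.mul_left
    apply (hgs.mul_left q⁻¹).congr
    intro k
    push_cast
    rw [pow_succ]
    field_simp
  exact Summable.of_nonneg_of_le (fun k => by positivity) hbound hmaj

lemma jain_tele (α β : ℝ) (hα : 0 < α) (hβ0 : 0 ≤ β) (n : ℕ) :
    ∑ i ∈ Finset.range (n + 1), β ^ i * (α + β * i) *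
      ((α + β * n) ^ (n - i) / (α + β * n) / (Nat.factorial (n - i)))
    = (α + β * n) ^ n / (Nat.factorial n) := by
  have hx : (0 : ℝ) < α + β * n := by positivity
  have hxne : (α + β * (n : ℝ)) ≠ 0 := hx.ne'
  set x := α + β * (n : ℝ) with hxd
  set v : ℕ → ℝ := fun i => β ^ i * x ^ (n - i) / (Nat.factorial (n - i)) with hv
  have hterm : ∀ i ∈ Finset.range n, β ^ i * (α + β * i) *
      (x ^ (n - i) / x / (Nat.factorial (n - i))) = v i - v (i + 1) := by
    intro i hi
    have hi' : i < n := Finset.mem_range.mp hi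
    obtain ⟨m, hm⟩ : ∃ m, n - i = m + 1 := ⟨n - i - 1, by omega⟩
    have hm2 : n - (i + 1) = m := by omega
    have hni : (n : ℝ) = (i : ℝ) + (m : ℝ) + 1 := by
      have h' : n = i + m + 1 := by omega
      rw [h']; push_cast; ring
    have hα' : α + β * (i : ℝ) = x - β * ((m : ℝ) + 1) := by rw [hxd, hni]; ring
    simp only [hv, hm, hm2]
    rw [Nat.factorial_succ, hα']
    have hfne : ((Nat.factorial m : ℝ)) ≠ 0 := Nat.cast_ne_zero.mpr (Nat.factorial_ne_zero m)
    field_simp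
    push_cast
    ring
  rw [Finset.sum_range_succ, Finset.sum_congr rfl hterm, Finset.sum_range_sub' v]
  have hlast : β ^ n * (α + β * (n : ℝ)) * (x ^ (n - n) / x / (Nat.factorial (n - n))) = v n := by
    simp only [hv, Nat.sub_self, pow_zero, Nat.factorial_zero, Nat.cast_one, ← hxd]
    field_simp
  rw [hlast]
  simp only [hv, Nat.sub_zero, pow_zero, one_mul]
  ring

lemma jain_antidiag (α β : ℝ) (hα : 0 < α) (hβ0 : 0 ≤ β) (s n : ℕ) :
    ∑ p ∈ Finset.HasAntidiagonal.antidiagonal n, β ^ p.1 * (α + β * p.1) *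
      ((α + β * p.1 + β * p.2) ^ (p.2 + s) / (α + β * p.1 + β * p.2) / (Nat.factorial p.2) *
        Real.exp (-(α + β * p.1 + β * p.2)))
    = (α + β * n) ^ (n + s + 1) / (α + β * n) / (Nat.factorial n) * Real.exp (-(α + β * n)) := by
  have hx : (0 : ℝ) < α + β * n := by positivity
  have hxne : (α + β * (n : ℝ)) ≠ 0 := hx.ne'
  rw [Finset.Nat.sum_antidiagonal_eq_sum_range_succ_mk]
  have hcongr : ∀ i ∈ Finset.range (n + 1), β ^ i * (α + β * i) *
      ((α + β * i + β * ((n - i : ℕ) : ℝ)) ^ ((n - i) + s) / (α + β * i + β * ((n - i : ℕ) : ℝ)) /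
        (Nat.factorial (n - i)) * Real.exp (-(α + β * i + β * ((n - i : ℕ) : ℝ))))
      = ((α + β * n) ^ s * Real.exp (-(α + β * n))) *
          (β ^ i * (α + β * i) *
            ((α + β * n) ^ (n - i) / (α + β * n) / (Nat.factorial (n - i)))) := by
    intro i hi
    have hi' : i ≤ n := Nat.lt_succ_iff.mp (Finset.mem_range.mp hi)
    have hab : α + β * i + β * ((n - i : ℕ) : ℝ) = α + β * n := by
      rw [Nat.cast_sub hi']; ring
    rw [hab, pow_add]
    ring
  rw [Finset.sum_congr rfl hcongr, ← Finset.mul_sum, jain_tele α β hα hβ0 n]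
  rw [pow_succ, pow_add]
  field_simp

/-- `S r α β = ∑_{k=0}^∞ (α+βk)^{k+r-1}/k! · e^{-(α+βk)}`, with the exponent `k+r-1`
written as `(α+βk)^{k+r}/(α+βk)`, valid since `α + βk > 0`. -/
noncomputable def jainS (r : ℕ) (α β : ℝ) : ℝ :=
  ∑' k : ℕ, (α + β * k) ^ (k + r) / (α + β * k) / (Nat.factorial k) * Real.exp (-(α + β * k))

lemma jain_hasSum (r : ℕ) (α β : ℝ) (hα : 0 < α) (hβ0 : 0 ≤ β) (hβ1 : β < 1) :
    HasSum (fun k : ℕ => (α + β * k) ^ (k + r) / (α + β * k) / (Nat.factorial k) *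
      Real.exp (-(α + β * k))) (jainS r α β) := by
  rw [jainS]
  exact (jain_summable r α β hα hβ0 hβ1).hasSum

theorem jain_S_recursion (α β : ℝ) (r : ℕ) (hr : 1 ≤ r)
    (hα : 0 < α) (hβ0 : 0 ≤ β) (hβ1 : β < 1) :
    HasSum (fun k : ℕ => β ^ k * (α + β * k) * jainS (r - 1) (α + β * k) β)
      (jainS r α β) := by
  obtain ⟨s, rfl⟩ : ∃ s, r = s + 1 := ⟨r - 1, (Nat.succ_pred_eq_of_pos hr).symm⟩
  set h : ℕ × ℕ → ℝ := fun p => β ^ p.1 * (α + β * p.1) *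
    ((α + β * p.1 + β * p.2) ^ (p.2 + s) / (α + β * p.1 + β * p.2) / (Nat.factorial p.2) *
      Real.exp (-(α + β * p.1 + β * p.2))) with hh
  have hpos : ∀ k : ℕ, (0 : ℝ) < α + β * k := fun k => by positivity
  have hinner : ∀ k : ℕ, HasSum (fun j => h (k, j))
      (β ^ k * (α + β * k) * jainS s (α + β * k) β) :=
    fun k => (jain_hasSum s (α + β * k) β (hpos k) hβ0 hβ1).mul_left _
  have h0 : ∀ p : ℕ × ℕ, 0 ≤ h p := by
    intro p
    simp only [hh]
    positivity
  have hfib : ∀ n : ℕ, ∑ p ∈ Finset.HasAntidiagonal.antidiagonal n, h p =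
      (α + β * n) ^ (n + (s + 1)) / (α + β * n) / (Nat.factorial n) *
        Real.exp (-(α + β * n)) := by
    intro n
    exact jain_antidiag α β hα hβ0 s n
  have hsig : Summable (fun σ : (Σ n : ℕ, Finset.HasAntidiagonal.antidiagonal n) => h σ.2) := by
    apply (summable_sigma_of_nonneg (fun σ => h0 _)).mpr
    constructor
    · intro n
      exact summable_of_finite_support (Set.toFinite _)
    · have hts : ∀ n : ℕ, ∑' (c : Finset.HasAntidiagonal.antidiagonal n), h c =
          ∑ p ∈ Finset.HasAntidiagonal.antidiagonal n, h p := by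
        intro n
        rw [tsum_fintype]
        exact Finset.sum_coe_sort _ _
      simp_rw [hts, hfib]
      exact jain_summable (s + 1) α β hα hβ0 hβ1
  have hsum_h : Summable h :=
    (Finset.HasAntidiagonal.sigmaAntidiagonalEquivProd (A := ℕ)).summable_iff.mp hsig
  have H1 : HasSum (fun σ : (Σ n : ℕ, Finset.HasAntidiagonal.antidiagonal n) => h σ.2) (∑' p, h p) :=
    (Finset.HasAntidiagonal.sigmaAntidiagonalEquivProd (A := ℕ)).hasSum_iff.mpr hsum_h.hasSum
  have H2 : HasSum (fun n : ℕ => ∑ p ∈ Finset.HasAntidiagonal.antidiagonal n, h p) (∑' p, h p) := by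
    refine H1.sigma ?_
    intro n
    have hft := hasSum_fintype (fun c : Finset.HasAntidiagonal.antidiagonal n => h c)
    rwa [Finset.sum_coe_sort] at hft
  simp_rw [hfib] at H2
  have H3 : HasSum (fun n : ℕ => (α + β * n) ^ (n + (s + 1)) / (α + β * n) /
      (Nat.factorial n) * Real.exp (-(α + β * n))) (jainS (s + 1) α β) :=
    jain_hasSum (s + 1) α β hα hβ0 hβ1
  have hval : ∑' p, h p = jainS (s + 1) α β := H2.unique H3
  have final : HasSum (fun k : ℕ => β ^ k * (α + β * k) * jainS s (α + β * k) β)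
      (jainS (s + 1) α β) := (hval ▸ hsum_h.hasSum).prod_fiberwise hinner
  simpa using final
end

section
/- For n ≥ 1, x > 0, and 0 ≤ β < 1, the Jain basis functions sum to one: ∑_{k=0}^∞ L_{n,k}^{(β)}(x) = 1, where L_{n,k}^{(β)}(x) = nx·(nx + kβ)^{k-1}/k! · e^{-(nx+kβ)}. -/
open Filter Finset Real Topology

set_option maxHeartbeats 1000000

namespace JainProof

/-- `abelC x z k = x (x+kz)^{k-1}`, with value 1 at `k = 0`. -/
noncomputable def abelC (x z : ℝ) : ℕ → ℝ
  | 0 => 1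
  | (k+1) => x * (x + (k+1)*z)^k

@[simp] lemma abelC_zero (x z : ℝ) : abelC x z 0 = 1 := rfl
lemma abelC_succ (x z : ℝ) (k : ℕ) : abelC x z (k+1) = x * (x + (k+1)*z)^k := rfl

lemma abelC_nonneg {x z : ℝ} (hx : 0 ≤ x) (hz : 0 ≤ z) (k : ℕ) : 0 ≤ abelC x z k := by
  cases k with
  | zero => norm_num [abelC]
  | succ k => exact mul_nonneg hx (pow_nonneg (by positivity) _)

lemma hasDerivAt_abelC (z : ℝ) (k : ℕ) (t : ℝ) :
    HasDerivAt (fun s => abelC s z k) (k * abelC (t+z) z (k-1)) t := by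
  match k with
  | 0 => simpa [abelC] using hasDerivAt_const t (1:ℝ)
  | 1 =>
    have : (fun s => abelC s z 1) = fun s : ℝ => s := by
      funext s; simp [abelC_succ]
    rw [this]
    simpa [abelC] using hasDerivAt_id' t
  | (j+2) =>
    have h := (hasDerivAt_id t).mul (((hasDerivAt_id t).add_const (((j:ℝ)+2)*z)).pow (j+1))
    have hfun : (fun s => abelC s z (j+2)) = fun s : ℝ => id s * (id s + ((j:ℝ)+2)*z)^(j+1) := by
      funext s; rw [abelC_succ]; simp only [id]; push_cast; ring
    rw [hfun]
    have hval : (((j:ℕ)+2 : ℕ) : ℝ) * abelC (t+z) z ((j+2) - 1)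
        = 1 * (id t + ((j:ℝ)+2)*z)^(j+1) + id t * (((j:ℝ)+1) * (id t + ((j:ℝ)+2)*z)^(j+1-1) * 1) := by
      rw [show (j+2) - 1 = j+1 from rfl, abelC_succ]
      simp only [id, Nat.add_sub_cancel]
      have hb : ((t:ℝ)+z) + (((j:ℕ)+1 : ℕ) : ℝ)*z = t + ((j:ℝ)+2)*z := by push_cast; ring
      push_cast at hb ⊢
      rw [hb, pow_succ]
      ring
    rw [hval]
    exact h.congr_deriv (by simp only [Pi.pow_apply]; push_cast; ring)

theorem abel_identity (z : ℝ) : ∀ (n : ℕ) (x y : ℝ),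
    ∑ k ∈ Finset.range (n+1), (n.choose k : ℝ) * abelC x z k * (y - k*z)^(n-k)
      = (x+y)^n := by
  intro n
  induction n with
  | zero => intro x y; simp
  | succ n IH =>
    intro x y
    set F : ℝ → ℝ := fun t =>
      (∑ k ∈ Finset.range (n+2), ((n+1).choose k : ℝ) * abelC t z k * (y - k*z)^(n+1-k))
        - (t+y)^(n+1) with hF
    have hderiv : ∀ t, HasDerivAt F 0 t := by
      intro t
      have h1 : HasDerivAt (fun t => ∑ k ∈ Finset.range (n+2),
          ((n+1).choose k : ℝ) * abelC t z k * (y - k*z)^(n+1-k))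
          (∑ k ∈ Finset.range (n+2),
          ((n+1).choose k : ℝ) * (k * abelC (t+z) z (k-1)) * (y - k*z)^(n+1-k)) t := by
        apply HasDerivAt.fun_sum
        intro k _
        exact ((hasDerivAt_abelC z k t).const_mul _).mul_const _
      have h2 : HasDerivAt (fun t : ℝ => (t+y)^(n+1))
          ((n+1) * (t+y)^n) t := by
        have := ((hasDerivAt_id t).add_const y).pow (n+1)
        exact this.congr_deriv (by simp)
      have key : (∑ k ∈ Finset.range (n+2),
          ((n+1).choose k : ℝ) * (k * abelC (t+z) z (k-1)) * (y - k*z)^(n+1-k))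
          = (n+1) * (t+y)^n := by
        rw [Finset.sum_range_succ']
        simp only [Nat.cast_zero, zero_mul, mul_zero, add_zero]
        calc ∑ k ∈ Finset.range (n+1),
              ((n+1).choose (k+1) : ℝ) * ((k+1 : ℕ) * abelC (t+z) z (k+1-1)) * (y - (k+1 : ℕ)*z)^(n+1-(k+1))
            = ∑ k ∈ Finset.range (n+1),
              ((n:ℝ)+1) * ((n.choose k : ℝ) * abelC (t+z) z k * ((y-z) - k*z)^(n-k)) := by
              apply Finset.sum_congr rfl
              intro j _
              have hc : (((n+1).choose (j+1) : ℕ) : ℝ) * ((j:ℝ)+1) = ((n:ℝ)+1) * (n.choose j : ℝ) := by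
                have := Nat.add_one_mul_choose_eq n j
                have := congrArg (Nat.cast (R := ℝ)) this.symm
                push_cast at this
                linarith [this]
              simp only [Nat.add_sub_cancel, Nat.succ_sub_succ, Nat.sub_zero]
              push_cast
              linear_combination (abelC (t+z) z j * ((y-z) - (j:ℝ)*z)^(n-j)) * hc
          _ = ((n:ℝ)+1) * (t+y)^n := by
              rw [← Finset.mul_sum, IH (t+z) (y-z)]
              ring_nf
      rw [hF]
      have := h1.sub h2
      rw [key] at this
      exact this.congr_deriv (by ring)
    have hconst : F x = F 0 :=
      is_const_of_deriv_eq_zero (fun t => (hderiv t).differentiableAt)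
        (fun t => (hderiv t).deriv) x 0
    have hF0 : F 0 = 0 := by
      rw [hF]
      simp only
      rw [Finset.sum_range_succ']
      rw [Finset.sum_eq_zero (fun j _ => by simp [abelC_succ])]
      simp
    exact sub_eq_zero.mp (hconst.trans hF0)


lemma tendsto_aux (b c : ℝ) : Tendsto (fun m : ℕ => ((m:ℝ) + b) / ((m:ℝ) + c)) atTop (𝓝 1) := by
  have hm1 : Tendsto (fun m : ℕ => (m:ℝ) + c) atTop atTop :=
    tendsto_atTop_add_const_right _ c tendsto_natCast_atTop_atTop
  have h0 : Tendsto (fun m : ℕ => (b - c) / ((m:ℝ)+c)) atTop (𝓝 0) :=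
    Tendsto.div_atTop tendsto_const_nhds hm1
  have h1 : Tendsto (fun m : ℕ => 1 + (b-c)/((m:ℝ)+c)) atTop (𝓝 1) := by
    simpa using tendsto_const_nhds.add h0
  apply h1.congr'
  filter_upwards [hm1.eventually_gt_atTop 0] with m hm
  field_simp
  ring

lemma tendsto_ratio_pow (a c : ℝ) (k : ℕ) :
    Tendsto (fun m : ℕ => (((m:ℝ) - a)/((m:ℝ) + c))^(m-k)) atTop (𝓝 (Real.exp (-(a+c)))) := by
  have hm1 : Tendsto (fun m : ℕ => (m:ℝ) + c) atTop atTop :=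
    tendsto_atTop_add_const_right _ c tendsto_natCast_atTop_atTop
  have hlog : Tendsto (fun m : ℕ => ((m:ℝ)+c) * Real.log (1 + (-(a+c))/((m:ℝ)+c)))
      atTop (𝓝 (-(a+c))) :=
    (Real.tendsto_mul_log_one_add_div_atTop (-(a+c))).comp hm1
  have hratio : Tendsto (fun m : ℕ => ((m:ℝ) + (-(k:ℝ)))/((m:ℝ)+c)) atTop (𝓝 1) :=
    tendsto_aux _ _
  have hexp : Tendsto (fun m : ℕ =>
      (((m:ℝ)+c) * Real.log (1 + (-(a+c))/((m:ℝ)+c))) * (((m:ℝ) + (-(k:ℝ)))/((m:ℝ)+c)))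
      atTop (𝓝 (-(a+c))) := by
    simpa using hlog.mul hratio
  have hcomp := (Real.continuous_exp.tendsto _).comp hexp
  apply hcomp.congr'
  have hev : ∀ᶠ m : ℕ in atTop, ((m:ℝ) > max (max a (-c)) k) := by
    have := tendsto_natCast_atTop_atTop (R := ℝ)
    exact this.eventually_gt_atTop _
  filter_upwards [hev] with m hm
  have hma : a < (m:ℝ) := lt_of_le_of_lt (le_max_left _ _) (lt_of_le_of_lt (le_max_left _ _) hm)
  have hmc : (0:ℝ) < (m:ℝ) + c := by
    have : -c < (m:ℝ) := lt_of_le_of_lt (le_max_right _ _) (lt_of_le_of_lt (le_max_left _ _) hm)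
    linarith
  have hmk : (k:ℝ) < m := lt_of_le_of_lt (le_max_right _ _) hm
  have hmkn : k ≤ m := by exact_mod_cast hmk.le
  have hbase : (0:ℝ) < ((m:ℝ) - a)/((m:ℝ)+c) := by
    apply div_pos <;> linarith
  have heq1 : 1 + (-(a+c))/((m:ℝ)+c) = ((m:ℝ) - a)/((m:ℝ)+c) := by
    field_simp
    ring
  have heq2 : ((m:ℝ) + (-(k:ℝ))) = ((m - k : ℕ) : ℝ) := by
    push_cast [Nat.cast_sub hmkn]
    ring
  simp only [Function.comp]
  rw [heq1, heq2]
  have harr : ((m:ℝ)+c) * Real.log (((m:ℝ) - a)/((m:ℝ)+c)) * (((m-k:ℕ):ℝ)/((m:ℝ)+c))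
      = ((m-k:ℕ):ℝ) * Real.log (((m:ℝ) - a)/((m:ℝ)+c)) := by
    field_simp
  rw [harr, Real.exp_nat_mul, Real.exp_log hbase]

lemma tendsto_choose_div_pow (k : ℕ) :
    Tendsto (fun m : ℕ => (m.choose k : ℝ) / (m:ℝ)^k) atTop (𝓝 (1 / k.factorial)) := by
  have hprod : Tendsto (fun m : ℕ => ∏ i ∈ Finset.range k, (((m:ℝ) - i) / (m:ℝ)))
      atTop (𝓝 (∏ _i ∈ Finset.range k, (1:ℝ))) := by
    apply tendsto_finset_prod
    intro i _
    have := tendsto_aux (-(i:ℝ)) 0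
    simp only [add_zero] at this
    apply this.congr
    intro m
    ring_nf
  simp only [Finset.prod_const_one] at hprod
  have h2 : Tendsto (fun m : ℕ => (∏ i ∈ Finset.range k, (((m:ℝ) - i) / (m:ℝ))) * (1/(k.factorial:ℝ)))
      atTop (𝓝 (1 * (1/(k.factorial:ℝ)))) := hprod.mul_const _
  simp only [one_mul] at h2
  apply h2.congr'
  filter_upwards [(tendsto_natCast_atTop_atTop (R := ℝ)).eventually_gt_atTop (k:ℝ)] with m hm
  have hkm : k ≤ m := by exact_mod_cast hm.le
  have hm0 : (0:ℝ) < m := lt_of_le_of_lt (Nat.cast_nonneg k) hm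
  have hdesc : (m.descFactorial k : ℝ) = ∏ i ∈ Finset.range k, ((m:ℝ) - i) := by
    rw [Nat.descFactorial_eq_prod_range]
    push_cast
    apply Finset.prod_congr rfl
    intro i hi
    have : i ≤ m := le_trans (Finset.mem_range.mp hi).le hkm
    rw [Nat.cast_sub this]
  have hchoose : (m.choose k : ℝ) = (m.descFactorial k : ℝ) / (k.factorial : ℝ) := by
    have := Nat.descFactorial_eq_factorial_mul_choose m k
    have h := congrArg (Nat.cast (R := ℝ)) this
    push_cast at h
    rw [h]
    field_simp
  rw [Finset.prod_div_distrib, Finset.prod_const, Finset.card_range, ← hdesc, hchoose]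
  field_simp


noncomputable def Tm (α β : ℝ) (m k : ℕ) : ℝ :=
  (m.choose k : ℝ) * abelC α β k * ((m:ℝ) - k*β)^(m-k) / (α + m)^m

lemma sum_Tm (α β : ℝ) (hα : 0 < α) (m : ℕ) :
    ∑ k ∈ Finset.range (m+1), Tm α β m k = 1 := by
  have hd : (0:ℝ) < (α + m)^m := by positivity
  simp only [Tm]
  rw [← Finset.sum_div, abel_identity β m α (m:ℝ), div_self (ne_of_gt hd)]

lemma Tm_nonneg {α β : ℝ} (hα : 0 < α) (hβ0 : 0 ≤ β) (hβ1 : β ≤ 1) (m k : ℕ) :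
    0 ≤ Tm α β m k := by
  rcases le_or_gt k m with hkm | hkm
  · have h1 : (0:ℝ) ≤ (m:ℝ) - k*β := by
      have h2 : (k:ℝ)*β ≤ (k:ℝ) := by nlinarith [Nat.cast_nonneg (α := ℝ) k]
      have h3 : (k:ℝ) ≤ m := by exact_mod_cast hkm
      linarith
    have := abelC_nonneg hα.le hβ0 k
    have hd : (0:ℝ) < (α + m)^m := by positivity
    apply div_nonneg _ hd.le
    positivity
  · simp [Tm, Nat.choose_eq_zero_of_lt hkm]

lemma Tm_zero {α β : ℝ} (m k : ℕ) (hkm : m < k) : Tm α β m k = 0 := by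
  simp [Tm, Nat.choose_eq_zero_of_lt hkm]

lemma sum_Tm_le_one {α β : ℝ} (hα : 0 < α) (hβ0 : 0 ≤ β) (hβ1 : β ≤ 1) (m K : ℕ) :
    ∑ k ∈ Finset.range K, Tm α β m k ≤ 1 := by
  rcases le_or_gt K (m+1) with h | h
  · calc ∑ k ∈ Finset.range K, Tm α β m k
        ≤ ∑ k ∈ Finset.range (m+1), Tm α β m k := by
          apply Finset.sum_le_sum_of_subset_of_nonneg (Finset.range_subset_range.mpr h)
          intro k _ _
          exact Tm_nonneg hα hβ0 hβ1 m k
      _ = 1 := sum_Tm α β hα m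
  · rw [← Finset.sum_range_add_sum_Ico _ (le_of_lt h)]
    rw [sum_Tm α β hα m]
    have : ∑ k ∈ Finset.Ico (m+1) K, Tm α β m k = 0 := by
      apply Finset.sum_eq_zero
      intro k hk
      exact Tm_zero m k (Finset.mem_Ico.mp hk).1
    rw [this, add_zero]

lemma tendsto_Tm {α β : ℝ} (hα : 0 < α) (k : ℕ) :
    Tendsto (fun m : ℕ => Tm α β m k) atTop
      (𝓝 (abelC α β k * Real.exp (-(α + k*β)) / (k.factorial : ℝ))) := by
  have h1 := tendsto_choose_div_pow k
  have h2 : Tendsto (fun m : ℕ => (((m:ℝ) + 0)/((m:ℝ) + α))^k) atTop (𝓝 1) := by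
    simpa using (tendsto_aux 0 α).pow k
  have h3 := tendsto_ratio_pow ((k:ℝ)*β) α k
  have h4 : Tendsto (fun m : ℕ =>
      abelC α β k * ((m.choose k : ℝ)/(m:ℝ)^k) * (((m:ℝ) + 0)/((m:ℝ) + α))^k
        * ((((m:ℝ) - k*β)/((m:ℝ) + α))^(m-k)))
      atTop (𝓝 (abelC α β k * (1/(k.factorial:ℝ)) * 1 * Real.exp (-((k:ℝ)*β + α)))) :=
    ((((tendsto_const_nhds (x := abelC α β k)).mul h1).mul h2).mul h3)
  have heq : abelC α β k * (1/(k.factorial:ℝ)) * 1 * Real.exp (-((k:ℝ)*β + α))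
      = abelC α β k * Real.exp (-(α + k*β)) / (k.factorial : ℝ) := by
    rw [show -((k:ℝ)*β + α) = -(α + k*β) by ring]
    ring
  rw [heq] at h4
  apply h4.congr'
  filter_upwards [(tendsto_natCast_atTop_atTop (R := ℝ)).eventually_gt_atTop ((k:ℝ)),
    eventually_gt_atTop 0] with m hm hm0
  have hkm : k ≤ m := by exact_mod_cast hm.le
  have hm0' : (0:ℝ) < m := by exact_mod_cast hm0
  have hma : (0:ℝ) < (m:ℝ) + α := by linarith
  have hsplit : ((m:ℝ) + α)^m = ((m:ℝ)+α)^k * ((m:ℝ)+α)^(m-k) := by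
    rw [← pow_add, Nat.add_sub_cancel' hkm]
  simp only [Tm, add_zero]
  rw [div_pow, div_pow, show α + (m:ℝ) = (m:ℝ) + α by ring, hsplit]
  field_simp

lemma aux_div {x y c D Q : ℝ} (n : ℕ) (hD : 0 < D) (hQ : 0 < Q) (h : x * Q^n ≤ c * y) :
    x / D ≤ c * (1/Q)^n * (y / D) := by
  have hQn : 0 < Q^n := pow_pos hQ n
  have h2 : x ≤ c * y / Q^n := (le_div_iff₀ hQn).mpr h
  rw [div_le_iff₀ hD]
  have h3 : c * (1/Q)^n * (y/D) * D = c*y/Q^n := by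
    rw [div_pow, one_pow]
    field_simp
  rw [h3]
  exact h2

lemma key_ineq {α β b δ : ℝ} (hα : 0 < α) (hβ0 : 0 ≤ β) (hb : β < b)
    (hδ : 0 < δ) (hδ1 : δ < 1) (hβ'1 : β + δ < 1) {k m : ℕ}
    (h1k : 1 ≤ k) (hk : α ≤ (k:ℝ) * (b - β)) (hkm : k ≤ m) :
    Tm α β m k ≤ (1 + δ/b) * (1/((1-δ)*(1+δ/b)))^k * Tm α (β+δ) m k := by
  have hb0 : 0 < b := lt_of_le_of_lt hβ0 hb
  obtain ⟨j, rfl⟩ : ∃ j, k = j + 1 := ⟨k - 1, (Nat.succ_pred_eq_of_pos h1k).symm⟩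
  push_cast at hk
  have hK1 : (1:ℝ) ≤ (j:ℝ)+1 := by
    have := Nat.cast_nonneg (α := ℝ) j; linarith
  have hKm : (j:ℝ)+1 ≤ (m:ℝ) := by exact_mod_cast hkm
  have hm1 : (1:ℝ) ≤ m := le_trans hK1 hKm
  have hβ'0 : (0:ℝ) ≤ β + δ := by positivity
  have hD : (0:ℝ) < (α + (m:ℝ))^m := by positivity
  have hQ : (0:ℝ) < (1-δ)*(1+δ/b) := mul_pos (by linarith) (by positivity)
  have hQk : (0:ℝ) < ((1-δ)*(1+δ/b))^(j+1) := pow_pos hQ _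
  have hAKβ : (0:ℝ) < α + ((j:ℝ)+1)*β := by nlinarith
  have hAKβ' : (0:ℝ) < α + ((j:ℝ)+1)*(β+δ) := by nlinarith
  have hBpos : (0:ℝ) < (m:ℝ) - ((j:ℝ)+1)*(β+δ) := by nlinarith
  have hBpos0 : (0:ℝ) ≤ (m:ℝ) - ((j:ℝ)+1)*β := by nlinarith
  -- step A
  have h1 : (α + ((j:ℝ)+1)*β)*(1+δ/b) ≤ α + ((j:ℝ)+1)*(β+δ) := by
    have h2 : α + ((j:ℝ)+1)*β ≤ ((j:ℝ)+1)*b := by nlinarith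
    have h3 : (α + ((j:ℝ)+1)*β)*(δ/b) ≤ ((j:ℝ)+1)*b*(δ/b) :=
      mul_le_mul_of_nonneg_right h2 (by positivity)
    have h4 : ((j:ℝ)+1)*b*(δ/b) = ((j:ℝ)+1)*δ := by field_simp
    nlinarith
  have hA : ((α + ((j:ℝ)+1)*β)*(1+δ/b))^j ≤ (α + ((j:ℝ)+1)*(β+δ))^j :=
    pow_le_pow_left₀ (by positivity) h1 j
  -- step B
  have hsplit : (m:ℝ) - ((j:ℝ)+1)*β
      = ((m:ℝ) - ((j:ℝ)+1)*(β+δ))*(1+((j:ℝ)+1)*δ/((m:ℝ) - ((j:ℝ)+1)*(β+δ))) := by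
    field_simp
    ring
  have hcast : ((m - (j+1) : ℕ) : ℝ) = (m:ℝ) - ((j:ℝ)+1) := by
    rw [Nat.cast_sub hkm]; push_cast; ring
  have hexp1 : (1+((j:ℝ)+1)*δ/((m:ℝ) - ((j:ℝ)+1)*(β+δ)))^(m-(j+1))
      ≤ Real.exp (((j:ℝ)+1)*δ) := by
    have h1u : (1:ℝ)+((j:ℝ)+1)*δ/((m:ℝ) - ((j:ℝ)+1)*(β+δ))
        ≤ Real.exp (((j:ℝ)+1)*δ/((m:ℝ) - ((j:ℝ)+1)*(β+δ))) := by
      linarith [Real.add_one_le_exp (((j:ℝ)+1)*δ/((m:ℝ) - ((j:ℝ)+1)*(β+δ)))]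
    calc (1+((j:ℝ)+1)*δ/((m:ℝ) - ((j:ℝ)+1)*(β+δ)))^(m-(j+1))
        ≤ (Real.exp (((j:ℝ)+1)*δ/((m:ℝ) - ((j:ℝ)+1)*(β+δ))))^(m-(j+1)) := by
          apply pow_le_pow_left₀ _ h1u
          have h0u : (0:ℝ) ≤ ((j:ℝ)+1)*δ/((m:ℝ) - ((j:ℝ)+1)*(β+δ)) :=
            div_nonneg (by positivity) hBpos.le
          linarith
      _ = Real.exp (((m - (j+1) : ℕ):ℝ) * (((j:ℝ)+1)*δ/((m:ℝ) - ((j:ℝ)+1)*(β+δ)))) := by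
          rw [Real.exp_nat_mul]
      _ ≤ Real.exp (((j:ℝ)+1)*δ) := by
          apply Real.exp_le_exp.mpr
          rw [hcast]
          have hle : (m:ℝ) - ((j:ℝ)+1) ≤ (m:ℝ) - ((j:ℝ)+1)*(β+δ) := by nlinarith
          calc ((m:ℝ) - ((j:ℝ)+1)) * (((j:ℝ)+1)*δ/((m:ℝ) - ((j:ℝ)+1)*(β+δ)))
              ≤ ((m:ℝ) - ((j:ℝ)+1)*(β+δ)) * (((j:ℝ)+1)*δ/((m:ℝ) - ((j:ℝ)+1)*(β+δ))) :=
                mul_le_mul_of_nonneg_right hle (by positivity)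
            _ = ((j:ℝ)+1)*δ := by field_simp
  have hexp2 : Real.exp (((j:ℝ)+1)*δ) * (1-δ)^(j+1) ≤ 1 := by
    have h5 : 1 - δ ≤ Real.exp (-δ) := by linarith [Real.add_one_le_exp (-δ)]
    have h6 : Real.exp (-δ) * Real.exp δ = 1 := by rw [← Real.exp_add]; simp
    have hbase : Real.exp δ * (1-δ) ≤ 1 := by
      have h9 := mul_le_mul_of_nonneg_right h5 (Real.exp_pos δ).le
      rw [h6] at h9
      nlinarith [Real.exp_pos δ]
    have h7 : Real.exp (((j:ℝ)+1)*δ) = (Real.exp δ)^(j+1) := by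
      rw [show ((j:ℝ)+1) = ((j+1:ℕ):ℝ) by push_cast; ring, Real.exp_nat_mul]
    rw [h7, ← mul_pow]
    calc (Real.exp δ * (1-δ))^(j+1) ≤ 1^(j+1) :=
          pow_le_pow_left₀ (mul_nonneg (Real.exp_pos δ).le (by linarith)) hbase _
      _ = 1 := one_pow _
  have hB : ((m:ℝ) - ((j:ℝ)+1)*β)^(m-(j+1)) * (1-δ)^(j+1)
      ≤ ((m:ℝ) - ((j:ℝ)+1)*(β+δ))^(m-(j+1)) := by
    rw [hsplit, mul_pow]
    calc ((m:ℝ) - ((j:ℝ)+1)*(β+δ))^(m-(j+1))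
            * (1+((j:ℝ)+1)*δ/((m:ℝ) - ((j:ℝ)+1)*(β+δ)))^(m-(j+1)) * (1-δ)^(j+1)
        ≤ ((m:ℝ) - ((j:ℝ)+1)*(β+δ))^(m-(j+1)) * Real.exp (((j:ℝ)+1)*δ) * (1-δ)^(j+1) := by
          apply mul_le_mul_of_nonneg_right _ (pow_nonneg (by linarith) _)
          exact mul_le_mul_of_nonneg_left hexp1 (pow_nonneg hBpos.le _)
      _ = ((m:ℝ) - ((j:ℝ)+1)*(β+δ))^(m-(j+1)) * (Real.exp (((j:ℝ)+1)*δ) * (1-δ)^(j+1)) := by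
          ring
      _ ≤ ((m:ℝ) - ((j:ℝ)+1)*(β+δ))^(m-(j+1)) * 1 :=
          mul_le_mul_of_nonneg_left hexp2 (pow_nonneg hBpos.le _)
      _ = ((m:ℝ) - ((j:ℝ)+1)*(β+δ))^(m-(j+1)) := mul_one _
  -- assemble numerator inequality
  have habn : abelC α β (j+1) = α * (α + ((j:ℝ)+1)*β)^j := by
    norm_num [abelC_succ]
  have habn' : abelC α (β+δ) (j+1) = α * (α + ((j:ℝ)+1)*(β+δ))^j := by
    norm_num [abelC_succ]
  have hcore : (m.choose (j+1) : ℝ) * abelC α β (j+1) * ((m:ℝ) - ((j:ℝ)+1)*β)^(m-(j+1))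
        * ((1-δ)*(1+δ/b))^(j+1)
      ≤ (1+δ/b) * ((m.choose (j+1) : ℝ) * abelC α (β+δ) (j+1)
        * ((m:ℝ) - ((j:ℝ)+1)*(β+δ))^(m-(j+1))) := by
    rw [habn, habn']
    have hE : (m.choose (j+1) : ℝ) * (α * (α + ((j:ℝ)+1)*β)^j)
          * ((m:ℝ) - ((j:ℝ)+1)*β)^(m-(j+1)) * ((1-δ)*(1+δ/b))^(j+1)
        = ((m.choose (j+1) : ℝ) * α * (1+δ/b)) *
            ((((α + ((j:ℝ)+1)*β)*(1+δ/b))^j)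
              * (((m:ℝ) - ((j:ℝ)+1)*β)^(m-(j+1)) * (1-δ)^(j+1))) := by
      rw [mul_pow, mul_pow]
      ring
    rw [hE]
    have hstep : (((α + ((j:ℝ)+1)*β)*(1+δ/b))^j)
          * (((m:ℝ) - ((j:ℝ)+1)*β)^(m-(j+1)) * (1-δ)^(j+1))
        ≤ (α + ((j:ℝ)+1)*(β+δ))^j * ((m:ℝ) - ((j:ℝ)+1)*(β+δ))^(m-(j+1)) := by
      apply mul_le_mul hA hB
      · exact mul_nonneg (pow_nonneg hBpos0 _) (pow_nonneg (by linarith) _)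
      · exact pow_nonneg hAKβ'.le _
    calc ((m.choose (j+1) : ℝ) * α * (1+δ/b)) *
            ((((α + ((j:ℝ)+1)*β)*(1+δ/b))^j)
              * (((m:ℝ) - ((j:ℝ)+1)*β)^(m-(j+1)) * (1-δ)^(j+1)))
        ≤ ((m.choose (j+1) : ℝ) * α * (1+δ/b)) *
            ((α + ((j:ℝ)+1)*(β+δ))^j * ((m:ℝ) - ((j:ℝ)+1)*(β+δ))^(m-(j+1))) := by
          apply mul_le_mul_of_nonneg_left hstep (by positivity)
      _ = (1+δ/b) * ((m.choose (j+1) : ℝ) * (α * (α + ((j:ℝ)+1)*(β+δ))^j)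
            * ((m:ℝ) - ((j:ℝ)+1)*(β+δ))^(m-(j+1))) := by
          ring
  -- conclude
  simp only [Tm]
  rw [show ((j+1:ℕ):ℝ) = (j:ℝ)+1 from by push_cast; ring]
  exact aux_div (j+1) hD hQ hcore

lemma tail_bound {α β b δ : ℝ} (hα : 0 < α) (hβ0 : 0 ≤ β) (hb : β < b)
    (hδ : 0 < δ) (hδ1 : δ < 1) (hβ'1 : β + δ < 1)
    (hρ1 : 1/((1-δ)*(1+δ/b)) ≤ 1)
    (K m : ℕ) (hKα : α ≤ ((K:ℝ)+1) * (b-β)) (hbβ : 0 < b - β) :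
    1 - ∑ k ∈ Finset.range (K+1), Tm α β m k
      ≤ (1 + δ/b) * (1/((1-δ)*(1+δ/b)))^(K+1) := by
  have hb0 : 0 < b := lt_of_le_of_lt hβ0 hb
  have hQ : (0:ℝ) < (1-δ)*(1+δ/b) := mul_pos (by linarith) (by positivity)
  have hρ0 : (0:ℝ) ≤ 1/((1-δ)*(1+δ/b)) := by positivity
  rcases le_or_gt (K+1) (m+1) with hVm | hVm
  · -- K ≤ m
    have hsplit := Finset.sum_range_add_sum_Ico (fun k => Tm α β m k) hVm
    have hfull : ∑ k ∈ Finset.range (m+1), Tm α β m k = 1 := sum_Tm α β hα m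
    have h1 : 1 - ∑ k ∈ Finset.range (K+1), Tm α β m k
        = ∑ k ∈ Finset.Ico (K+1) (m+1), Tm α β m k := by
      rw [← hfull, ← hsplit]; ring
    rw [h1]
    have hterm : ∀ k ∈ Finset.Ico (K+1) (m+1),
        Tm α β m k ≤ ((1 + δ/b) * (1/((1-δ)*(1+δ/b)))^(K+1)) * Tm α (β+δ) m k := by
      intro k hk
      obtain ⟨hk1, hk2⟩ := Finset.mem_Ico.mp hk
      have hk2' : k ≤ m := Nat.lt_succ_iff.mp hk2
      have hk1' : 1 ≤ k := le_trans (Nat.succ_le_succ (Nat.zero_le K)) hk1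
      have hkα : α ≤ (k:ℝ) * (b - β) := by
        calc α ≤ ((K:ℝ)+1) * (b-β) := hKα
          _ ≤ (k:ℝ) * (b-β) := by
              apply mul_le_mul_of_nonneg_right _ hbβ.le
              exact_mod_cast hk1
      calc Tm α β m k ≤ (1 + δ/b) * (1/((1-δ)*(1+δ/b)))^k * Tm α (β+δ) m k :=
            key_ineq hα hβ0 hb hδ hδ1 hβ'1 hk1' hkα hk2'
        _ ≤ ((1 + δ/b) * (1/((1-δ)*(1+δ/b)))^(K+1)) * Tm α (β+δ) m k := by
            apply mul_le_mul_of_nonneg_right _ (Tm_nonneg hα (by linarith) (by linarith) m k)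
            apply mul_le_mul_of_nonneg_left _ (by positivity)
            exact pow_le_pow_of_le_one hρ0 hρ1 hk1
    calc ∑ k ∈ Finset.Ico (K+1) (m+1), Tm α β m k
        ≤ ∑ k ∈ Finset.Ico (K+1) (m+1),
            ((1 + δ/b) * (1/((1-δ)*(1+δ/b)))^(K+1)) * Tm α (β+δ) m k :=
          Finset.sum_le_sum hterm
      _ = ((1 + δ/b) * (1/((1-δ)*(1+δ/b)))^(K+1))
            * ∑ k ∈ Finset.Ico (K+1) (m+1), Tm α (β+δ) m k := by
          rw [Finset.mul_sum]
      _ ≤ ((1 + δ/b) * (1/((1-δ)*(1+δ/b)))^(K+1)) * 1 := by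
          apply mul_le_mul_of_nonneg_left _ (by positivity)
          calc ∑ k ∈ Finset.Ico (K+1) (m+1), Tm α (β+δ) m k
              ≤ ∑ k ∈ Finset.range (m+1), Tm α (β+δ) m k := by
                apply Finset.sum_le_sum_of_subset_of_nonneg
                · intro k hk
                  exact Finset.mem_range.mpr (Finset.mem_Ico.mp hk).2
                · intro k _ _
                  exact Tm_nonneg hα (by linarith) (by linarith) m k
            _ = 1 := sum_Tm α (β+δ) hα m
      _ = (1 + δ/b) * (1/((1-δ)*(1+δ/b)))^(K+1) := mul_one _
  · -- m < K : partial sum is already 1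
    have h2 : ∑ k ∈ Finset.range (K+1), Tm α β m k = 1 := by
      have hsplit := Finset.sum_range_add_sum_Ico (fun k => Tm α β m k) hVm.le
      have hzero : ∑ k ∈ Finset.Ico (m+1) (K+1), Tm α β m k = 0 := by
        apply Finset.sum_eq_zero
        intro k hk
        exact Tm_zero m k (Finset.mem_Ico.mp hk).1
      rw [← hsplit, hzero, sum_Tm α β hα m, add_zero]
    rw [h2]
    simp only [sub_self]
    positivity

theorem hasSum_abel {α β : ℝ} (hα : 0 < α) (hβ0 : 0 ≤ β) (hβ1 : β < 1) :
    HasSum (fun k : ℕ => abelC α β k * Real.exp (-(α + k*β)) / (k.factorial : ℝ)) 1 := by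
  set p : ℕ → ℝ := fun k => abelC α β k * Real.exp (-(α + k*β)) / (k.factorial : ℝ) with hp
  have hp_nonneg : ∀ k, 0 ≤ p k := by
    intro k
    apply div_nonneg (mul_nonneg (abelC_nonneg hα.le hβ0 k) (Real.exp_pos _).le)
    positivity
  have hlim : ∀ K : ℕ, Tendsto (fun m : ℕ => ∑ k ∈ Finset.range K, Tm α β m k) atTop
      (𝓝 (∑ k ∈ Finset.range K, p k)) := by
    intro K
    exact tendsto_finset_sum _ (fun k _ => tendsto_Tm hα k)
  have hle1 : ∀ K : ℕ, ∑ k ∈ Finset.range K, p k ≤ 1 := by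
    intro K
    apply le_of_tendsto (hlim K)
    filter_upwards with m
    exact sum_Tm_le_one hα hβ0 hβ1.le m K
  have hsummable : Summable p := summable_of_sum_range_le hp_nonneg hle1
  -- parameters
  set b : ℝ := (1+β)/2 with hbdef
  set δ : ℝ := (1-β)/4 with hδdef
  have hb : β < b := by rw [hbdef]; linarith
  have hb0 : 0 < b := lt_of_le_of_lt hβ0 hb
  have hδ : 0 < δ := by rw [hδdef]; linarith
  have hδ1 : δ < 1 := by rw [hδdef]; linarith
  have hβ'1 : β + δ < 1 := by rw [hδdef]; linarith
  have hbβ : 0 < b - β := by linarith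
  have hQgt : (1:ℝ) < (1-δ)*(1+δ/b) := by
    have h1 : (1-δ)*(1+δ/b) = 1 + δ*(1-b-δ)/b := by field_simp; ring
    have h2 : 1 - b - δ = δ := by rw [hbdef, hδdef]; ring
    rw [h1, h2]
    have h3 : 0 < δ*δ/b := by positivity
    linarith
  have hQ : (0:ℝ) < (1-δ)*(1+δ/b) := by linarith
  have hρ0 : (0:ℝ) ≤ 1/((1-δ)*(1+δ/b)) := by positivity
  have hρ1 : 1/((1-δ)*(1+δ/b)) ≤ 1 := by
    rw [div_le_one hQ]; linarith
  have hρlt : 1/((1-δ)*(1+δ/b)) < 1 := by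
    rw [div_lt_one hQ]; exact hQgt
  -- the threshold index
  set K₀ : ℕ := ⌈α/(b-β)⌉₊ with hK₀def
  have hKα : ∀ K : ℕ, K₀ ≤ K → α ≤ ((K:ℝ)+1) * (b-β) := by
    intro K hK
    have h1 : α/(b-β) ≤ (K₀:ℝ) := Nat.le_ceil _
    have h2 : (K₀:ℝ) ≤ (K:ℝ) := by exact_mod_cast hK
    rw [div_le_iff₀ hbβ] at h1
    nlinarith
  have hlow : ∀ K : ℕ, K₀ ≤ K →
      1 - (1+δ/b)*(1/((1-δ)*(1+δ/b)))^(K+1) ≤ ∑ k ∈ Finset.range (K+1), p k := by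
    intro K hK
    apply ge_of_tendsto (hlim (K+1))
    filter_upwards with m
    have := tail_bound hα hβ0 hb hδ hδ1 hβ'1 hρ1 K m (hKα K hK) hbβ
    linarith
  have htsum_le : ∑' k, p k ≤ 1 :=
    le_of_tendsto hsummable.hasSum.tendsto_sum_nat (Eventually.of_forall hle1)
  have htsum_ge : 1 ≤ ∑' k, p k := by
    have h0 : Tendsto (fun K : ℕ => (1/((1-δ)*(1+δ/b)))^K) atTop (𝓝 0) :=
      tendsto_pow_atTop_nhds_zero_of_lt_one hρ0 hρlt
    have hρlim : Tendsto (fun K : ℕ => 1 - (1+δ/b)*(1/((1-δ)*(1+δ/b)))^(K+1)) atTop (𝓝 1) := by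
      have h1 : Tendsto (fun K : ℕ => (1+δ/b)*((1/((1-δ)*(1+δ/b)))^K * (1/((1-δ)*(1+δ/b)))))
          atTop (𝓝 0) := by
        have := (h0.mul_const (1/((1-δ)*(1+δ/b)))).const_mul (1+δ/b)
        simpa using this
      have h2 := tendsto_const_nhds (x := (1:ℝ)) (f := atTop (α := ℕ)) |>.sub h1
      simp only [sub_zero] at h2
      apply h2.congr
      intro K
      rw [pow_succ]
    apply le_of_tendsto hρlim
    filter_upwards [eventually_ge_atTop K₀] with K hK
    calc 1 - (1+δ/b)*(1/((1-δ)*(1+δ/b)))^(K+1) ≤ ∑ k ∈ Finset.range (K+1), p k := hlow K hK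
      _ ≤ ∑' k, p k := Summable.sum_le_tsum _ (fun i _ => hp_nonneg i) hsummable
  have : ∑' k, p k = 1 := le_antisymm htsum_le htsum_ge
  exact this ▸ hsummable.hasSum

end JainProof

/-- The Jain basis functions `L_{n,k}^{(β)}(x) = nx(nx+kβ)^{k-1}/k! · e^{-(nx+kβ)}`,
with the exponent `k-1` written as `(nx+kβ)^k/(nx+kβ)`, so the `k = 0` term is `e^{-nx}`. -/
noncomputable def jainL (n : ℕ) (β x : ℝ) (k : ℕ) : ℝ :=
  n * x * ((n * x + k * β) ^ (k : ℕ) / (n * x + k * β)) / (Nat.factorial k) *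
    Real.exp (-(n * x + k * β))

theorem jain_partition_of_unity (n : ℕ) (hn : 1 ≤ n) (x β : ℝ)
    (hx : 0 < x) (hβ0 : 0 ≤ β) (hβ1 : β < 1) :
    HasSum (fun k : ℕ => jainL n β x k) 1 := by
  have hn1 : (1:ℝ) ≤ (n:ℝ) := by exact_mod_cast hn
  have hα : 0 < (n:ℝ) * x := by nlinarith
  have h := JainProof.hasSum_abel hα hβ0 hβ1
  have heq : (fun k : ℕ => jainL n β x k)
      = fun k : ℕ => JainProof.abelC ((n:ℝ)*x) β k
          * Real.exp (-((n:ℝ)*x + k*β)) / (k.factorial : ℝ) := by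
    funext k
    cases k with
    | zero =>
      simp only [jainL, JainProof.abelC_zero, Nat.cast_zero, zero_mul, add_zero,
        pow_zero, Nat.factorial_zero, Nat.cast_one, one_mul]
      rw [one_div ((n:ℝ)*x), mul_inv_cancel₀ (ne_of_gt hα)]
      ring
    | succ j =>
      have hA : (0:ℝ) < (n:ℝ)*x + ((j+1:ℕ):ℝ)*β := by positivity
      simp only [jainL, JainProof.abelC_succ]
      rw [pow_succ, mul_div_cancel_right₀ _ (ne_of_gt hA)]
      push_cast
      ring
  rw [heq]
  exact h
end

section
/- For n ≥ 1, x > 0, and 0 ≤ β < 1, the first Jain moment satisfies ∑_{k=0}^∞ (k/n)·L_{n,k}^{(β)}(x) = x/(1-β). -/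
open Finset

namespace JainAux

/-- `aP z y m = (y + m z)^m` -/
noncomputable def aP (z y : ℝ) (m : ℕ) : ℝ := (y + m * z) ^ m

/-- `bP z x 0 = 1`, `bP z x k = x (x + k z)^(k-1)` -/
noncomputable def bP (z x : ℝ) : ℕ → ℝ
  | 0 => 1
  | (k+1) => x * (x + (k+1) * z) ^ k

lemma alt_sum_pow : ∀ n : ℕ, ∀ j : ℕ, j < n →
    ∑ k ∈ range (n+1), (-1:ℝ)^k * (n.choose k : ℝ) * (k:ℝ)^j = 0 := by
  intro n
  induction n using Nat.strong_induction_on with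
  | _ n ih =>
    intro j hj
    match j with
    | 0 =>
      have h := Int.alternating_sum_range_choose_of_ne (n := n) (by omega)
      have h' : ((∑ i ∈ range (n + 1), (-1:ℤ) ^ i * (n.choose i) : ℤ) : ℝ) = 0 := by
        rw [h]; norm_num
      push_cast at h'
      simpa using h'
    | (j+1) =>
      obtain ⟨m, rfl⟩ : ∃ m, n = m + 1 := ⟨n-1, by omega⟩
      rw [Finset.sum_range_succ']
      have h0 : (-1:ℝ)^0 * ((m+1).choose 0 : ℝ) * ((0:ℕ):ℝ)^(j+1) = 0 := by simp
      rw [h0, add_zero]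
      have key : ∀ i ∈ range (m+1),
          (-1:ℝ)^(i+1) * ((m+1).choose (i+1) : ℝ) * ((i+1:ℕ):ℝ)^(j+1)
          = -((m+1:ℝ)) * ∑ t ∈ range (j+1), ((-1:ℝ)^i * (m.choose i : ℝ) * (i:ℝ)^t) * ((j.choose t : ℝ)) := by
        intro i _
        have hch : ((m+1).choose (i+1) : ℝ) * ((i:ℝ)+1) = ((m:ℝ)+1) * (m.choose i : ℝ) := by
          have h := Nat.add_one_mul_choose_eq m i
          have h2 : ((Nat.succ m * m.choose i : ℕ) : ℝ) = (((m+1).choose (i+1) * (i+1) : ℕ) : ℝ) := by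
            exact_mod_cast congrArg Nat.cast h
          push_cast at h2
          linarith
        have hexp : ((i+1:ℕ):ℝ)^(j+1) = ((i+1:ℕ):ℝ) * (((i:ℝ)+1))^j := by
          push_cast; ring
        have hbin : ((i:ℝ)+1)^j = ∑ t ∈ range (j+1), (i:ℝ)^t * (j.choose t : ℝ) := by
          have := add_pow (i:ℝ) 1 j
          simp only [one_pow, mul_one] at this
          rw [this]
        rw [hexp, hbin]
        rw [Finset.mul_sum, Finset.mul_sum]
        rw [Finset.mul_sum]
        apply Finset.sum_congr rfl
        intro t _
        have : (-1:ℝ)^(i+1) = -(-1:ℝ)^i := by ring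
        rw [this]
        push_cast at hch ⊢
        linear_combination (-(-1:ℝ)^i * (i:ℝ)^t * (j.choose t : ℝ)) * hch
      rw [Finset.sum_congr rfl key]
      rw [← Finset.mul_sum, Finset.sum_comm]
      have inner0 : ∀ t ∈ range (j+1),
          ∑ i ∈ range (m+1), ((-1:ℝ)^i * (m.choose i : ℝ) * (i:ℝ)^t) * ((j.choose t : ℝ)) = 0 := by
        intro t ht
        rw [← Finset.sum_mul]
        have : ∑ i ∈ range (m+1), (-1:ℝ)^i * (m.choose i : ℝ) * (i:ℝ)^t = 0 := by
          apply ih m (by omega) t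
          simp only [mem_range] at ht
          omega
        rw [this, zero_mul]
      rw [Finset.sum_congr rfl inner0]
      simp

lemma alt_sum_poly (n : ℕ) (hn : 1 ≤ n) (c d : ℝ) :
    ∑ k ∈ range (n+1), (-1:ℝ)^k * (n.choose k : ℝ) * (c + (k:ℝ)*d)^(n-1) = 0 := by
  have expand : ∀ k ∈ range (n+1), (-1:ℝ)^k * (n.choose k : ℝ) * (c + (k:ℝ)*d)^(n-1)
      = ∑ t ∈ range ((n-1)+1), ((-1:ℝ)^k * (n.choose k : ℝ) * (k:ℝ)^t) * (d^t * c^((n-1)-t) * ((n-1).choose t : ℝ)) := by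
    intro k _
    have := add_pow ((k:ℝ)*d) c (n-1)
    rw [add_comm ((k:ℝ)*d) c] at this
    rw [this, Finset.mul_sum]
    apply Finset.sum_congr rfl
    intro t _
    rw [mul_pow]
    ring
  rw [Finset.sum_congr rfl expand, Finset.sum_comm]
  apply Finset.sum_eq_zero
  intro t ht
  rw [← Finset.sum_mul, alt_sum_pow n t (by simp only [mem_range] at ht; omega), zero_mul]


lemma bP_succ (z x : ℝ) (k : ℕ) : bP z x (k+1) = x * (x + (k+1) * z) ^ k := rfl

lemma abel2 (z : ℝ) : ∀ (n : ℕ), ∀ (x y : ℝ),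
    ∑ k ∈ range (n+1), (n.choose k : ℝ) * bP z x k * aP z y (n - k) = (x + y + n*z)^n := by
  intro n
  induction n with
  | zero => intro x y; simp [bP, aP]
  | succ n ih =>
    intro x y
    set L : ℝ → ℝ := fun Y => ∑ k ∈ range (n+2),
      ((n+1).choose k : ℝ) * bP z x k * (Y + ((n+1-k : ℕ):ℝ) * z)^((n+1-k : ℕ)) with hL
    set R : ℝ → ℝ := fun Y => (x + Y + ((n+1 : ℕ):ℝ)*z)^(n+1) with hR
    -- derivative of each side
    have hLd : ∀ Y : ℝ, HasDerivAt L (((n:ℝ)+1) * (x + Y + ((n:ℝ)+1)*z)^n) Y := by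
      intro Y
      have hterm : ∀ k ∈ range (n+2), HasDerivAt
          (fun Y => ((n+1).choose k : ℝ) * bP z x k * (Y + ((n+1-k : ℕ):ℝ) * z)^((n+1-k : ℕ)))
          (((n+1).choose k : ℝ) * bP z x k *
            (((n+1-k : ℕ):ℝ) * (Y + ((n+1-k : ℕ):ℝ) * z)^((n+1-k : ℕ) - 1))) Y := by
        intro k _
        have h1 : HasDerivAt (fun Y : ℝ => (Y + ((n+1-k : ℕ):ℝ) * z)^((n+1-k : ℕ)))
            ((((n+1-k : ℕ)):ℝ) * (Y + ((n+1-k : ℕ):ℝ) * z)^((n+1-k : ℕ) - 1)) Y := by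
          have := (((hasDerivAt_id Y).add_const (((n+1-k : ℕ):ℝ) * z)).fun_pow ((n+1-k : ℕ)))
          simpa using this
        simpa [mul_assoc] using h1.const_mul (((n+1).choose k : ℝ) * bP z x k)
      have hsum := HasDerivAt.fun_sum hterm
      have hval : ∑ k ∈ range (n+2), ((n+1).choose k : ℝ) * bP z x k *
            (((n+1-k : ℕ):ℝ) * (Y + ((n+1-k : ℕ):ℝ) * z)^((n+1-k : ℕ) - 1))
          = ((n:ℝ)+1) * (x + Y + ((n:ℝ)+1)*z)^n := by
        rw [Finset.sum_range_succ]
        have hlast : ((n+1).choose (n+1) : ℝ) * bP z x (n+1) *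
            (((n+1-(n+1) : ℕ):ℝ) * (Y + ((n+1-(n+1) : ℕ):ℝ) * z)^((n+1-(n+1) : ℕ) - 1)) = 0 := by
          simp
        rw [hlast, add_zero]
        have hcongr : ∀ k ∈ range (n+1), ((n+1).choose k : ℝ) * bP z x k *
            (((n+1-k : ℕ):ℝ) * (Y + ((n+1-k : ℕ):ℝ) * z)^((n+1-k : ℕ) - 1))
            = ((n:ℝ)+1) * ((n.choose k : ℝ) * bP z x k * aP z (Y+z) (n-k)) := by
          intro k hk
          simp only [mem_range] at hk
          have hk' : k ≤ n := by omega
          have e1 : (n+1-k : ℕ) = (n-k) + 1 := by omega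
          have e2 : ((n+1-k : ℕ) : ℝ) = ((n-k : ℕ) : ℝ) + 1 := by rw [e1]; push_cast; ring
          have e3 : (Y + ((n+1-k : ℕ):ℝ) * z) = ((Y+z) + ((n-k : ℕ):ℝ) * z) := by
            rw [e2]; ring
          have e4 : ((n+1-k : ℕ)) - 1 = n - k := by omega
          have hch : ((n+1).choose k : ℝ) * ((n+1-k : ℕ) : ℝ) = ((n:ℝ)+1) * (n.choose k : ℝ) := by
            have h := Nat.choose_mul_succ_eq n k
            have h2 : ((n.choose k * (n+1) : ℕ) : ℝ) = (((n+1).choose k * (n+1-k) : ℕ) : ℝ) := by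
              exact_mod_cast congrArg Nat.cast h
            push_cast at h2
            rw [Nat.cast_sub (by omega)] at h2
            push_cast at h2
            rw [Nat.cast_sub (by omega)]
            push_cast
            linarith
          rw [e4, e3]
          unfold aP
          calc ((n+1).choose k : ℝ) * bP z x k * (((n+1-k : ℕ):ℝ) * ((Y+z) + ((n-k : ℕ):ℝ) * z)^(n-k))
              = (((n+1).choose k : ℝ) * ((n+1-k : ℕ) : ℝ)) * (bP z x k * ((Y+z) + ((n-k : ℕ):ℝ) * z)^(n-k)) := by ring
            _ = ((n:ℝ)+1) * ((n.choose k : ℝ) * bP z x k * ((Y+z) + ((n-k : ℕ):ℝ) * z)^(n-k)) := by rw [hch]; ring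
        rw [Finset.sum_congr rfl hcongr, ← Finset.mul_sum, ih x (Y+z)]
        ring_nf
      rw [hval] at hsum
      exact hsum
    have hRd : ∀ Y : ℝ, HasDerivAt R (((n:ℝ)+1) * (x + Y + ((n:ℝ)+1)*z)^n) Y := by
      intro Y
      have hb : HasDerivAt (fun Y : ℝ => x + Y + ((n+1 : ℕ):ℝ)*z) 1 Y := by
        simpa using ((hasDerivAt_id Y).const_add x).add_const (((n+1 : ℕ):ℝ)*z)
      have h1 := hb.pow (n+1)
      have h2 : HasDerivAt R ((((n+1:ℕ)):ℝ) * (x + Y + ((n+1 : ℕ):ℝ)*z)^(n+1-1) * 1) Y := h1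
      have hv : (((n+1:ℕ)):ℝ) * (x + Y + ((n+1 : ℕ):ℝ)*z)^(n+1-1) * 1
          = ((n:ℝ)+1) * (x + Y + ((n:ℝ)+1)*z)^n := by
        simp only [Nat.add_sub_cancel]
        push_cast
        ring
      rw [hv] at h2
      exact h2
    -- L - R has zero derivative hence constant
    have hconst : ∀ Y₁ Y₂ : ℝ, L Y₁ - R Y₁ = L Y₂ - R Y₂ := by
      intro Y₁ Y₂
      have hdiff : Differentiable ℝ (fun Y => L Y - R Y) :=
        fun Y => ((hLd Y).sub (hRd Y)).differentiableAt
      have hzero : ∀ Y, deriv (fun Y => L Y - R Y) Y = 0 := by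
        intro Y
        have := ((hLd Y).fun_sub (hRd Y)).deriv
        simpa using this
      exact is_const_of_deriv_eq_zero hdiff hzero Y₁ Y₂
    -- evaluate at Y₀ = -x - (n+1) z
    set Y₀ : ℝ := -x - ((n+1 : ℕ):ℝ)*z with hY₀
    have hR0 : R Y₀ = 0 := by
      rw [hR]; simp only [hY₀]
      rw [show x + (-x - ((n+1 : ℕ):ℝ)*z) + ((n+1 : ℕ):ℝ)*z = 0 by ring]
      exact zero_pow (by omega)
    have hL0 : L Y₀ = 0 := by
      show ∑ k ∈ range (n+2),
        ((n+1).choose k : ℝ) * bP z x k * (Y₀ + ((n+1-k : ℕ):ℝ) * z)^((n+1-k : ℕ)) = 0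
      have hterm : ∀ k ∈ range (n+2),
          ((n+1).choose k : ℝ) * bP z x k * (Y₀ + ((n+1-k : ℕ):ℝ) * z)^((n+1-k : ℕ))
          = ((-1:ℝ)^(n+1) * x) * ((-1:ℝ)^k * ((n+1).choose k : ℝ) * (x + (k:ℝ)*z)^n) := by
        intro k hk
        simp only [mem_range] at hk
        have hk' : k ≤ n+1 := by omega
        have e1 : (Y₀ + ((n+1-k : ℕ):ℝ) * z) = -(x + (k:ℝ)*z) := by
          rw [hY₀, Nat.cast_sub (by omega)]
          push_cast; ring
        rw [e1, neg_pow]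
        have hsign : (-1:ℝ)^((n+1-k : ℕ)) = (-1:ℝ)^(n+1) * (-1:ℝ)^k := by
          have : (-1:ℝ)^((n+1-k : ℕ)) * (-1:ℝ)^k = (-1:ℝ)^(n+1) := by
            rw [← pow_add]
            congr 1
            omega
          have hk2 : (-1:ℝ)^k * (-1:ℝ)^k = 1 := by
            rw [← pow_add]
            exact Even.neg_one_pow ⟨k, rfl⟩
          calc (-1:ℝ)^((n+1-k : ℕ)) = (-1:ℝ)^((n+1-k : ℕ)) * ((-1:ℝ)^k * (-1:ℝ)^k) := by rw [hk2]; ring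
            _ = ((-1:ℝ)^((n+1-k : ℕ)) * (-1:ℝ)^k) * (-1:ℝ)^k := by ring
            _ = (-1:ℝ)^(n+1) * (-1:ℝ)^k := by rw [this]
        rw [hsign]
        match k with
        | 0 =>
          simp only [bP, Nat.choose_zero_right, Nat.cast_one, Nat.cast_zero, zero_mul,
            add_zero, pow_zero, Nat.sub_zero, one_mul, mul_one]
          rw [pow_succ]
          ring
        | (j+1) =>
          rw [bP_succ]
          have hxpow : (x + ((j+1:ℕ):ℝ)*z)^j * (x + ((j+1:ℕ):ℝ)*z)^((n+1-(j+1) : ℕ)) = (x + ((j+1:ℕ):ℝ)*z)^n := by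
            rw [← pow_add]
            congr 1
            omega
          push_cast at hxpow ⊢
          linear_combination (((n+1).choose (j+1) : ℝ) * x * (-1:ℝ)^(n+1) * (-1:ℝ)^(j+1)) * hxpow
      rw [Finset.sum_congr rfl hterm, ← Finset.mul_sum]
      have halt := alt_sum_poly (n+1) (by omega) x z
      simp only [Nat.add_sub_cancel] at halt
      rw [halt, mul_zero]
    have := hconst y Y₀
    rw [hR0, hL0] at this
    have hLR : L y = R y := by linarith
    -- now rewrite goal
    have goal1 : ∑ k ∈ range (n+1+1), ((n+1).choose k : ℝ) * bP z x k * aP z y (n+1-k) = L y := rfl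
    rw [goal1, hLR]


/-- term of the series `F v = ∑ (v+kβ)^k e^{-(v+kβ)}/k!` -/
noncomputable def fJ (b v : ℝ) (k : ℕ) : ℝ :=
  (v + k * b) ^ k * Real.exp (-(v + k * b)) / (Nat.factorial k)

/-- term of the series `G u = ∑ bP b u k e^{-(u+kβ)}/k!` -/
noncomputable def gJ (b u : ℝ) (k : ℕ) : ℝ :=
  bP b u k * Real.exp (-(u + k * b)) / (Nat.factorial k)

section Analysis

variable {b v : ℝ}

lemma fJ_nonneg (hb0 : 0 ≤ b) (hv : 0 ≤ v) (k : ℕ) : 0 ≤ fJ b v k := by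
  unfold fJ
  have h : 0 ≤ v + k * b := by positivity
  positivity

lemma gJ_nonneg (hb0 : 0 ≤ b) (hv : 0 ≤ v) (k : ℕ) : 0 ≤ gJ b v k := by
  unfold gJ
  match k with
  | 0 => simp only [bP]; positivity
  | (k+1) =>
    rw [bP_succ]
    have h : 0 ≤ v + ((k+1:ℕ):ℝ) * b := by positivity
    have h2 : (0:ℝ) < Nat.factorial (k+1) := by positivity
    apply div_nonneg _ h2.le
    positivity

lemma gJ_le_fJ (hb0 : 0 ≤ b) (hv : 0 < v) (k : ℕ) : gJ b v k ≤ fJ b v k := by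
  unfold gJ fJ
  match k with
  | 0 => simp [bP]
  | (k+1) =>
    rw [bP_succ]
    have h : 0 ≤ v + ((k+1:ℕ):ℝ) * b := by positivity
    apply div_le_div_of_nonneg_right _ (by positivity)
    apply mul_le_mul_of_nonneg_right _ (Real.exp_nonneg _)
    have ht : v ≤ v + ((k:ℝ)+1) * b := by
      have : 0 ≤ ((k:ℝ)+1) * b := by positivity
      linarith
    push_cast
    calc v * (v + ((k:ℝ)+1) * b) ^ k
        ≤ (v + ((k:ℝ)+1) * b) * (v + ((k:ℝ)+1) * b) ^ k :=
          mul_le_mul_of_nonneg_right ht (by positivity)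
      _ = (v + ((k:ℝ)+1) * b) ^ (k+1) := by rw [pow_succ]; ring

/-- the geometric ratio is less than 1 -/
lemma ratio_lt_one (hb0 : 0 ≤ b) (hb1 : b < 1) {e : ℝ} (he : 0 < e) (he' : e ≤ 1 - b) :
    Real.exp (e * b) < 1 + e := by
  have h1 : e * b < 1 - b := by
    rcases eq_or_lt_of_le hb0 with h | h
    · rw [← h]; simpa using hb1
    · calc e * b ≤ (1 - b) * b := by nlinarith
        _ < 1 - b := by nlinarith
  have h2 : (0:ℝ) < 1 - e * b := by nlinarith
  have h3 : 1 - e * b ≤ Real.exp (-(e * b)) := by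
    have := Real.add_one_le_exp (-(e * b))
    linarith
  have h4 : Real.exp (e * b) * (1 - e * b) ≤ 1 := by
    have := mul_le_mul_of_nonneg_left h3 (Real.exp_nonneg (e * b))
    rwa [← Real.exp_add, add_neg_cancel, Real.exp_zero] at this
  nlinarith [Real.exp_pos (e * b)]

lemma fJ_le_geom (hb0 : 0 ≤ b) {e v : ℝ} (he : 0 < e) (hv : 0 ≤ v) (k : ℕ) :
    fJ b v k ≤ Real.exp (e * v) * (Real.exp (e * b) / (1 + e)) ^ k := by
  unfold fJ
  set s : ℝ := v + k * b with hs
  have hs0 : 0 ≤ s := by positivity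
  have key : ((1+e) * s) ^ k / (Nat.factorial k) ≤ Real.exp ((1+e) * s) :=
    Real.pow_div_factorial_le_exp _ (by positivity) k
  have h1 : s ^ k / (Nat.factorial k) ≤ Real.exp ((1+e) * s) / (1+e)^k := by
    rw [mul_pow] at key
    rw [div_le_div_iff₀ (by positivity) (by positivity)]
    calc s ^ k * (1+e)^k = (1+e)^k * s ^ k := by ring
      _ ≤ Real.exp ((1+e)*s) * (Nat.factorial k) := by
          rw [div_le_iff₀ (by positivity)] at key
          linarith [key]
  calc s ^ k * Real.exp (-s) / (Nat.factorial k)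
      = (s ^ k / (Nat.factorial k)) * Real.exp (-s) := by ring
    _ ≤ (Real.exp ((1+e) * s) / (1+e)^k) * Real.exp (-s) := by
        apply mul_le_mul_of_nonneg_right h1 (Real.exp_nonneg _)
    _ = Real.exp (e * s) / (1+e)^k := by
        rw [div_mul_eq_mul_div, ← Real.exp_add]
        congr 2
        ring
    _ = Real.exp (e * v) * Real.exp (e * b) ^ k / (1+e)^k := by
        rw [hs, mul_add, Real.exp_add, ← Real.exp_nat_mul]
        congr 3
        ring
    _ = Real.exp (e * v) * (Real.exp (e * b) / (1 + e)) ^ k := by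
        rw [div_pow]
        ring

lemma summable_fJ (hb0 : 0 ≤ b) (hb1 : b < 1) {v : ℝ} (hv : 0 ≤ v) : Summable (fJ b v) := by
  have he : (0:ℝ) < 1 - b := by linarith
  apply Summable.of_nonneg_of_le (fJ_nonneg hb0 hv) (fJ_le_geom hb0 he hv)
  apply Summable.mul_left
  apply summable_geometric_of_lt_one (by positivity)
  have := ratio_lt_one hb0 hb1 he (le_refl _)
  rw [div_lt_one (by positivity)]
  linarith

lemma tsum_fJ_le (hb0 : 0 ≤ b) (hb1 : b < 1) {e v : ℝ} (he : 0 < e) (he' : e ≤ 1 - b) (hv : 0 ≤ v) :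
    ∑' k, fJ b v k ≤ Real.exp (e * v) / (1 - Real.exp (e * b) / (1 + e)) := by
  set r : ℝ := Real.exp (e * b) / (1 + e) with hr
  have hr0 : 0 ≤ r := by positivity
  have hr1 : r < 1 := by
    rw [hr, div_lt_one (by positivity)]
    linarith [ratio_lt_one hb0 hb1 he he']
  have hsum : Summable (fun k : ℕ => Real.exp (e * v) * r ^ k) :=
    Summable.mul_left _ (summable_geometric_of_lt_one hr0 hr1)
  calc ∑' k, fJ b v k ≤ ∑' k, Real.exp (e * v) * r ^ k :=
        Summable.tsum_le_tsum (fJ_le_geom hb0 he hv) (summable_fJ hb0 hb1 hv) hsum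
    _ = Real.exp (e * v) * (1 - r)⁻¹ := by
        rw [tsum_mul_left, tsum_geometric_of_lt_one hr0 hr1]
    _ = Real.exp (e * v) / (1 - r) := by rw [div_eq_mul_inv]

lemma summable_gJ (hb0 : 0 ≤ b) (hb1 : b < 1) {v : ℝ} (hv : 0 < v) : Summable (gJ b v) :=
  Summable.of_nonneg_of_le (gJ_nonneg hb0 hv.le) (gJ_le_fJ hb0 hv) (summable_fJ hb0 hb1 hv.le)


noncomputable def FJ (b v : ℝ) : ℝ := ∑' k, fJ b v k
noncomputable def GJ (b u : ℝ) : ℝ := ∑' k, gJ b u k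

lemma cauchy_row (u v : ℝ) (n : ℕ) :
    ∑ k ∈ range (n+1), gJ b u k * fJ b v (n-k) = fJ b (u+v) n := by
  have hterm : ∀ k ∈ range (n+1), gJ b u k * fJ b v (n-k)
      = (Real.exp (-(u+v+(n:ℝ)*b)) / (n.factorial : ℝ)) *
        ((n.choose k : ℝ) * bP b u k * aP b v (n-k)) := by
    intro k hk
    simp only [mem_range] at hk
    have hkn : k ≤ n := by omega
    unfold gJ fJ aP
    have hexp : Real.exp (-(u + (k:ℝ)*b)) * Real.exp (-(v + ((n-k:ℕ):ℝ)*b))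
        = Real.exp (-(u+v+(n:ℝ)*b)) := by
      rw [← Real.exp_add]
      congr 1
      rw [Nat.cast_sub hkn]
      ring
    have hfac : (n.factorial : ℝ) = (n.choose k : ℝ) * (k.factorial : ℝ) * ((n-k).factorial : ℝ) := by
      exact_mod_cast congrArg Nat.cast (Nat.choose_mul_factorial_mul_factorial hkn).symm
    rw [← hexp, hfac]
    have h1 : (k.factorial : ℝ) ≠ 0 := by positivity
    have h2 : ((n-k).factorial : ℝ) ≠ 0 := by positivity
    have h3 : (n.choose k : ℝ) ≠ 0 := by
      have := Nat.choose_pos hkn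
      positivity
    field_simp
  rw [Finset.sum_congr rfl hterm, ← Finset.mul_sum, abel2 b n u v]
  unfold fJ
  ring

lemma FJ_mul (hb0 : 0 ≤ b) (hb1 : b < 1) {u v : ℝ} (hu : 0 < u) (hv : 0 < v) :
    GJ b u * FJ b v = FJ b (u+v) := by
  have hgn : (fun k => ‖gJ b u k‖) = gJ b u :=
    funext fun k => Real.norm_of_nonneg (gJ_nonneg hb0 hu.le k)
  have hfn : (fun k => ‖fJ b v k‖) = fJ b v :=
    funext fun k => Real.norm_of_nonneg (fJ_nonneg hb0 hv.le k)
  have hg : Summable fun k => ‖gJ b u k‖ := by rw [hgn]; exact summable_gJ hb0 hb1 hu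
  have hf : Summable fun k => ‖fJ b v k‖ := by rw [hfn]; exact summable_fJ hb0 hb1 hv.le
  unfold GJ FJ
  rw [tsum_mul_tsum_eq_tsum_sum_range_of_summable_norm hg hf]
  exact tsum_congr (fun n => cauchy_row u v n)

lemma FJ_shift (hb0 : 0 ≤ b) (hb1 : b < 1) {v : ℝ} (hv : 0 < v) :
    FJ b v = GJ b v + b * FJ b (v+b) := by
  have hvb : (0:ℝ) ≤ v + b := by linarith
  have hsf : HasSum (fJ b (v+b)) (FJ b (v+b)) := (summable_fJ hb0 hb1 hvb).hasSum
  have h1 : HasSum (fun k => b * fJ b (v+b) k) (b * FJ b (v+b)) := hsf.mul_left b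
  have hD : ∀ k : ℕ, fJ b v (k+1) - gJ b v (k+1) = b * fJ b (v+b) k := by
    intro k
    simp only [fJ, gJ, bP_succ, Nat.factorial_succ]
    rw [show (v+b) + (k:ℝ)*b = v + ((k:ℝ)+1)*b from by ring]
    push_cast
    rw [pow_succ]
    have h1 : (k.factorial : ℝ) ≠ 0 := by positivity
    field_simp
    ring
  have h2 : HasSum (fun k => fJ b v k - gJ b v k) (b * FJ b (v+b)) := by
    have heq : (fun k => b * fJ b (v+b) k) = (fun k => fJ b v (k+1) - gJ b v (k+1)) :=
      funext fun k => (hD k).symm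
    rw [heq] at h1
    have := (hasSum_nat_add_iff (f := fun k => fJ b v k - gJ b v k) 1).mp h1
    have hzero : ∑ i ∈ range 1, (fJ b v i - gJ b v i) = 0 := by
      simp [fJ, gJ, bP]
    rwa [hzero, add_zero] at this
  have h3 : HasSum (fJ b v) (GJ b v + b * FJ b (v+b)) := by
    have := ((summable_gJ hb0 hb1 hv).hasSum).add h2
    have heq : (fun k => gJ b v k + (fJ b v k - gJ b v k)) = fJ b v :=
      funext fun k => by ring
    rwa [heq] at this
  show FJ b v = _
  unfold FJ
  exact h3.tsum_eq

lemma FJ_pos (hb0 : 0 ≤ b) (hb1 : b < 1) {v : ℝ} (hv : 0 ≤ v) : 0 < FJ b v := by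
  have h0 : 0 < fJ b v 0 := by
    simp only [fJ, pow_zero, Nat.cast_zero, zero_mul, add_zero, Nat.factorial_zero,
      Nat.cast_one, div_one, one_mul]
    positivity
  have hle : fJ b v 0 ≤ FJ b v :=
    Summable.le_tsum (summable_fJ hb0 hb1 hv) 0 (fun j _ => fJ_nonneg hb0 hv j)
  linarith

lemma GJ_pos (hb0 : 0 ≤ b) (hb1 : b < 1) {v : ℝ} (hv : 0 < v) : 0 < GJ b v := by
  have h0 : 0 < gJ b v 0 := by
    simp only [gJ, bP, Nat.cast_zero, zero_mul, add_zero, Nat.factorial_zero,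
      Nat.cast_one, div_one, one_mul]
    positivity
  have hle : gJ b v 0 ≤ GJ b v :=
    Summable.le_tsum (summable_gJ hb0 hb1 hv) 0 (fun j _ => gJ_nonneg hb0 hv.le j)
  linarith


/-- `k! * e^k ≤ e * k^(k+1)` for `k ≥ 1` -/
lemma fact_upper : ∀ k : ℕ, 1 ≤ k → (k.factorial : ℝ) * Real.exp k ≤ Real.exp 1 * (k:ℝ)^(k+1) := by
  intro k
  induction k with
  | zero => intro h; omega
  | succ k ih =>
    intro _
    by_cases hk0 : k = 0
    · subst hk0
      norm_num [Nat.factorial]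
    have hk1 : 1 ≤ k := Nat.one_le_iff_ne_zero.mpr hk0
    have ihk := ih hk1
    have hkpos : (0:ℝ) < k := by exact_mod_cast hk1
    -- key : e * k^(k+1) ≤ (k+1)^(k+1)
    have hexp : (k:ℝ)/((k:ℝ)+1) ≤ Real.exp (-(1/((k:ℝ)+1))) := by
      have := Real.add_one_le_exp (-(1/((k:ℝ)+1)))
      have heq : -(1/((k:ℝ)+1)) + 1 = (k:ℝ)/((k:ℝ)+1) := by
        field_simp
        ring
      linarith
    have hpow : ((k:ℝ)/((k:ℝ)+1))^(k+1) ≤ Real.exp (-1) := by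
      have h1 : ((k:ℝ)/((k:ℝ)+1))^(k+1) ≤ Real.exp (-(1/((k:ℝ)+1)))^(k+1) :=
        pow_le_pow_left₀ (by positivity) hexp (k+1)
      have h2 : Real.exp (-(1/((k:ℝ)+1)))^(k+1) = Real.exp (-1) := by
        rw [← Real.exp_nat_mul]
        congr 1
        push_cast
        field_simp
      linarith
    have key : Real.exp 1 * (k:ℝ)^(k+1) ≤ ((k:ℝ)+1)^(k+1) := by
      have h3 : ((k:ℝ)/((k:ℝ)+1))^(k+1) = (k:ℝ)^(k+1) / ((k:ℝ)+1)^(k+1) := by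
        rw [div_pow]
      rw [h3] at hpow
      rw [div_le_iff₀ (by positivity)] at hpow
      have h4 : Real.exp 1 * Real.exp (-1) = 1 := by
        rw [← Real.exp_add]; norm_num
      nlinarith [Real.exp_pos (1:ℝ), pow_pos (show (0:ℝ) < (k:ℝ)+1 by positivity) (k+1)]
    -- combine
    have hfs : ((k+1).factorial : ℝ) = ((k:ℝ)+1) * (k.factorial : ℝ) := by
      rw [Nat.factorial_succ]; push_cast; ring
    have hes : Real.exp ((k:ℕ)+1 : ℕ) = Real.exp k * Real.exp 1 := by
      rw [← Real.exp_add]; congr 1; push_cast; ring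
    calc ((k+1).factorial : ℝ) * Real.exp ((k+1 : ℕ))
        = ((k:ℝ)+1) * ((k.factorial : ℝ) * Real.exp k) * Real.exp 1 := by
          rw [hfs, hes]; ring
      _ ≤ ((k:ℝ)+1) * (Real.exp 1 * (k:ℝ)^(k+1)) * Real.exp 1 := by
          have hkf : (0:ℝ) ≤ (k:ℝ)+1 := by positivity
          have := mul_le_mul_of_nonneg_left ihk hkf
          nlinarith [Real.exp_pos (1:ℝ)]
      _ = ((k:ℝ)+1) * (Real.exp 1 * (k:ℝ)^(k+1)) * Real.exp 1 := rfl
      _ ≤ ((k:ℝ)+1) * ((k:ℝ)+1)^(k+1) * Real.exp 1 := by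
          have := mul_le_mul_of_nonneg_left key (show (0:ℝ) ≤ (k:ℝ)+1 by positivity)
          nlinarith [Real.exp_pos (1:ℝ)]
      _ = Real.exp 1 * ((k:ℝ)+1)^(k+1+1) := by rw [pow_succ]; push_cast; ring
      _ = Real.exp 1 * (((k+1:ℕ)):ℝ)^(k+1+1) := by push_cast; ring

set_option maxHeartbeats 1000000 in
lemma FJ_lower {b : ℝ} (hb0 : 0 ≤ b) (hb1 : b < 1) {w : ℝ} (hw : 2 ≤ w) :
    (1-b) / (Real.exp 3 * (w+1)) ≤ FJ b w := by
  have h1b : (0:ℝ) < 1 - b := by linarith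
  have hw0 : (0:ℝ) ≤ w := by linarith
  have hq0 : (0:ℝ) ≤ w/(1-b) := by positivity
  obtain ⟨K, hK1, hK2⟩ : ∃ K : ℕ, w/(1-b) ≤ (K:ℝ) ∧ (K:ℝ) < w/(1-b) + 1 :=
    ⟨⌈w/(1-b)⌉₊, Nat.le_ceil _, Nat.ceil_lt_add_one hq0⟩
  have hwK : 2 ≤ w/(1-b) := by
    calc (2:ℝ) ≤ w := hw
      _ = w/1 := by ring
      _ ≤ w/(1-b) := by
          apply div_le_div_of_nonneg_left hw0 h1b
          linarith
  have hKge2 : (2:ℝ) ≤ (K:ℝ) := le_trans hwK hK1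
  have hKnat2 : 2 ≤ K := by exact_mod_cast hKge2
  have hKpos : (0:ℝ) < K := by linarith
  set t : ℝ := w + (K:ℝ)*b with ht
  have ht_le : t ≤ (K:ℝ) := by
    have : w ≤ (K:ℝ)*(1-b) := by
      rw [div_le_iff₀ h1b] at hK1
      linarith
    rw [ht]; nlinarith
  have ht_ge : (K:ℝ) - 1 ≤ t := by
    have h5 : ((K:ℝ) - 1)*(1-b) < w := by
      have : (K:ℝ) - 1 < w/(1-b) := by linarith
      calc ((K:ℝ)-1)*(1-b) < (w/(1-b))*(1-b) := by
            apply mul_lt_mul_of_pos_right this h1b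
        _ = w := by field_simp
    rw [ht]
    nlinarith [hb0, hKpos]
  have ht0 : (0:ℝ) ≤ t := by rw [ht]; positivity
  -- fJ b w K = t^K exp(-t)/K!
  have hterm : fJ b w K = t^K * Real.exp (-t) / (K.factorial : ℝ) := by
    unfold fJ; rw [← ht]
  -- t^K ≥ (K-1)^K, exp(-t) ≥ exp(-K)
  have e1 : ((K:ℝ)-1)^K ≤ t^K := pow_le_pow_left₀ (by linarith) ht_ge K
  have e2 : Real.exp (-(K:ℝ)) ≤ Real.exp (-t) := Real.exp_le_exp.mpr (by linarith)
  -- step A : exp(-2) * K^K ≤ (K-1)^K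
  have stepA : Real.exp (-2) * (K:ℝ)^K ≤ ((K:ℝ)-1)^K := by
    have hA1 : (K:ℝ)/((K:ℝ)-1) ≤ Real.exp (2/(K:ℝ)) := by
      have hx : 1 + 2/(K:ℝ) ≤ Real.exp (2/(K:ℝ)) := by
        have := Real.add_one_le_exp (2/(K:ℝ))
        linarith
      have hx2 : (K:ℝ)/((K:ℝ)-1) ≤ 1 + 2/(K:ℝ) := by
        rw [div_le_iff₀ (by linarith : (0:ℝ) < (K:ℝ)-1)]
        have h2K : 2/(K:ℝ)*(K:ℝ) = 2 := by field_simp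
        have h2K1 : 2/(K:ℝ) ≤ 1 := by
          rw [div_le_one hKpos]; exact hKge2
        nlinarith
      linarith
    have hA2 : ((K:ℝ)/((K:ℝ)-1))^K ≤ Real.exp 2 := by
      calc ((K:ℝ)/((K:ℝ)-1))^K ≤ Real.exp (2/(K:ℝ))^K :=
            pow_le_pow_left₀ (div_nonneg (by linarith) (by linarith)) hA1 K
        _ = Real.exp ((K:ℝ) * (2/(K:ℝ))) := by rw [Real.exp_nat_mul]
        _ = Real.exp 2 := by
            congr 1
            field_simp
    have hA3 : (K:ℝ)^K ≤ Real.exp 2 * ((K:ℝ)-1)^K := by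
      have hd : ((K:ℝ)/((K:ℝ)-1))^K = (K:ℝ)^K / ((K:ℝ)-1)^K := div_pow _ _ _
      rw [hd, div_le_iff₀ (pow_pos (show (0:ℝ) < (K:ℝ)-1 by linarith) K)] at hA2
      linarith [hA2]
    have hee : Real.exp (-2) * Real.exp 2 = 1 := by
      rw [← Real.exp_add]; norm_num
    nlinarith [Real.exp_pos (-2:ℝ), pow_pos (show (0:ℝ) < (K:ℝ)-1 by linarith) K]
  -- step B : 1/(e·K) ≤ K^K exp(-K)/K!
  have stepB : 1/(Real.exp 1 * (K:ℝ)) ≤ (K:ℝ)^K * Real.exp (-(K:ℝ)) / (K.factorial : ℝ) := by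
    have hfu := fact_upper K (by omega)
    have hfp : (0:ℝ) < (K.factorial : ℝ) := by positivity
    rw [div_le_div_iff₀ (by positivity) hfp]
    have hexpK : Real.exp (-(K:ℝ)) * Real.exp (K:ℝ) = 1 := by
      rw [← Real.exp_add]; norm_num
    have hps : (K:ℝ)^(K+1) = (K:ℝ)^K * (K:ℝ) := by rw [pow_succ]
    rw [hps] at hfu
    nlinarith [Real.exp_pos (-(K:ℝ)), Real.exp_pos ((K:ℝ)), pow_pos hKpos K]
  -- combine to get fJ b w K ≥ 1/(e^3 K)
  have hcomb : 1/(Real.exp 3 * (K:ℝ)) ≤ fJ b w K := by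
    rw [hterm]
    have hfp : (0:ℝ) < (K.factorial : ℝ) := by positivity
    have c1 : Real.exp (-2) * ((K:ℝ)^K * Real.exp (-(K:ℝ))) ≤ t^K * Real.exp (-t) := by
      calc Real.exp (-2) * ((K:ℝ)^K * Real.exp (-(K:ℝ)))
          = (Real.exp (-2) * (K:ℝ)^K) * Real.exp (-(K:ℝ)) := by ring
        _ ≤ ((K:ℝ)-1)^K * Real.exp (-(K:ℝ)) :=
            mul_le_mul_of_nonneg_right stepA (Real.exp_nonneg _)
        _ ≤ t^K * Real.exp (-t) := by
            apply mul_le_mul e1 e2 (Real.exp_nonneg _) (by positivity)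
    calc 1/(Real.exp 3 * (K:ℝ))
        = Real.exp (-2) * (1/(Real.exp 1 * (K:ℝ))) := by
          rw [Real.exp_neg, show (3:ℝ) = 2 + 1 by norm_num, Real.exp_add]
          have he2 : Real.exp 2 ≠ 0 := (Real.exp_pos 2).ne'
          have he1 : Real.exp 1 ≠ 0 := (Real.exp_pos 1).ne'
          field_simp
        _ ≤ Real.exp (-2) * ((K:ℝ)^K * Real.exp (-(K:ℝ)) / (K.factorial : ℝ)) :=
            mul_le_mul_of_nonneg_left stepB (Real.exp_nonneg _)
        _ = Real.exp (-2) * ((K:ℝ)^K * Real.exp (-(K:ℝ))) / (K.factorial : ℝ) := by ring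
        _ ≤ t^K * Real.exp (-t) / (K.factorial : ℝ) := (div_le_div_iff_of_pos_right hfp).mpr c1
  have hfinal : (1-b) / (Real.exp 3 * (w+1)) ≤ 1/(Real.exp 3 * (K:ℝ)) := by
    have he3 : (0:ℝ) < Real.exp 3 := Real.exp_pos _
    have hKw : (K:ℝ) ≤ (w+1)/(1-b) := by
      have hbb : (0:ℝ) ≤ b/(1-b) := div_nonneg hb0 h1b.le
      have hsplit : (w+1)/(1-b) = w/(1-b) + 1 + b/(1-b) := by
        field_simp
        ring
      linarith
    have h1 : Real.exp 3 * (K:ℝ) ≤ Real.exp 3 * ((w+1)/(1-b)) :=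
      mul_le_mul_of_nonneg_left hKw he3.le
    have h2 : 1/(Real.exp 3 * ((w+1)/(1-b))) ≤ 1/(Real.exp 3 * (K:ℝ)) :=
      one_div_le_one_div_of_le (mul_pos he3 hKpos) h1
    have h3 : 1/(Real.exp 3 * ((w+1)/(1-b))) = (1-b)/(Real.exp 3 * (w+1)) := by
      rw [div_eq_div_iff (by positivity) (by positivity)]
      field_simp
    linarith
  have hle : fJ b w K ≤ FJ b w :=
    Summable.le_tsum (summable_fJ hb0 hb1 hw0) K (fun j _ => fJ_nonneg hb0 hw0 j)
  linarith


set_option maxHeartbeats 1600000 in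
lemma FJ_const (hb0 : 0 ≤ b) (hb1 : b < 1) {v : ℝ} (hv : 0 < v) : FJ b v = 1/(1-b) := by
  have h1b : (0:ℝ) < 1 - b := by linarith
  have hF1 : 0 < FJ b 1 := FJ_pos hb0 hb1 zero_le_one
  have hG1 : 0 < GJ b 1 := GJ_pos hb0 hb1 one_pos
  set c : ℝ := GJ b 1 / FJ b 1 with hc
  have hcpos : 0 < c := div_pos hG1 hF1
  have hGu : ∀ u : ℝ, 0 < u → GJ b u = c * FJ b u := by
    intro u hu
    have hsym : GJ b u * FJ b 1 = GJ b 1 * FJ b u := by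
      rw [FJ_mul hb0 hb1 hu one_pos, FJ_mul hb0 hb1 one_pos hu, add_comm]
    rw [hc]
    field_simp
    linarith
  have hFmul : ∀ u w : ℝ, 0 < u → 0 < w → FJ b (u+w) = c * FJ b u * FJ b w := by
    intro u w hu hw
    rw [← FJ_mul hb0 hb1 hu hw, hGu u hu]
  have hpow : ∀ (w : ℝ), 0 < w → ∀ m : ℕ, 1 ≤ m → c * FJ b ((m:ℝ)*w) = (c * FJ b w)^m := by
    intro w hw m hm
    induction m with
    | zero => omega
    | succ m ihm =>
      by_cases hm0 : m = 0
      · subst hm0; norm_num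
      have hm1 : 1 ≤ m := Nat.one_le_iff_ne_zero.mpr hm0
      have hmw : 0 < (m:ℝ)*w := by
        have : (1:ℝ) ≤ (m:ℝ) := by exact_mod_cast hm1
        nlinarith
      have harg : ((m+1:ℕ):ℝ)*w = (m:ℝ)*w + w := by push_cast; ring
      rw [harg, hFmul _ w hmw hw]
      rw [show c * (c * FJ b ((m:ℝ)*w) * FJ b w) = (c * FJ b ((m:ℝ)*w)) * (c * FJ b w) from by ring]
      rw [ihm hm1, pow_succ]
  -- upper bound : c * FJ b w ≤ 1
  have hupper : ∀ w : ℝ, 0 < w → c * FJ b w ≤ 1 := by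
    intro w hw
    have hEw : 0 < c * FJ b w := mul_pos hcpos (FJ_pos hb0 hb1 hw.le)
    have step1 : ∀ e : ℝ, 0 < e → e ≤ 1-b → c * FJ b w ≤ Real.exp (e*w) := by
      intro e he he'
      set r : ℝ := Real.exp (e*b)/(1+e) with hr
      have hr0 : 0 ≤ r := by positivity
      have hr1 : r < 1 := by
        rw [hr, div_lt_one (by positivity)]
        linarith [ratio_lt_one hb0 hb1 he he']
      set KK : ℝ := c / (1-r) with hKK
      have hKpos : 0 < KK := div_pos hcpos (by linarith)
      have hbound : ∀ m : ℕ, 1 ≤ m → (c * FJ b w)^m ≤ KK * (Real.exp (e*w))^m := by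
        intro m hm
        rw [← hpow w hw m hm]
        have hmw : (0:ℝ) ≤ (m:ℝ)*w := by positivity
        have htl := tsum_fJ_le hb0 hb1 he he' hmw
        have hexp : Real.exp (e*((m:ℝ)*w)) = (Real.exp (e*w))^m := by
          rw [← Real.exp_nat_mul]; congr 1; ring
        calc c * FJ b ((m:ℝ)*w) ≤ c * (Real.exp (e*((m:ℝ)*w))/(1-r)) :=
              mul_le_mul_of_nonneg_left htl hcpos.le
          _ = KK * (Real.exp (e*w))^m := by rw [hexp, hKK]; ring
      by_contra hcon
      push_neg at hcon
      set q : ℝ := (c * FJ b w) / Real.exp (e*w) with hq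
      have hq1 : 1 < q := by
        rw [hq, lt_div_iff₀ (Real.exp_pos _)]
        linarith
      have hqm : ∀ m : ℕ, 1 ≤ m → q^m ≤ KK := by
        intro m hm
        rw [hq, div_pow, div_le_iff₀ (by positivity)]
        exact hbound m hm
      obtain ⟨m, hm⟩ := exists_nat_gt (KK / (q-1))
      have hmpos : (0:ℝ) < m := lt_trans (div_pos hKpos (by linarith)) hm
      have hm1 : 1 ≤ m := by exact_mod_cast Nat.one_le_iff_ne_zero.mpr (by
        intro h0; rw [h0] at hmpos; simp at hmpos)
      have hle := hqm m hm1
      have hgeom : 1 + (m:ℝ)*(q-1) ≤ q^m := by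
        have := one_add_mul_le_pow (show (-2:ℝ) ≤ q-1 by linarith) m
        have heq : (1 + (q-1)) = q := by ring
        rwa [heq] at this
      rw [div_lt_iff₀ (by linarith : (0:ℝ) < q - 1)] at hm
      linarith
    by_contra hcon
    push_neg at hcon
    have hlog : 0 < Real.log (c * FJ b w) := Real.log_pos hcon
    set d : ℝ := Real.log (c * FJ b w) with hd
    set e : ℝ := min (1-b) (d/(2*w)) with he
    have hepos : 0 < e := lt_min (by linarith) (by positivity)
    have he' : e ≤ 1-b := min_le_left _ _
    have hstep := step1 e hepos he'
    have hlog2 : d ≤ e*w := by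
      rw [hd, Real.log_le_iff_le_exp hEw]
      exact hstep
    have hlog3 : e*w ≤ d/2 := by
      calc e*w ≤ (d/(2*w))*w := mul_le_mul_of_nonneg_right (min_le_right _ _) hw.le
        _ = d/2 := by field_simp
    linarith
  -- lower bound : 1 ≤ c * FJ b w
  have hlower : ∀ w : ℝ, 0 < w → 1 ≤ c * FJ b w := by
    intro w hw
    by_contra hcon
    push_neg at hcon
    set q : ℝ := c * FJ b w with hq
    have hq0 : 0 < q := mul_pos hcpos (FJ_pos hb0 hb1 hw.le)
    have hq1 : q < 1 := hcon
    have he3 : (0:ℝ) < Real.exp 3 := Real.exp_pos _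
    obtain ⟨p, hp⟩ := exists_nat_gt (max (1/w) (q^2 * Real.exp 3 * (2*w+1) / (c * (1-b) * (1-q)^2)))
    have hp1 : 1/w < (p:ℝ) := lt_of_le_of_lt (le_max_left _ _) hp
    have hpM : q^2 * Real.exp 3 * (2*w+1) / (c * (1-b) * (1-q)^2) < (p:ℝ) :=
      lt_of_le_of_lt (le_max_right _ _) hp
    have hppos : (0:ℝ) < p := lt_trans (by positivity) hp1
    have hpw : 1 < (p:ℝ)*w := by
      rw [div_lt_iff₀ hw] at hp1
      linarith
    have hpnat : 1 ≤ p := by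
      by_contra h0
      push_neg at h0
      interval_cases p
      · simp at hppos
    have h2pw : (2:ℝ) ≤ ((2*p:ℕ):ℝ)*w := by push_cast; nlinarith
    have hlow : c * ((1-b)/(Real.exp 3 * (((2*p:ℕ):ℝ)*w + 1))) ≤ q^(2*p) := by
      have hFl := FJ_lower hb0 hb1 h2pw
      have hEq : q^(2*p) = c * FJ b (((2*p:ℕ):ℝ)*w) := (hpow w hw (2*p) (by omega)).symm
      rw [hEq]
      exact mul_le_mul_of_nonneg_left hFl hcpos.le
    -- q^p * (p(1-q)) ≤ q
    have hqppos : 0 < q^p := pow_pos hq0 p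
    have key2 : q^p * ((p:ℝ)*(1-q)) ≤ q := by
      have hb2 : (-2:ℝ) ≤ 1/q - 1 := by
        have : 0 < 1/q := by positivity
        linarith
      have hB := one_add_mul_le_pow hb2 p
      have heq1 : (1 + (1/q - 1)) = 1/q := by ring
      rw [heq1, div_pow, one_pow] at hB
      have heq2 : (p:ℝ)*(1/q-1) = (p:ℝ)*(1-q)/q := by field_simp
      rw [heq2] at hB
      -- hB : 1 + p(1-q)/q ≤ 1/q^p
      have hstep : (p:ℝ)*(1-q)/q ≤ 1/q^p := by linarith
      rw [div_le_div_iff₀ hq0 hqppos] at hstep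
      linarith
    have key3 : q^(2*p) * ((p:ℝ)*(1-q))^2 ≤ q^2 := by
      have h2 : q^(2*p) = (q^p)^2 := by rw [← pow_mul, mul_comm]
      rw [h2]
      have hnn : 0 ≤ q^p * ((p:ℝ)*(1-q)) :=
        mul_nonneg hqppos.le (mul_nonneg hppos.le (by linarith))
      calc (q^p)^2 * ((p:ℝ)*(1-q))^2 = (q^p * ((p:ℝ)*(1-q)))^2 := by ring
        _ ≤ q^2 := by nlinarith [key2, hnn, hq0.le]
    -- combine
    set D : ℝ := Real.exp 3 * (((2*p:ℕ):ℝ)*w + 1) with hD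
    have hDpos : 0 < D := by
      rw [hD]; push_cast; nlinarith
    have hA : c * (1-b) ≤ q^(2*p) * D := by
      have : c * ((1-b)/D) = (c * (1-b))/D := by ring
      rw [this, div_le_iff₀ hDpos] at hlow
      linarith
    have hDb : D ≤ Real.exp 3 * ((p:ℝ)*(2*w+1)) := by
      rw [hD]
      push_cast
      have : (1:ℝ) ≤ (p:ℝ) := by exact_mod_cast hpnat
      nlinarith
    have hfinal1 : c * (1-b) * ((p:ℝ)*(1-q))^2 ≤ q^2 * D := by
      calc c * (1-b) * ((p:ℝ)*(1-q))^2 ≤ (q^(2*p) * D) * ((p:ℝ)*(1-q))^2 :=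
            mul_le_mul_of_nonneg_right hA (sq_nonneg _)
        _ = (q^(2*p) * ((p:ℝ)*(1-q))^2) * D := by ring
        _ ≤ q^2 * D := mul_le_mul_of_nonneg_right key3 hDpos.le
    have hfinal2 : q^2 * D ≤ q^2 * Real.exp 3 * ((p:ℝ)*(2*w+1)) := by
      have := mul_le_mul_of_nonneg_left hDb (sq_nonneg q)
      calc q^2 * D ≤ q^2 * (Real.exp 3 * ((p:ℝ)*(2*w+1))) := this
        _ = q^2 * Real.exp 3 * ((p:ℝ)*(2*w+1)) := by ring
    -- so c(1-b)(1-q)^2 p^2 ≤ q^2 e3 (2w+1) p, and hpM says q^2e3(2w+1) < p * (c(1-b)(1-q)^2)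
    have hX : 0 < c * (1-b) * (1-q)^2 := by
      have h1q2 : 0 < (1-q)^2 := pow_pos (by linarith) 2
      have := mul_pos hcpos h1b
      exact mul_pos this h1q2
    rw [div_lt_iff₀ hX] at hpM
    nlinarith [hfinal1, hfinal2, hppos, hX]
  have hE : ∀ w : ℝ, 0 < w → c * FJ b w = 1 :=
    fun w hw => le_antisymm (hupper w hw) (hlower w hw)
  have h1 : FJ b v = 1/c := by
    have := hE v hv
    field_simp
    linarith
  have h2 : FJ b (v+b) = 1/c := by
    have hvb : 0 < v + b := by linarith
    have := hE (v+b) hvb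
    field_simp
    linarith
  have hGv : GJ b v = 1 := by
    rw [hGu v hv, h1]
    field_simp
  have hshift := FJ_shift hb0 hb1 hv
  rw [h1, h2, hGv] at hshift
  -- 1/c = 1 + b * (1/c)  ⇒  c = 1 - b
  have hcb : c = 1 - b := by
    have hcne : c ≠ 0 := ne_of_gt hcpos
    field_simp at hshift
    linarith
  rw [h1, hcb]

end Analysis

end JainAux

theorem jain_first_moment (n : ℕ) (hn : 1 ≤ n) (x β : ℝ)
    (hx : 0 < x) (hβ0 : 0 ≤ β) (hβ1 : β < 1) :
    HasSum (fun k : ℕ => (k / n : ℝ) * jainL n β x k) (x / (1 - β)) := by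
  have hn0 : (0:ℝ) < n := by exact_mod_cast hn
  set u : ℝ := (n:ℝ) * x with hu
  have hu0 : 0 < u := by positivity
  have hub : 0 < u + β := by linarith
  have htsum : (∑' k, JainAux.fJ β (u+β) k) = 1/(1-β) := JainAux.FJ_const hβ0 hβ1 hub
  have hsum : HasSum (JainAux.fJ β (u+β)) (1/(1-β)) := by
    have h := (JainAux.summable_fJ hβ0 hβ1 hub.le).hasSum
    rwa [htsum] at h
  have hx' : HasSum (fun k => x * JainAux.fJ β (u+β) k) (x * (1/(1-β))) := hsum.mul_left x
  have hterm : ∀ k : ℕ, x * JainAux.fJ β (u+β) k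
      = (((k+1:ℕ):ℝ) / (n:ℝ)) * jainL n β x (k+1) := by
    intro k
    unfold JainAux.fJ jainL
    have harg : (u+β) + (k:ℝ)*β = (n:ℝ)*x + ((k+1:ℕ):ℝ)*β := by
      rw [hu]; push_cast; ring
    have ht : (0:ℝ) < (n:ℝ)*x + ((k+1:ℕ):ℝ)*β := by
      have : (0:ℝ) ≤ ((k+1:ℕ):ℝ)*β := by positivity
      nlinarith
    rw [harg]
    rw [show ((n:ℝ)*x + ((k+1:ℕ):ℝ)*β)^(k+1) / ((n:ℝ)*x + ((k+1:ℕ):ℝ)*β)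
        = ((n:ℝ)*x + ((k+1:ℕ):ℝ)*β)^k from by
      rw [pow_succ]
      exact mul_div_cancel_right₀ _ (ne_of_gt ht)]
    rw [Nat.factorial_succ]
    have hkf : ((k.factorial : ℝ)) ≠ 0 := by positivity
    have hkf1 : (((k+1) : ℝ)) ≠ 0 := by positivity
    push_cast
    field_simp
  have hshift : HasSum (fun k : ℕ => ((((k+1):ℕ)):ℝ) / (n:ℝ) * jainL n β x (k+1))
      (x * (1/(1-β))) := by
    have heq : (fun k : ℕ => x * JainAux.fJ β (u+β) k)
        = (fun k : ℕ => ((((k+1):ℕ)):ℝ) / (n:ℝ) * jainL n β x (k+1)) := funext hterm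
    rwa [heq] at hx'
  have hmain := (hasSum_nat_add_iff
    (f := fun k : ℕ => ((k:ℝ) / (n:ℝ)) * jainL n β x k) 1).mp hshift
  have h0 : ∑ i ∈ range 1, ((i:ℝ) / (n:ℝ)) * jainL n β x i = 0 := by
    simp
  rw [h0, add_zero] at hmain
  have hval : x * (1/(1-β)) = x / (1-β) := by ring
  rwa [hval] at hmain
end

section
/- For n ≥ 1, x > 0, 0 ≤ β < 1, and any natural number m ≥ 1, the m-th Jain moment satisfies ∑_{k=0}^∞ (k/n)^m·L_{n,k}^{(β)}(x) = (y/n^m)·∑_{r=1}^{m} S₂(m,r)·S(r, y + rβ, β), where y = nx, S₂(m,r) are the Stirling numbers of the second kind, and S(r,α,β) = ∑_{k=0}^∞ (α+βk)^{k+r-1}/k! · e^{-(α+βk)}. -/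
/-- Stirling numbers of the second kind. -/
def stirling2 : ℕ → ℕ → ℕ
  | 0, 0 => 1
  | 0, _ + 1 => 0
  | _ + 1, 0 => 0
  | n + 1, k + 1 => (k + 1) * stirling2 n (k + 1) + stirling2 n k

lemma stirling2_eq_zero_of_lt : ∀ {m r : ℕ}, m < r → stirling2 m r = 0
  | 0, _ + 1, _ => rfl
  | m + 1, r + 1, h => by
    have h1 : m < r + 1 := by omega
    have h2 : m < r := by omega
    show (r + 1) * stirling2 m (r + 1) + stirling2 m r = 0
    rw [stirling2_eq_zero_of_lt h1, stirling2_eq_zero_of_lt h2, Nat.mul_zero]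

lemma stirling2_zero_right {m : ℕ} (hm : 1 ≤ m) : stirling2 m 0 = 0 := by
  obtain ⟨m', rfl⟩ := Nat.exists_eq_add_of_le' hm
  rfl

lemma desc_mul (k r : ℕ) : k * k.descFactorial r = k.descFactorial (r + 1) + r * k.descFactorial r := by
  rcases le_or_gt r k with h | h
  · rw [Nat.descFactorial_succ]
    calc k * k.descFactorial r = ((k - r) + r) * k.descFactorial r := by rw [Nat.sub_add_cancel h]
      _ = (k - r) * k.descFactorial r + r * k.descFactorial r := Nat.add_mul _ _ _
  · rw [Nat.descFactorial_eq_zero_iff_lt.mpr h, Nat.descFactorial_eq_zero_iff_lt.mpr (by omega)]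
    simp

lemma pow_eq_sum_stirling2 (m k : ℕ) :
    k ^ m = ∑ r ∈ Finset.range (m + 1), stirling2 m r * k.descFactorial r := by
  induction m with
  | zero => simp [stirling2]
  | succ m ih =>
    calc k ^ (m + 1) = k * k ^ m := by rw [pow_succ, Nat.mul_comm]
      _ = ∑ r ∈ Finset.range (m + 1), stirling2 m r * (k * k.descFactorial r) := by
          rw [ih, Finset.mul_sum]; exact Finset.sum_congr rfl fun r _ => by ring
      _ = ∑ r ∈ Finset.range (m + 1),
            (stirling2 m r * k.descFactorial (r + 1) + r * stirling2 m r * k.descFactorial r) := by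
          refine Finset.sum_congr rfl fun r _ => ?_
          rw [desc_mul, Nat.mul_add]; ring
      _ = (∑ r ∈ Finset.range (m + 1), stirling2 m r * k.descFactorial (r + 1)) +
            ∑ r ∈ Finset.range (m + 1), r * stirling2 m r * k.descFactorial r :=
          Finset.sum_add_distrib
      _ = ∑ r ∈ Finset.range (m + 2), stirling2 (m + 1) r * k.descFactorial r := by
          rw [Finset.sum_range_succ' (fun r => stirling2 (m + 1) r * k.descFactorial r) (m + 1)]
          have h0 : stirling2 (m + 1) 0 * k.descFactorial 0 = 0 := by
            rw [stirling2_zero_right (by omega)]; simp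
          rw [h0, Nat.add_zero]
          have hstep : ∀ r, stirling2 (m + 1) (r + 1) * k.descFactorial (r + 1)
              = (r + 1) * stirling2 m (r + 1) * k.descFactorial (r + 1)
                + stirling2 m r * k.descFactorial (r + 1) := by
            intro r
            show ((r + 1) * stirling2 m (r + 1) + stirling2 m r) * k.descFactorial (r + 1) = _
            ring
          rw [Finset.sum_congr rfl fun r _ => hstep r, Finset.sum_add_distrib]
          have h2 : ∑ r ∈ Finset.range (m + 1), r * stirling2 m r * k.descFactorial r
              = ∑ r ∈ Finset.range (m + 1),
                  (r + 1) * stirling2 m (r + 1) * k.descFactorial (r + 1) := by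
            rw [Finset.sum_range_succ' (fun r => r * stirling2 m r * k.descFactorial r) m,
              Finset.sum_range_succ
                (fun r => (r + 1) * stirling2 m (r + 1) * k.descFactorial (r + 1)) m]
            rw [stirling2_eq_zero_of_lt (show m < m + 1 by omega)]
            simp
          rw [h2]; ring

lemma pow_le_factorial_mul_exp (k : ℕ) : (k : ℝ) ^ k ≤ (Nat.factorial k) * Real.exp k := by
  have hfpos : (0 : ℝ) < Nat.factorial k := by exact_mod_cast Nat.factorial_pos k
  have h := Real.sum_le_exp_of_nonneg (x := (k : ℝ)) (by positivity) (k + 1)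
  have h1 : (k : ℝ) ^ k / Nat.factorial k ≤ Real.exp k :=
    le_trans (Finset.single_le_sum (f := fun i => (k : ℝ) ^ i / Nat.factorial i)
      (fun i _ => by positivity) (Finset.self_mem_range_succ k)) h
  calc (k : ℝ) ^ k = ((k : ℝ) ^ k / Nat.factorial k) * Nat.factorial k := by field_simp
    _ ≤ Real.exp k * Nat.factorial k := mul_le_mul_of_nonneg_right h1 hfpos.le
    _ = Nat.factorial k * Real.exp k := mul_comm _ _

set_option maxHeartbeats 1000000 in
lemma summable_jain (r : ℕ) (hr : 1 ≤ r) (α β : ℝ) (hα : 0 < α) (hβ0 : 0 ≤ β) (hβ1 : β < 1) :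
    Summable (fun k : ℕ =>
      (α + β * k) ^ (k + r) / (α + β * k) / (Nat.factorial k) * Real.exp (-(α + β * k))) := by
  set q0 := β * Real.exp (1 - β) with hq0def
  have hq0nn : 0 ≤ q0 := by positivity
  have hq01 : q0 < 1 := by
    have hne : β - 1 ≠ 0 := sub_ne_zero.mpr (ne_of_lt hβ1)
    have h := Real.add_one_lt_exp hne
    have hb : β < Real.exp (β - 1) := by linarith
    have h2 := mul_lt_mul_of_pos_right hb (Real.exp_pos (1 - β))
    rwa [← Real.exp_add, show β - 1 + (1 - β) = 0 by ring, Real.exp_zero] at h2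
  set q := (q0 + 1) / 2 with hqdef
  have hq1 : q < 1 := by rw [hqdef]; linarith
  have hqpos : 0 < q := by rw [hqdef]; linarith
  have hq0q : q0 < q := by rw [hqdef]; linarith
  set δ := (q - q0) / Real.exp (1 - β) with hδdef
  have hδpos : 0 < δ := div_pos (by linarith) (Real.exp_pos _)
  set K := ⌈α / δ⌉₊ + 1 with hKdef
  set C := (α + 1) ^ (r - 1) with hCdef
  have hbound : ∀ k : ℕ, K ≤ k →
      (α + β * k) ^ (k + r) / (α + β * k) / (Nat.factorial k) * Real.exp (-(α + β * k))
        ≤ C * ((k : ℝ) + 1) ^ (r - 1) * q ^ k := by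
    intro k hk
    have hk1 : 1 ≤ k := le_trans (by omega) hk
    have hkpos : (0 : ℝ) < k := by exact_mod_cast hk1
    have hp : 0 < α + β * k := by positivity
    have hrw : (α + β * k) ^ (k + r) / (α + β * k)
        = (α + β * k) ^ (r - 1) * (α + β * k) ^ k := by
      rw [show k + r = ((r - 1) + k) + 1 by omega, pow_succ, mul_div_assoc, div_self hp.ne',
        mul_one, pow_add]
    rw [hrw]
    have h1 : (α + β * k) ^ (r - 1) ≤ C * ((k : ℝ) + 1) ^ (r - 1) := by
      rw [hCdef, ← mul_pow]
      refine pow_le_pow_left₀ hp.le ?_ _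
      nlinarith
    have hαk : α / k ≤ δ := by
      rw [div_le_iff₀ hkpos]
      have h2 : α / δ ≤ (k : ℝ) :=
        le_trans (Nat.le_ceil _) (by exact_mod_cast le_trans (Nat.le_succ _) hk)
      calc α = (α / δ) * δ := by field_simp
        _ ≤ (k : ℝ) * δ := mul_le_mul_of_nonneg_right h2 hδpos.le
        _ = δ * k := mul_comm _ _
    have h3 : (α + β * k) / k ≤ β + δ := by
      have hb : β * k / k = β := by field_simp
      calc (α + β * k) / k = α / k + β := by rw [add_div, hb]
        _ ≤ δ + β := by linarith
        _ = β + δ := add_comm _ _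
    have h4 : (α + β * k) ^ k / (Nat.factorial k) ≤ (β + δ) ^ k * Real.exp k := by
      have hfpos : (0 : ℝ) < Nat.factorial k := by exact_mod_cast Nat.factorial_pos k
      rw [div_le_iff₀ hfpos]
      calc (α + β * k) ^ k = ((α + β * k) / k) ^ k * (k : ℝ) ^ k := by
            rw [div_pow, div_mul_cancel₀ _ (by positivity : ((k:ℝ) ^ k) ≠ 0)]
        _ ≤ (β + δ) ^ k * ((Nat.factorial k) * Real.exp k) :=
            mul_le_mul (pow_le_pow_left₀ (by positivity) h3 k) (pow_le_factorial_mul_exp k)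
              (by positivity) (by positivity)
        _ = (β + δ) ^ k * Real.exp k * Nat.factorial k := by ring
    have h5 : (β + δ) ^ k * Real.exp k * Real.exp (-(α + β * k)) ≤ q ^ k := by
      have hqeq : (β + δ) * Real.exp (1 - β) = q := by
        rw [hδdef, add_mul, div_mul_cancel₀ _ (Real.exp_pos (1 - β)).ne', hq0def]
        ring
      have he : Real.exp (-(α + β * k)) ≤ Real.exp (-(β * k)) :=
        Real.exp_le_exp.mpr (by linarith)
      calc (β + δ) ^ k * Real.exp k * Real.exp (-(α + β * k))
          ≤ (β + δ) ^ k * Real.exp k * Real.exp (-(β * k)) := by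
            exact mul_le_mul_of_nonneg_left he (by positivity)
        _ = (β + δ) ^ k * Real.exp ((k : ℝ) * (1 - β)) := by
            rw [mul_assoc, ← Real.exp_add]; ring_nf
        _ = (β + δ) ^ k * (Real.exp (1 - β)) ^ k := by rw [Real.exp_nat_mul]
        _ = ((β + δ) * Real.exp (1 - β)) ^ k := (mul_pow _ _ _).symm
        _ = q ^ k := by rw [hqeq]
    calc (α + β * k) ^ (r - 1) * (α + β * k) ^ k / (Nat.factorial k) * Real.exp (-(α + β * k))
        = (α + β * k) ^ (r - 1) * ((α + β * k) ^ k / Nat.factorial k) *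
            Real.exp (-(α + β * k)) := by ring
      _ ≤ (C * ((k : ℝ) + 1) ^ (r - 1)) * ((β + δ) ^ k * Real.exp k) *
            Real.exp (-(α + β * k)) := by
          have := mul_le_mul h1 h4 (by positivity) (by positivity)
          exact mul_le_mul_of_nonneg_right this (Real.exp_pos _).le
      _ = C * ((k : ℝ) + 1) ^ (r - 1) *
            ((β + δ) ^ k * Real.exp k * Real.exp (-(α + β * k))) := by ring
      _ ≤ C * ((k : ℝ) + 1) ^ (r - 1) * q ^ k := by
          refine mul_le_mul_of_nonneg_left h5 ?_
          positivity
  have hq' : ‖q‖ < 1 := by rw [Real.norm_eq_abs, abs_of_pos hqpos]; exact hq1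
  have hM0 : Summable (fun k : ℕ => (k : ℝ) ^ (r - 1) * q ^ k) :=
    summable_pow_mul_geometric_of_norm_lt_one (r - 1) hq'
  have hM1 : Summable (fun k : ℕ => ((k : ℝ) + 1) ^ (r - 1) * q ^ (k + 1)) := by
    have h := (summable_nat_add_iff 1).mpr hM0
    exact h.congr fun k => by push_cast; ring
  have hM : Summable (fun k : ℕ => C * ((k : ℝ) + 1) ^ (r - 1) * q ^ k) := by
    have h := hM1.mul_left (C / q)
    refine h.congr fun k => ?_
    rw [pow_succ]
    field_simp
  rw [← summable_nat_add_iff K]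
  refine Summable.of_nonneg_of_le (fun k => by positivity)
    (fun k => hbound (k + K) (Nat.le_add_left K k)) ?_
  exact (summable_nat_add_iff K).mpr hM

lemma hasSum_g (r : ℕ) (hr : 1 ≤ r) (y β : ℝ) (hy : 0 < y) (hβ0 : 0 ≤ β) (hβ1 : β < 1) :
    HasSum (fun k : ℕ => (Nat.descFactorial k r : ℝ) * ((y + k * β) ^ (k : ℕ) / (y + k * β)) /
      (Nat.factorial k) * Real.exp (-(y + k * β))) (jainS r (y + r * β) β) := by
  set α := y + r * β with hαdef
  have hα : 0 < α := by rw [hαdef]; positivity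
  have hsum : HasSum (fun j : ℕ => (α + β * j) ^ (j + r) / (α + β * j) / (Nat.factorial j) *
      Real.exp (-(α + β * j))) (jainS r α β) := by
    rw [jainS]
    exact (summable_jain r hr α β hα hβ0 hβ1).hasSum
  have hinj : Function.Injective (fun j : ℕ => j + r) := add_left_injective r
  have hvan : ∀ k ∉ Set.range (fun j : ℕ => j + r),
      (Nat.descFactorial k r : ℝ) * ((y + k * β) ^ (k : ℕ) / (y + k * β)) /
        (Nat.factorial k) * Real.exp (-(y + k * β)) = 0 := by
    intro k hk
    have hklt : k < r := by
      by_contra h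
      exact hk ⟨k - r, by show k - r + r = k; omega⟩
    simp [Nat.descFactorial_eq_zero_iff_lt.mpr hklt]
  refine (hinj.hasSum_iff hvan).mp ?_
  refine HasSum.congr_fun hsum ?_
  intro j
  simp only [Function.comp]
  have hyb : y + ((j + r : ℕ) : ℝ) * β = α + β * j := by rw [hαdef]; push_cast; ring
  have hfac : ((Nat.descFactorial (j + r) r : ℕ) : ℝ) * (Nat.factorial j)
      = (Nat.factorial (j + r)) := by
    have h := Nat.factorial_mul_descFactorial (Nat.le_add_left r j)
    rw [Nat.add_sub_cancel] at h
    exact_mod_cast (mul_comm _ _).trans h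
  have hf1 : ((Nat.factorial j : ℕ) : ℝ) ≠ 0 := by exact_mod_cast (Nat.factorial_pos j).ne'
  have hf2 : ((Nat.factorial (j + r) : ℕ) : ℝ) ≠ 0 := by
    exact_mod_cast (Nat.factorial_pos (j + r)).ne'
  rw [hyb]
  have hkey : ((Nat.descFactorial (j + r) r : ℕ) : ℝ) / (Nat.factorial (j + r))
      = 1 / (Nat.factorial j) := by
    rw [div_eq_div_iff hf2 hf1, one_mul]
    exact hfac
  calc (Nat.descFactorial (j + r) r : ℝ) * ((α + β * j) ^ (j + r) / (α + β * j)) /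
        (Nat.factorial (j + r)) * Real.exp (-(α + β * j))
      = (Nat.descFactorial (j + r) r : ℝ) / (Nat.factorial (j + r)) *
          (((α + β * j) ^ (j + r) / (α + β * j)) * Real.exp (-(α + β * j))) := by ring
    _ = 1 / (Nat.factorial j) *
          (((α + β * j) ^ (j + r) / (α + β * j)) * Real.exp (-(α + β * j))) := by rw [hkey]
    _ = (α + β * j) ^ (j + r) / (α + β * j) / (Nat.factorial j) *
          Real.exp (-(α + β * j)) := by ring

theorem jain_moment_formula (n : ℕ) (hn : 1 ≤ n) (x β : ℝ)
    (hx : 0 < x) (hβ0 : 0 ≤ β) (hβ1 : β < 1) (m : ℕ) (hm : 1 ≤ m)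
    (y : ℝ) (hy : y = n * x) :
    HasSum (fun k : ℕ => (k / n : ℝ) ^ m * jainL n β x k)
      (y / (n : ℝ) ^ m *
        ∑ r ∈ Finset.Icc 1 m, (stirling2 m r : ℝ) * jainS r (y + r * β) β) := by
  have hn0 : (0 : ℝ) < n := by exact_mod_cast hn
  have hy0 : 0 < y := by rw [hy]; positivity
  have h1 : HasSum (fun k : ℕ => ∑ r ∈ Finset.Icc 1 m, (stirling2 m r : ℝ) *
      ((Nat.descFactorial k r : ℝ) * ((y + k * β) ^ (k : ℕ) / (y + k * β)) /
        (Nat.factorial k) * Real.exp (-(y + k * β))))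
      (∑ r ∈ Finset.Icc 1 m, (stirling2 m r : ℝ) * jainS r (y + r * β) β) := by
    refine hasSum_sum fun r hrmem => ?_
    have hr1 : 1 ≤ r := (Finset.mem_Icc.mp hrmem).1
    exact (hasSum_g r hr1 y β hy0 hβ0 hβ1).mul_left _
  have h2 := h1.mul_left (y / (n : ℝ) ^ m)
  refine HasSum.congr_fun h2 ?_
  intro k
  have hkm : ((k : ℝ)) ^ m = ∑ r ∈ Finset.Icc 1 m,
      (stirling2 m r : ℝ) * (Nat.descFactorial k r : ℝ) := by
    have hNat : k ^ m = ∑ r ∈ Finset.Icc 1 m, stirling2 m r * Nat.descFactorial k r := by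
      rw [pow_eq_sum_stirling2]
      refine (Finset.sum_subset ?_ ?_).symm
      · intro r hrmem
        simp only [Finset.mem_Icc, Finset.mem_range] at *
        omega
      · intro r hrange hnot
        have hr0 : r = 0 := by
          simp only [Finset.mem_Icc, Finset.mem_range] at *
          omega
        subst hr0
        rw [stirling2_zero_right hm]
        simp
    have h := congrArg (fun t : ℕ => (t : ℝ)) hNat
    push_cast at h
    exact h
  simp only [jainL]
  rw [← hy]
  have hsumeq : ∑ r ∈ Finset.Icc 1 m, (stirling2 m r : ℝ) *
      ((Nat.descFactorial k r : ℝ) * ((y + k * β) ^ (k : ℕ) / (y + k * β)) /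
        (Nat.factorial k) * Real.exp (-(y + k * β)))
      = (∑ r ∈ Finset.Icc 1 m, (stirling2 m r : ℝ) * (Nat.descFactorial k r : ℝ)) *
          (((y + k * β) ^ (k : ℕ) / (y + k * β)) / (Nat.factorial k) *
            Real.exp (-(y + k * β))) := by
    rw [Finset.sum_mul]
    exact Finset.sum_congr rfl fun r _ => by ring
  rw [hsumeq, ← hkm]
  ring
end
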